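/- arXiv:2410.11483 — 4 statements merged into one kernel-verified Lean document; each statement's English description precedes it below -/
import Mathlib

section
/- Let c belong to the class PS(t0,Λ1,Λ2,S,γ) with γ non-increasing, and let c∞ ∈ [Λ1,Λ2] be its stabilization constant. Then for every real number λ > 0 and every solution u of u''(t) + λ² c(t) u(t) = 0 on [t0,∞), the Kowaleskian energy E(t) = u'(t)²/√c∞ + λ²√c∞·u(t)² satisfies E(t) ≤ E(t0)·H3·exp(H4·M(t)^{1/2}) for all t ≥ t0, where H3 = max{ 3Λ2/Λ1 , exp( γ(t0)S(t0)/(2Λ1²) ) } and H4 = (2Λ1+3)^{1/2}/Λ1^{3/2}. -/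
open Real Set Filter MeasureTheory

/-- The Kowaleskian energy `E(t) = u'(t)²/√c∞ + λ²·√c∞·u(t)²`. -/
noncomputable def kowE (cinf lam : ℝ) (u u' : ℝ → ℝ) (t : ℝ) : ℝ :=
  (u' t) ^ 2 / Real.sqrt cinf + lam ^ 2 * Real.sqrt cinf * (u t) ^ 2

/-- `G(t) = ∫_{t0}^t γ(τ)² dτ`. -/
noncomputable def Gfun (t0 : ℝ) (γ : ℝ → ℝ) (t : ℝ) : ℝ :=
  ∫ τ in t0..t, (γ τ) ^ 2

/-- `M(t) = max { G(τ)·S(τ) : τ ∈ [t0,t] }`. -/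
noncomputable def Mfun (t0 : ℝ) (γ S : ℝ → ℝ) (t : ℝ) : ℝ :=
  sSup ((fun τ => Gfun t0 γ τ * S τ) '' Icc t0 t)

/-- Variable-coefficient Grönwall inequality on a closed interval. -/
theorem my_gronwall {a b : ℝ} (hab : a ≤ b) {f f' g : ℝ → ℝ}
    (hf : ∀ τ ∈ Icc a b, HasDerivWithinAt f (f' τ) (Icc a b) τ)
    (hg : ContinuousOn g (Icc a b))
    (hb : ∀ τ ∈ Icc a b, f' τ ≤ g τ * f τ) :
    f b ≤ f a * Real.exp (∫ τ in a..b, g τ) := by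
  set A : ℝ → ℝ := fun x => ∫ τ in a..x, g τ with hA
  have hgint : ∀ x ∈ Icc a b, IntervalIntegrable g volume a x := by
    intro x hx
    apply (hg.mono _).intervalIntegrable
    rw [uIcc_of_le hx.1]
    exact Icc_subset_Icc le_rfl hx.2
  have hAcont : ContinuousOn A (Icc a b) := by
    rw [← uIcc_of_le hab]
    exact intervalIntegral.continuousOn_primitive_interval
      ((hg.mono (by rw [uIcc_of_le hab])).integrableOn_compact isCompact_uIcc)
  have hAderiv : ∀ x ∈ Ioo a b, HasDerivAt A (g x) x := by
    intro x hx
    refine intervalIntegral.integral_hasDerivAt_right (hgint x (Ioo_subset_Icc_self hx))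
      (ContinuousOn.stronglyMeasurableAtFilter isOpen_Ioo (hg.mono Ioo_subset_Icc_self) x hx) ?_
    exact (hg x (Ioo_subset_Icc_self hx)).continuousAt (Icc_mem_nhds hx.1 hx.2)
  set h : ℝ → ℝ := fun x => f x * Real.exp (-A x) with hh
  have hmono : AntitoneOn h (Icc a b) := by
    apply antitoneOn_of_hasDerivWithinAt_nonpos (convex_Icc a b)
      (f := h) (f' := fun x => (f' x - g x * f x) * Real.exp (-A x))
    · exact fun x hx => ((hf x hx).continuousWithinAt).mul (((hAcont x hx).neg).rexp)
    · intro x hx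
      rw [interior_Icc] at hx ⊢
      have hfx : HasDerivAt f (f' x) x :=
        ((hf x (Ioo_subset_Icc_self hx)).mono Ioo_subset_Icc_self).hasDerivAt
          (Ioo_mem_nhds hx.1 hx.2)
      have : HasDerivAt h ((f' x - g x * f x) * Real.exp (-A x)) x := by
        have hE : HasDerivAt (fun y => Real.exp (-A y)) (Real.exp (-A x) * (-g x)) x :=
          ((hAderiv x hx).neg).exp
        have := hfx.mul hE
        refine this.congr_deriv ?_
        ring
      exact this.hasDerivWithinAt
    · intro x hx
      rw [interior_Icc] at hx
      have := hb x (Ioo_subset_Icc_self hx)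
      nlinarith [Real.exp_pos (-A x)]
  have hba := hmono (left_mem_Icc.2 hab) (right_mem_Icc.2 hab) hab
  simp only [hh] at hba
  have hAa : A a = 0 := intervalIntegral.integral_same
  rw [hAa] at hba
  simp only [neg_zero, Real.exp_zero, mul_one] at hba
  have := mul_le_mul_of_nonneg_right hba (le_of_lt (Real.exp_pos (A b)))
  rw [mul_assoc, ← Real.exp_add, neg_add_cancel, Real.exp_zero, mul_one] at this
  exact this

lemma amgm {a b s lam : ℝ} (hs : 0 < s) (hlam : 0 < lam) :
    2*lam*|b*a| ≤ a^2/s + lam^2*(s*b^2) := by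
  rw [show a^2/s + lam^2*(s*b^2) = (a^2 + lam^2*s^2*b^2)/s by field_simp,
    le_div_iff₀ hs]
  rcases abs_cases (b*a) with ⟨h1,h2⟩|⟨h1,h2⟩ <;> rw [h1] <;>
    nlinarith [sq_nonneg (a - lam*s*b), sq_nonneg (a + lam*s*b)]

lemma coeff_id {Λ1 L g : ℝ} (h1 : Λ1 ≠ 0) (hL : L ≠ 0) :
    g/(2*(Λ1*L)) + 3*g/(4*(Λ1^2*L)) = (2*Λ1+3)/(4*(Λ1^2*L))*g := by
  field_simp; ring

lemma comp_aux {a b lam r x y : ℝ} (hx : 0 < x) (hy : 0 < y)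
    (hxy : x ≤ r*y) (hyx : y ≤ r*x) :
    a^2/y + lam^2*(y*b^2) ≤ r*(a^2/x + lam^2*(x*b^2)) := by
  have h1 : a^2/y ≤ r*a^2/x := by
    rw [div_le_div_iff₀ hy hx]
    nlinarith [sq_nonneg a]
  have h2 : lam^2*(y*b^2) ≤ r*(lam^2*(x*b^2)) := by
    nlinarith [sq_nonneg (lam*b), mul_le_mul_of_nonneg_left hyx (sq_nonneg (lam*b))]
  calc a^2/y + lam^2*(y*b^2) ≤ r*a^2/x + r*(lam^2*(x*b^2)) := add_le_add h1 h2
  _ = r*(a^2/x + lam^2*(x*b^2)) := by ring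

lemma hasDeriv_kowE {cinf lam : ℝ} (hcinf : 0 < cinf) {u u' c : ℝ → ℝ} {s : Set ℝ} {τ : ℝ}
    (hu : HasDerivWithinAt u (u' τ) s τ)
    (hu' : HasDerivWithinAt u' (-(lam^2 * c τ * u τ)) s τ) :
    HasDerivWithinAt (kowE cinf lam u u')
      (2*lam^2*(u τ)*(u' τ)/Real.sqrt cinf * (cinf - c τ)) s τ := by
  have h1 := (hu'.pow 2).div_const (Real.sqrt cinf)
  have h2 := (hu.pow 2).const_mul (lam^2 * Real.sqrt cinf)
  have h := h1.add h2
  have hEq : kowE cinf lam u u' = fun x => (u' x)^2 / Real.sqrt cinf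
      + lam^2 * Real.sqrt cinf * (u x)^2 := by funext x; rfl
  rw [hEq]
  refine h.congr_deriv ?_
  set b := Real.sqrt cinf with hbdef
  have hb : b*b = cinf := Real.mul_self_sqrt hcinf.le
  have hbne : b ≠ 0 := ne_of_gt (Real.sqrt_pos.2 hcinf)
  rw [← hb]
  field_simp
  ring

lemma hasDeriv_F {lam : ℝ} {u u' c c' : ℝ → ℝ} {s : Set ℝ} {τ : ℝ}
    (hcpos : 0 < c τ)
    (hc : HasDerivWithinAt c (c' τ) s τ)
    (hu : HasDerivWithinAt u (u' τ) s τ)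
    (hu' : HasDerivWithinAt u' (-(lam^2 * c τ * u τ)) s τ) :
    HasDerivWithinAt (fun x => (u' x)^2/Real.sqrt (c x) + lam^2*(Real.sqrt (c x)*(u x)^2))
      (c' τ/(2*c τ) * (lam^2*(Real.sqrt (c τ)*(u τ)^2) - (u' τ)^2/Real.sqrt (c τ))) s τ := by
  have hsne : Real.sqrt (c τ) ≠ 0 := ne_of_gt (Real.sqrt_pos.2 hcpos)
  have hs : HasDerivWithinAt (fun x => Real.sqrt (c x)) (1/(2*Real.sqrt (c τ)) * c' τ) s τ :=
    (Real.hasDerivAt_sqrt (ne_of_gt hcpos)).comp_hasDerivWithinAt τ hc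
  have h1 := (hu'.pow 2).div hs hsne
  have h2 := (hs.mul (hu.pow 2)).const_mul (lam^2)
  have h := h1.add h2
  refine h.congr_deriv ?_
  simp only [Pi.pow_apply, Pi.mul_apply, Pi.div_apply]
  set b := Real.sqrt (c τ) with hbdef
  have hb : b*b = c τ := Real.mul_self_sqrt hcpos.le
  have hbne : b ≠ 0 := hsne
  rw [← hb]
  field_simp
  ring

lemma hasDeriv_R {lam : ℝ} {u u' c c' c'' : ℝ → ℝ} {s : Set ℝ} {τ : ℝ}
    (hcpos : 0 < c τ)
    (hc : HasDerivWithinAt c (c' τ) s τ)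
    (hc' : HasDerivWithinAt c' (c'' τ) s τ)
    (hu : HasDerivWithinAt u (u' τ) s τ)
    (hu' : HasDerivWithinAt u' (-(lam^2 * c τ * u τ)) s τ) :
    HasDerivWithinAt (fun x => ((u' x)^2/Real.sqrt (c x) + lam^2*(Real.sqrt (c x)*(u x)^2))
        + (c' x/(2*(Real.sqrt (c x))^3))*(u x*u' x))
      ((c'' τ/(2*(Real.sqrt (c τ))^3) - 3*(c' τ)^2/(4*(Real.sqrt (c τ))^5))*(u τ*u' τ)) s τ := by
  have hsne : Real.sqrt (c τ) ≠ 0 := ne_of_gt (Real.sqrt_pos.2 hcpos)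
  have hs : HasDerivWithinAt (fun x => Real.sqrt (c x)) (1/(2*Real.sqrt (c τ)) * c' τ) s τ :=
    (Real.hasDerivAt_sqrt (ne_of_gt hcpos)).comp_hasDerivWithinAt τ hc
  have hF := hasDeriv_F hcpos hc hu hu'
  have hden : HasDerivWithinAt (fun x => 2*(Real.sqrt (c x))^3)
      (2*((3:ℕ)*(Real.sqrt (c τ))^(3-1)*(1/(2*Real.sqrt (c τ)) * c' τ))) s τ :=
    ((hs.pow 3).const_mul 2)
  have hdenne : 2*(Real.sqrt (c τ))^3 ≠ 0 := by positivity
  have hβ := hc'.div hden hdenne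
  have huu := hu.mul hu'
  have h := hF.add (hβ.mul huu)
  refine h.congr_deriv ?_
  simp only [Pi.pow_apply, Pi.mul_apply, Pi.div_apply]
  set b := Real.sqrt (c τ) with hbdef
  have hb : b*b = c τ := Real.mul_self_sqrt hcpos.le
  have hbne : b ≠ 0 := hsne
  rw [← hb]
  field_simp
  ring

set_option maxHeartbeats 2000000 in
theorem energy_estimate_above_gamma_nonincreasing
    (t0 Λ1 Λ2 : ℝ) (hΛ1 : 0 < Λ1) (hΛ12 : Λ1 ≤ Λ2)
    (S γ : ℝ → ℝ)
    (hS_cont : ContinuousOn S (Ici t0)) (hS_anti : AntitoneOn S (Ici t0))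
    (hS_lim : Tendsto S atTop (nhds 0))
    (hγ_cont : ContinuousOn γ (Ici t0)) (hγ_anti : AntitoneOn γ (Ici t0))
    (c c' c'' : ℝ → ℝ)
    (hc1 : ∀ t ∈ Ici t0, HasDerivWithinAt c (c' t) (Ici t0) t)
    (hc2 : ∀ t ∈ Ici t0, HasDerivWithinAt c' (c'' t) (Ici t0) t)
    (hc2cont : ContinuousOn c'' (Ici t0))
    (hhyp : ∀ t ∈ Ici t0, Λ1 ≤ c t ∧ c t ≤ Λ2)
    (cinf : ℝ) (hcinf : cinf ∈ Icc Λ1 Λ2)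
    (hstab : ∀ t ∈ Ici t0, ∀ b ≥ t, (∫ τ in t..b, |c τ - cinf|) ≤ S t)
    (hder : ∀ t ∈ Ici t0, |c' t| ≤ γ t ∧ |c'' t| ≤ (γ t) ^ 2)
    (lam : ℝ) (hlam : 0 < lam)
    (u u' : ℝ → ℝ)
    (hu : ∀ t ∈ Ici t0, HasDerivWithinAt u (u' t) (Ici t0) t)
    (hu' : ∀ t ∈ Ici t0, HasDerivWithinAt u' (-(lam ^ 2 * c t * u t)) (Ici t0) t) :
    ∀ t ∈ Ici t0,
      kowE cinf lam u u' t ≤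
        kowE cinf lam u u' t0 *
          max (3 * Λ2 / Λ1) (Real.exp (γ t0 * S t0 / (2 * Λ1 ^ 2))) *
          Real.exp (Real.sqrt (2 * Λ1 + 3) / Λ1 ^ ((3 : ℝ) / 2) *
            Real.sqrt (Mfun t0 γ S t)) := by
  intro t ht
  have htt : t0 ≤ t := ht
  -- basic constants
  have hΛ2 : 0 < Λ2 := lt_of_lt_of_le hΛ1 hΛ12
  set L : ℝ := Real.sqrt Λ1 with hLdef
  have hL : 0 < L := Real.sqrt_pos.2 hΛ1
  have hLL : L * L = Λ1 := Real.mul_self_sqrt hΛ1.le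
  have hcinf1 : Λ1 ≤ cinf := hcinf.1
  have hcinfpos : 0 < cinf := lt_of_lt_of_le hΛ1 hcinf1
  set si : ℝ := Real.sqrt cinf with hsidef
  have hsipos : 0 < si := Real.sqrt_pos.2 hcinfpos
  have hsiL : L ≤ si := Real.sqrt_le_sqrt hcinf1
  have hsiU : si ≤ Real.sqrt Λ2 := Real.sqrt_le_sqrt hcinf.2
  -- pointwise facts about c
  have hcpos : ∀ τ ∈ Ici t0, 0 < c τ := fun τ hτ => lt_of_lt_of_le hΛ1 (hhyp τ hτ).1
  have hspos : ∀ τ ∈ Ici t0, 0 < Real.sqrt (c τ) := fun τ hτ => Real.sqrt_pos.2 (hcpos τ hτ)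
  have hsge : ∀ τ ∈ Ici t0, L ≤ Real.sqrt (c τ) := fun τ hτ => Real.sqrt_le_sqrt (hhyp τ hτ).1
  have hsle : ∀ τ ∈ Ici t0, Real.sqrt (c τ) ≤ Real.sqrt Λ2 :=
    fun τ hτ => Real.sqrt_le_sqrt (hhyp τ hτ).2
  have hγ0 : ∀ τ ∈ Ici t0, 0 ≤ γ τ := fun τ hτ => le_trans (abs_nonneg _) (hder τ hτ).1
  have hS0 : ∀ τ ∈ Ici t0, 0 ≤ S τ := by
    intro τ hτ
    have := hstab τ hτ τ le_rfl
    rwa [intervalIntegral.integral_same] at this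
  have hccont : ContinuousOn c (Ici t0) := fun τ hτ => (hc1 τ hτ).continuousWithinAt
  -- energies
  set E : ℝ → ℝ := kowE cinf lam u u' with hEdef
  set F : ℝ → ℝ := fun x => (u' x)^2/Real.sqrt (c x) + lam^2*(Real.sqrt (c x)*(u x)^2)
    with hFdef
  set R : ℝ → ℝ := fun x => F x + (c' x/(2*(Real.sqrt (c x))^3))*(u x*u' x) with hRdef
  set eE : ℝ → ℝ := fun τ => 2*lam^2*(u τ)*(u' τ)/Real.sqrt cinf * (cinf - c τ) with heEdef
  set eR : ℝ → ℝ := fun τ => (c'' τ/(2*(Real.sqrt (c τ))^3)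
    - 3*(c' τ)^2/(4*(Real.sqrt (c τ))^5))*(u τ*u' τ) with heRdef
  have hE' : ∀ τ ∈ Ici t0, HasDerivWithinAt E (eE τ) (Ici t0) τ :=
    fun τ hτ => hasDeriv_kowE hcinfpos (hu τ hτ) (hu' τ hτ)
  have hR' : ∀ τ ∈ Ici t0, HasDerivWithinAt R (eR τ) (Ici t0) τ :=
    fun τ hτ => hasDeriv_R (hcpos τ hτ) (hc1 τ hτ) (hc2 τ hτ) (hu τ hτ) (hu' τ hτ)
  -- rewriting of E
  have hEeq : ∀ τ, E τ = (u' τ)^2/si + lam^2*(si*(u τ)^2) := by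
    intro τ; simp only [hEdef, kowE, hsidef]; ring
  have hEnn : ∀ τ, 0 ≤ E τ := by
    intro τ; rw [hEeq τ]; positivity
  have hFnn : ∀ τ ∈ Ici t0, 0 ≤ F τ := by
    intro τ hτ
    have := hspos τ hτ
    simp only [hFdef]
    positivity
  -- AM-GM bounds
  have hAME : ∀ τ, 2*lam*|u τ*u' τ| ≤ E τ := by
    intro τ; rw [hEeq τ]; exact amgm hsipos hlam
  have hAMF : ∀ τ ∈ Ici t0, 2*lam*|u τ*u' τ| ≤ F τ :=
    fun τ hτ => amgm (hspos τ hτ) hlam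
  -- comparison between E and F
  set r : ℝ := Real.sqrt Λ2 / L with hrdef
  have hr0 : 0 ≤ r := by positivity
  have hrr : r * r = Λ2 / Λ1 := by
    rw [hrdef, hLdef, div_mul_div_comm, Real.mul_self_sqrt hΛ2.le, Real.mul_self_sqrt hΛ1.le]
  have hrw : ∀ z w : ℝ, z ≤ Real.sqrt Λ2 → L ≤ w → z ≤ r*w := by
    intro z w hz hw
    have h1 : r*L ≤ r*w := mul_le_mul_of_nonneg_left hw hr0
    have h2 : r*L = Real.sqrt Λ2 := by rw [hrdef]; field_simp [hL.ne']
    linarith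
  have hEleF : ∀ τ ∈ Ici t0, E τ ≤ r * F τ := by
    intro τ hτ
    rw [hEeq τ, hFdef]
    exact comp_aux (hspos τ hτ) hsipos (hrw _ _ (hsle τ hτ) hsiL) (hrw _ _ hsiU (hsge τ hτ))
  have hFleE : ∀ τ ∈ Ici t0, F τ ≤ r * E τ := by
    intro τ hτ
    rw [hEeq τ, hFdef]
    exact comp_aux hsipos (hspos τ hτ) (hrw _ _ hsiU (hsge τ hτ)) (hrw _ _ (hsle τ hτ) hsiL)
  -- bounds on the correction coefficient and its derivative
  have hs3 : ∀ τ ∈ Ici t0, Λ1*L ≤ (Real.sqrt (c τ))^3 := by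
    intro τ hτ
    have h1 : L^3 ≤ (Real.sqrt (c τ))^3 := pow_le_pow_left₀ hL.le (hsge τ hτ) 3
    have h2 : Λ1*L = L^3 := by rw [← hLL]; ring
    linarith
  have hs5 : ∀ τ ∈ Ici t0, Λ1^2*L ≤ (Real.sqrt (c τ))^5 := by
    intro τ hτ
    have h1 : L^5 ≤ (Real.sqrt (c τ))^5 := pow_le_pow_left₀ hL.le (hsge τ hτ) 5
    have h2 : Λ1^2*L = L^5 := by rw [← hLL]; ring
    linarith
  have hβb : ∀ τ ∈ Ici t0, |c' τ/(2*(Real.sqrt (c τ))^3)| ≤ γ τ/(2*(Λ1*L)) := by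
    intro τ hτ
    rw [abs_div, abs_of_pos (mul_pos two_pos (pow_pos (hspos τ hτ) 3))]
    exact div_le_div₀ (hγ0 τ hτ) (hder τ hτ).1 (by positivity) (by nlinarith [hs3 τ hτ])
  have hc'sq : ∀ τ ∈ Ici t0, (c' τ)^2 ≤ (γ τ)^2 := by
    intro τ hτ
    have := (hder τ hτ).1
    nlinarith [abs_nonneg (c' τ), sq_abs (c' τ)]
  have hβ'b : ∀ τ ∈ Ici t0, |c'' τ/(2*(Real.sqrt (c τ))^3)
      - 3*(c' τ)^2/(4*(Real.sqrt (c τ))^5)| ≤ (2*Λ1+3)/(4*(Λ1^2*L))*(γ τ)^2 := by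
    intro τ hτ
    have hb1 : |c'' τ/(2*(Real.sqrt (c τ))^3)| ≤ (γ τ)^2/(2*(Λ1*L)) := by
      rw [abs_div, abs_of_pos (mul_pos two_pos (pow_pos (hspos τ hτ) 3))]
      exact div_le_div₀ (sq_nonneg _) (hder τ hτ).2 (by positivity) (by nlinarith [hs3 τ hτ])
    have hb2 : |3*(c' τ)^2/(4*(Real.sqrt (c τ))^5)| ≤ 3*(γ τ)^2/(4*(Λ1^2*L)) := by
      rw [abs_div, abs_of_pos (mul_pos four_pos (pow_pos (hspos τ hτ) 5)),
        abs_of_nonneg (by positivity : (0:ℝ) ≤ 3*(c' τ)^2)]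
      exact div_le_div₀ (by positivity) (by nlinarith [hc'sq τ hτ]) (by positivity)
        (by nlinarith [hs5 τ hτ])
    calc |c'' τ/(2*(Real.sqrt (c τ))^3) - 3*(c' τ)^2/(4*(Real.sqrt (c τ))^5)|
        ≤ |c'' τ/(2*(Real.sqrt (c τ))^3)| + |3*(c' τ)^2/(4*(Real.sqrt (c τ))^5)| :=
          abs_sub _ _
      _ ≤ (γ τ)^2/(2*(Λ1*L)) + 3*(γ τ)^2/(4*(Λ1^2*L)) := add_le_add hb1 hb2
      _ = (2*Λ1+3)/(4*(Λ1^2*L))*(γ τ)^2 := coeff_id hΛ1.ne' hL.ne'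
  
  -- the stabilization-energy (E) Grönwall phase
  have hlamL : 0 < lam/L := div_pos hlam hL
  have phase2 : ∀ σ ∈ Icc t0 t,
      E t ≤ E σ * Real.exp ((lam/L) * (∫ τ in σ..t, |c τ - cinf|)) := by
    intro σ hσ
    have hsub : Icc σ t ⊆ Ici t0 := fun x hx => le_trans hσ.1 hx.1
    have hg : ContinuousOn (fun τ => (lam/L)*|c τ - cinf|) (Icc σ t) :=
      continuousOn_const.mul (((hccont.mono hsub).sub continuousOn_const).abs)
    have hbnd : ∀ τ ∈ Icc σ t, eE τ ≤ (lam/L)*|c τ - cinf| * E τ := by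
      intro τ hτ
      have hτ' : τ ∈ Ici t0 := hsub hτ
      have heq : eE τ = (lam/si)*(2*lam*(u τ*u' τ))*(cinf - c τ) := by
        simp only [heEdef, hsidef]; ring
      have h2 : |2*lam*(u τ*u' τ)| = 2*lam*|u τ*u' τ| := by
        rw [abs_mul, abs_of_pos (by positivity : (0:ℝ) < 2*lam)]
      have h3 : lam/si ≤ lam/L := by
        rw [div_le_div_iff₀ hsipos hL]
        nlinarith
      calc eE τ = (lam/si)*(2*lam*(u τ*u' τ))*(cinf - c τ) := heq
        _ ≤ |(lam/si)*(2*lam*(u τ*u' τ))*(cinf - c τ)| := le_abs_self _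
        _ = (lam/si)*(2*lam*|u τ*u' τ|)*|cinf - c τ| := by
            rw [abs_mul, abs_mul, h2, abs_of_pos (div_pos hlam hsipos)]
        _ ≤ (lam/L)*(E τ)*|c τ - cinf| := by
            rw [abs_sub_comm]
            refine mul_le_mul (mul_le_mul h3 (hAME τ) (by positivity) hlamL.le)
              le_rfl (abs_nonneg _) (mul_nonneg hlamL.le (hEnn τ))
        _ = (lam/L)*|c τ - cinf| * E τ := by ring
    have hgron := my_gronwall hσ.2 (f := E) (f' := eE)
      (g := fun τ => (lam/L)*|c τ - cinf|)
      (fun τ hτ => (hE' τ (hsub hτ)).mono hsub) hg hbnd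
    rwa [intervalIntegral.integral_const_mul] at hgron
  -- the corrected hyperbolic (R) Grönwall phase, for large lam
  set K2 : ℝ := (2*Λ1+3)/(4*(Λ1^2*L)*lam) with hK2def
  have hdenpos : (0:ℝ) < 4*(Λ1^2*L)*lam :=
    mul_pos (mul_pos four_pos (mul_pos (pow_pos hΛ1 2) hL)) hlam
  have hK2pos : 0 < K2 := div_pos (by linarith) hdenpos
  have hRval : ∀ τ, R τ = F τ + c' τ/(2*(Real.sqrt (c τ))^3)*(u τ*u' τ) := fun τ => rfl
  have heRval : ∀ τ, eR τ = (c'' τ/(2*(Real.sqrt (c τ))^3)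
      - 3*(c' τ)^2/(4*(Real.sqrt (c τ))^5))*(u τ*u' τ) := fun τ => rfl
  have phase1 : γ t0 ≤ 2*lam*(Λ1*L) → ∀ σ, σ ∈ Icc t0 t →
      F σ ≤ 3*(F t0)*Real.exp (K2 * Gfun t0 γ σ) := by
    intro hlamγ σ hσ
    have hsub : Icc t0 σ ⊆ Ici t0 := fun x hx => hx.1
    have huu : ∀ τ ∈ Ici t0, |u τ*u' τ| ≤ F τ/(2*lam) := by
      intro τ hτ'
      rw [le_div_iff₀ (by positivity : (0:ℝ) < 2*lam)]
      nlinarith [hAMF τ hτ']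
    have hhalf : ∀ τ ∈ Icc t0 σ, |c' τ/(2*(Real.sqrt (c τ))^3)*(u τ*u' τ)| ≤ F τ/2 := by
      intro τ hτ
      have hτ' : τ ∈ Ici t0 := hτ.1
      have hγτ : γ τ ≤ 2*lam*(Λ1*L) := le_trans (hγ_anti self_mem_Ici hτ' hτ.1) hlamγ
      have hΛL : (0:ℝ) < 2*(Λ1*L) := by nlinarith
      rw [abs_mul]
      calc |c' τ/(2*(Real.sqrt (c τ))^3)| *|u τ*u' τ|
          ≤ (γ τ/(2*(Λ1*L)))*(F τ/(2*lam)) := by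
            refine mul_le_mul (hβb τ hτ') (huu τ hτ') (abs_nonneg _)
              (div_nonneg (hγ0 τ hτ') hΛL.le)
        _ ≤ F τ/2 := by
            rw [div_mul_div_comm, div_le_div_iff₀ (by positivity) two_pos]
            nlinarith [mul_le_mul_of_nonneg_right hγτ (hFnn τ hτ')]
    have hF2R : ∀ τ ∈ Icc t0 σ, F τ ≤ 2*R τ := by
      intro τ hτ
      have h := (abs_le.1 (hhalf τ hτ)).1
      rw [hRval τ] at *
      linarith
    have hR2F : R t0 ≤ (3/2)*F t0 := by
      have h := (abs_le.1 (hhalf t0 (left_mem_Icc.2 hσ.1))).2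
      rw [hRval t0]
      linarith
    have hbnd : ∀ τ ∈ Icc t0 σ, eR τ ≤ K2*(γ τ)^2 * R τ := by
      intro τ hτ
      have hτ' : τ ∈ Ici t0 := hτ.1
      have hRnn : 0 ≤ R τ := by linarith [hF2R τ hτ, hFnn τ hτ']
      have hB := hβ'b τ hτ'
      have h1 : eR τ ≤ |c'' τ/(2*(Real.sqrt (c τ))^3)
          - 3*(c' τ)^2/(4*(Real.sqrt (c τ))^5)| *|u τ*u' τ| := by
        rw [heRval τ]
        exact le_trans (le_abs_self _) (le_of_eq (abs_mul _ _))
      have h2 : |u τ*u' τ| ≤ R τ/lam := by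
        have h7 : |u τ*u' τ| *(2*lam) ≤ F τ := (le_div_iff₀ (by positivity)).1 (huu τ hτ')
        have h3 := hF2R τ hτ
        rw [le_div_iff₀ hlam]
        nlinarith [h7]
      have h4 : |c'' τ/(2*(Real.sqrt (c τ))^3) - 3*(c' τ)^2/(4*(Real.sqrt (c τ))^5)| *|u τ*u' τ|
          ≤ ((2*Λ1+3)/(4*(Λ1^2*L))*(γ τ)^2)*(R τ/lam) :=
        mul_le_mul hB h2 (abs_nonneg _) (mul_nonneg (div_nonneg (by linarith)
          (mul_pos four_pos (mul_pos (pow_pos hΛ1 2) hL)).le) (sq_nonneg _))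
      have h5 : ((2*Λ1+3)/(4*(Λ1^2*L))*(γ τ)^2)*(R τ/lam) = K2*(γ τ)^2 * R τ := by
        rw [hK2def]
        field_simp
        all_goals ring
      calc eR τ ≤ _ := h1
        _ ≤ _ := h4
        _ = K2*(γ τ)^2 * R τ := h5
    have hgron := my_gronwall hσ.1 (f := R) (f' := eR) (g := fun τ => K2*(γ τ)^2)
      (fun τ hτ => (hR' τ hτ.1).mono hsub)
      (continuousOn_const.mul ((hγ_cont.mono hsub).pow 2)) hbnd
    rw [intervalIntegral.integral_const_mul] at hgron
    have hX1 : (0:ℝ) < Real.exp (K2 * ∫ τ in t0..σ, (γ τ)^2) := Real.exp_pos _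
    have hGG : (∫ τ in t0..σ, (γ τ)^2) = Gfun t0 γ σ := rfl
    rw [hGG] at hgron hX1
    have h6 := hF2R σ (right_mem_Icc.2 hσ.1)
    have h7 := mul_le_mul_of_nonneg_right hR2F hX1.le
    calc F σ ≤ 2*R σ := h6
      _ ≤ 2*(R t0 * Real.exp (K2*Gfun t0 γ σ)) := by linarith
      _ ≤ 2*(3/2*F t0 * Real.exp (K2*Gfun t0 γ σ)) := by linarith
      _ = 3*(F t0)*Real.exp (K2*Gfun t0 γ σ) := by ring
  -- constants for the final bound
  set H4 : ℝ := Real.sqrt (2*Λ1+3)/(Λ1*L) with hH4def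
  have hΛL0 : 0 < Λ1*L := mul_pos hΛ1 hL
  have hH4nn : 0 ≤ H4 := div_nonneg (Real.sqrt_nonneg _) hΛL0.le
  have hH4eq : Real.sqrt (2*Λ1+3)/Λ1^((3:ℝ)/2) = H4 := by
    rw [hH4def, hLdef]
    congr 1
    rw [show ((3:ℝ)/2) = (1:ℝ) + 1/2 by norm_num, Real.rpow_add hΛ1, Real.rpow_one,
      ← Real.sqrt_eq_rpow]
  have hkey : ∀ x y : ℝ, 4*((K2*x)*((lam/L)*y)) = H4^2*(x*y) := by
    intro x y
    rw [hH4def, hK2def, div_pow, Real.sq_sqrt (by linarith : (0:ℝ) ≤ 2*Λ1+3)]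
    field_simp
  -- facts about G and M
  have hGnn : ∀ x ∈ Icc t0 t, 0 ≤ Gfun t0 γ x :=
    fun x hx => intervalIntegral.integral_nonneg hx.1 (fun τ _ => sq_nonneg _)
  have hGcont : ContinuousOn (Gfun t0 γ) (Icc t0 t) := by
    have hsub : uIcc t0 t ⊆ Ici t0 := by rw [uIcc_of_le htt]; exact Icc_subset_Ici_self
    have h_int : IntegrableOn (fun τ => (γ τ)^2) (uIcc t0 t) volume :=
      ((hγ_cont.mono hsub).pow 2).integrableOn_compact isCompact_uIcc
    have h := intervalIntegral.continuousOn_primitive_interval h_int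
    rw [uIcc_of_le htt] at h
    exact h
  have hGScont : ContinuousOn (fun τ => Gfun t0 γ τ * S τ) (Icc t0 t) :=
    hGcont.mul (hS_cont.mono Icc_subset_Ici_self)
  have hbdd : BddAbove ((fun τ => Gfun t0 γ τ * S τ) '' Icc t0 t) :=
    (isCompact_Icc.image_of_continuousOn hGScont).bddAbove
  have hGSM : ∀ x ∈ Icc t0 t, Gfun t0 γ x * S x ≤ Mfun t0 γ S t :=
    fun x hx => le_csSup hbdd (mem_image_of_mem _ hx)
  have hG0 : Gfun t0 γ t0 = 0 := intervalIntegral.integral_same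
  have hM0 : 0 ≤ Mfun t0 γ S t := by
    have h := hGSM t0 (left_mem_Icc.2 htt)
    rw [hG0, zero_mul] at h
    exact h
  have hsqrtM : 0 ≤ Real.sqrt (Mfun t0 γ S t) := Real.sqrt_nonneg _
  -- existence of a good switching time
  have hex : ∃ σ ∈ Icc t0 t,
      K2*Gfun t0 γ σ + (lam/L)*(∫ τ in σ..t, |c τ - cinf|)
        ≤ H4 * Real.sqrt (Mfun t0 γ S t) := by
    rcases le_or_gt (K2*Gfun t0 γ t - (lam/L)*S t) 0 with hca|hcb
    · refine ⟨t, right_mem_Icc.2 htt, ?_⟩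
      rw [intervalIntegral.integral_same, mul_zero, add_zero]
      have hΦnn : 0 ≤ K2*Gfun t0 γ t := mul_nonneg hK2pos.le (hGnn t (right_mem_Icc.2 htt))
      have hk := hkey (Gfun t0 γ t) (S t)
      have hmul := mul_le_mul_of_nonneg_left
        (show K2*Gfun t0 γ t ≤ (lam/L)*S t by linarith) hΦnn
      have h1 : (K2*Gfun t0 γ t)^2 ≤ (H4/2)^2*(Gfun t0 γ t * S t) := by nlinarith
      calc K2*Gfun t0 γ t = Real.sqrt ((K2*Gfun t0 γ t)^2) := (Real.sqrt_sq hΦnn).symm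
        _ ≤ Real.sqrt ((H4/2)^2*(Gfun t0 γ t * S t)) := Real.sqrt_le_sqrt h1
        _ = (H4/2)*Real.sqrt (Gfun t0 γ t * S t) := by
            rw [Real.sqrt_mul (sq_nonneg _), Real.sqrt_sq (by linarith)]
        _ ≤ H4*Real.sqrt (Mfun t0 γ S t) := by
            refine mul_le_mul (by linarith) (Real.sqrt_le_sqrt (hGSM t (right_mem_Icc.2 htt)))
              (Real.sqrt_nonneg _) hH4nn
    · have hDcont : ContinuousOn (fun x => K2*Gfun t0 γ x - (lam/L)*S x) (Icc t0 t) :=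
        (continuousOn_const.mul hGcont).sub
          (continuousOn_const.mul (hS_cont.mono Icc_subset_Ici_self))
      have hD0 : K2*Gfun t0 γ t0 - (lam/L)*S t0 ≤ 0 := by
        rw [hG0, mul_zero, zero_sub, neg_nonpos]
        exact mul_nonneg hlamL.le (hS0 t0 self_mem_Ici)
      have h0mem : (0:ℝ) ∈ Icc (K2*Gfun t0 γ t0 - (lam/L)*S t0)
          (K2*Gfun t0 γ t - (lam/L)*S t) := ⟨hD0, hcb.le⟩
      obtain ⟨σ, hσmem, hσeq⟩ := intermediate_value_Icc htt hDcont h0mem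
      refine ⟨σ, hσmem, ?_⟩
      have hσIci : σ ∈ Ici t0 := hσmem.1
      have hΦψ : K2*Gfun t0 γ σ = (lam/L)*S σ := by
        have : K2*Gfun t0 γ σ - (lam/L)*S σ = 0 := hσeq
        linarith
      have hint : (∫ τ in σ..t, |c τ - cinf|) ≤ S σ := hstab σ hσIci t hσmem.2
      have hΦnn : 0 ≤ K2*Gfun t0 γ σ := mul_nonneg hK2pos.le (hGnn σ hσmem)
      have step1 : K2*Gfun t0 γ σ + (lam/L)*(∫ τ in σ..t, |c τ - cinf|)
          ≤ 2*(K2*Gfun t0 γ σ) := by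
        have h := mul_le_mul_of_nonneg_left hint hlamL.le
        linarith
      have hk := hkey (Gfun t0 γ σ) (S σ)
      have hsq : (2*(K2*Gfun t0 γ σ))^2 = H4^2*(Gfun t0 γ σ*S σ) := by
        linear_combination (4*(K2*Gfun t0 γ σ))*hΦψ + hk
      have h2Φ : 2*(K2*Gfun t0 γ σ) = H4*Real.sqrt (Gfun t0 γ σ*S σ) := by
        have h4 : 0 ≤ 2*(K2*Gfun t0 γ σ) := by linarith
        rw [← Real.sqrt_sq h4, hsq, Real.sqrt_mul (sq_nonneg H4), Real.sqrt_sq hH4nn]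
      calc K2*Gfun t0 γ σ + (lam/L)*(∫ τ in σ..t, |c τ - cinf|)
          ≤ 2*(K2*Gfun t0 γ σ) := step1
        _ = H4*Real.sqrt (Gfun t0 γ σ*S σ) := h2Φ
        _ ≤ H4*Real.sqrt (Mfun t0 γ S t) :=
            mul_le_mul_of_nonneg_left (Real.sqrt_le_sqrt (hGSM σ hσmem)) hH4nn
  -- final assembly
  rw [hH4eq]
  have hmax : (0:ℝ) ≤ max (3*Λ2/Λ1) (Real.exp (γ t0*S t0/(2*Λ1^2))) :=
    le_trans (Real.exp_pos _).le (le_max_right _ _)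
  rcases le_or_gt (γ t0) (2*lam*(Λ1*L)) with hbig|hsmall
  · obtain ⟨σ, hσmem, hexpo⟩ := hex
    have hσIci : σ ∈ Ici t0 := hσmem.1
    have h1 := phase2 σ hσmem
    have h2 := hEleF σ hσIci
    have h3 := phase1 hbig σ hσmem
    have h4 := hFleE t0 self_mem_Ici
    have hexpI : (0:ℝ) < Real.exp ((lam/L)*(∫ τ in σ..t, |c τ - cinf|)) := Real.exp_pos _
    have hX1 : (0:ℝ) < Real.exp (K2*Gfun t0 γ σ) := Real.exp_pos _
    have hchain : E t ≤ (3*(Λ2/Λ1))*(E t0)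
        *Real.exp (K2*Gfun t0 γ σ + (lam/L)*(∫ τ in σ..t, |c τ - cinf|)) := by
      calc E t ≤ E σ * Real.exp ((lam/L)*(∫ τ in σ..t, |c τ - cinf|)) := h1
        _ ≤ (r*F σ) * Real.exp ((lam/L)*(∫ τ in σ..t, |c τ - cinf|)) :=
            mul_le_mul_of_nonneg_right h2 hexpI.le
        _ ≤ (r*(3*(F t0)*Real.exp (K2*Gfun t0 γ σ)))
            * Real.exp ((lam/L)*(∫ τ in σ..t, |c τ - cinf|)) := by
            exact mul_le_mul_of_nonneg_right (mul_le_mul_of_nonneg_left h3 hr0) hexpI.le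
        _ ≤ (r*(3*(r*E t0)*Real.exp (K2*Gfun t0 γ σ)))
            * Real.exp ((lam/L)*(∫ τ in σ..t, |c τ - cinf|)) := by
            refine mul_le_mul_of_nonneg_right (mul_le_mul_of_nonneg_left ?_ hr0) hexpI.le
            nlinarith [hX1.le]
        _ = (3*(r*r))*(E t0)*(Real.exp (K2*Gfun t0 γ σ)
            * Real.exp ((lam/L)*(∫ τ in σ..t, |c τ - cinf|))) := by ring
        _ = (3*(Λ2/Λ1))*(E t0)
            *Real.exp (K2*Gfun t0 γ σ + (lam/L)*(∫ τ in σ..t, |c τ - cinf|)) := by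
            rw [hrr, Real.exp_add]
    have hee : Real.exp (K2*Gfun t0 γ σ + (lam/L)*(∫ τ in σ..t, |c τ - cinf|))
        ≤ Real.exp (H4*Real.sqrt (Mfun t0 γ S t)) := Real.exp_le_exp.2 hexpo
    have hcoef : (3*(Λ2/Λ1)) ≤ max (3*Λ2/Λ1) (Real.exp (γ t0*S t0/(2*Λ1^2))) := by
      rw [mul_div_assoc']
      exact le_max_left _ _
    calc E t ≤ (3*(Λ2/Λ1))*(E t0)
        *Real.exp (K2*Gfun t0 γ σ + (lam/L)*(∫ τ in σ..t, |c τ - cinf|)) := hchain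
      _ ≤ (3*(Λ2/Λ1))*(E t0)*Real.exp (H4*Real.sqrt (Mfun t0 γ S t)) := by
          refine mul_le_mul_of_nonneg_left hee (mul_nonneg (by positivity) (hEnn t0))
      _ ≤ E t0 * max (3*Λ2/Λ1) (Real.exp (γ t0*S t0/(2*Λ1^2)))
          *Real.exp (H4*Real.sqrt (Mfun t0 γ S t)) := by
          refine mul_le_mul_of_nonneg_right ?_ (Real.exp_pos _).le
          calc (3*(Λ2/Λ1))*(E t0) = E t0*(3*(Λ2/Λ1)) := by ring
            _ ≤ E t0 * max (3*Λ2/Λ1) (Real.exp (γ t0*S t0/(2*Λ1^2))) :=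
                mul_le_mul_of_nonneg_left hcoef (hEnn t0)
  · have h1 := phase2 t0 (left_mem_Icc.2 htt)
    have hint : (∫ τ in t0..t, |c τ - cinf|) ≤ S t0 := hstab t0 self_mem_Ici t htt
    have hexpb : (lam/L)*(∫ τ in t0..t, |c τ - cinf|) ≤ γ t0*S t0/(2*Λ1^2) := by
      have h2 := mul_le_mul_of_nonneg_left hint hlamL.le
      have h4 : lam/L ≤ γ t0/(2*Λ1^2) := by
        rw [div_le_div_iff₀ hL (by positivity)]
        have heq : 2*lam*Λ1*(L*L) = 2*lam*Λ1*Λ1 := by rw [hLL]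
        nlinarith [mul_lt_mul_of_pos_right hsmall hL]
      have h5 : (lam/L)*S t0 ≤ (γ t0/(2*Λ1^2))*S t0 :=
        mul_le_mul_of_nonneg_right h4 (hS0 t0 self_mem_Ici)
      have h6 : (γ t0/(2*Λ1^2))*S t0 = γ t0*S t0/(2*Λ1^2) := by ring
      linarith
    have hone : (1:ℝ) ≤ Real.exp (H4*Real.sqrt (Mfun t0 γ S t)) :=
      Real.one_le_exp (mul_nonneg hH4nn hsqrtM)
    calc E t ≤ E t0 * Real.exp ((lam/L)*(∫ τ in t0..t, |c τ - cinf|)) := h1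
      _ ≤ E t0 * Real.exp (γ t0*S t0/(2*Λ1^2)) :=
          mul_le_mul_of_nonneg_left (Real.exp_le_exp.2 hexpb) (hEnn t0)
      _ ≤ E t0 * max (3*Λ2/Λ1) (Real.exp (γ t0*S t0/(2*Λ1^2))) :=
          mul_le_mul_of_nonneg_left (le_max_right _ _) (hEnn t0)
      _ = E t0 * max (3*Λ2/Λ1) (Real.exp (γ t0*S t0/(2*Λ1^2))) * 1 := by ring
      _ ≤ E t0 * max (3*Λ2/Λ1) (Real.exp (γ t0*S t0/(2*Λ1^2)))
          *Real.exp (H4*Real.sqrt (Mfun t0 γ S t)) := by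
          refine mul_le_mul_of_nonneg_left hone (mul_nonneg (hEnn t0) hmax)
end

section
/- Let c belong to the class PS(t0,Λ1,Λ2,S,γ) with γ non-decreasing, and let c∞ ∈ [Λ1,Λ2] be its stabilization constant. Then for every real number λ > 0 and every solution u of u''(t) + λ² c(t) u(t) = 0 on [t0,∞), the Kowaleskian energy E(t) = u'(t)²/√c∞ + λ²√c∞·u(t)² satisfies the estimate from below E(t) ≥ E(t0)·H1^{−1}·exp(−H2·M(t)^{1/2}) for all t ≥ t0, where H1 = 3Λ2/Λ1 and H2 = max{ 2(Λ2−Λ1)^{1/2}/Λ1² , (2Λ1+3)^{1/2}/Λ1^{3/2} }. -/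
open Real Set Filter MeasureTheory Topology

private lemma aux_gron (a b : ℝ) (hab : a ≤ b) (f g P p : ℝ → ℝ)
    (hf : ContinuousOn f (Icc a b)) (hP : ContinuousOn P (Icc a b))
    (hfd : ∀ x ∈ Ioo a b, HasDerivAt f (g x) x)
    (hPd : ∀ x ∈ Ioo a b, HasDerivAt P (p x) x)
    (hge : ∀ x ∈ Ioo a b, p x * f x ≤ g x) :
    f a * Real.exp (-P a) ≤ f b * Real.exp (-P b) := by
  have hmono : MonotoneOn (fun x => f x * Real.exp (-P x)) (Icc a b) := by
    apply monotoneOn_of_deriv_nonneg (convex_Icc a b)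
    · exact hf.mul (Real.continuous_exp.comp_continuousOn hP.neg)
    · intro x hx
      rw [interior_Icc] at hx
      exact ((hfd x hx).mul ((hPd x hx).neg.exp)).differentiableAt.differentiableWithinAt
    · intro x hx
      rw [interior_Icc] at hx
      have hd : HasDerivAt (fun x => f x * Real.exp (-P x))
          (g x * Real.exp (-P x) + f x * (Real.exp (-P x) * -(p x))) x :=
        (hfd x hx).mul ((hPd x hx).neg.exp)
      rw [hd.deriv]
      have h1 := hge x hx
      have h2 := Real.exp_pos (-P x)
      nlinarith
  exact hmono ⟨le_refl a, hab⟩ ⟨hab, le_refl b⟩ hab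

private lemma aux_cross (a b : ℝ) (hab : a ≤ b) (f g : ℝ → ℝ)
    (hf : ContinuousOn f (Icc a b)) (hg : ContinuousOn g (Icc a b))
    (ha : f a ≤ g a) :
    ∃ s ∈ Icc a b, f s ≤ g s ∧ ∀ x ∈ Icc a b, s < x → g x < f x := by
  set T := {x ∈ Icc a b | f x ≤ g x} with hT
  have hTsub : T ⊆ Icc a b := fun x hx => hx.1
  have hTne : T.Nonempty := ⟨a, ⟨le_refl a, hab⟩, ha⟩
  have hTclosed : IsClosed T := by
    have : T = Icc a b ∩ (fun x => g x - f x) ⁻¹' (Ici 0) := by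
      ext x
      simp only [hT, mem_sep_iff, mem_inter_iff, mem_preimage, mem_Ici, sub_nonneg]
    rw [this]
    exact ContinuousOn.preimage_isClosed_of_isClosed (hg.sub hf) isClosed_Icc isClosed_Ici
  have hTcomp : IsCompact T := isCompact_Icc.of_isClosed_subset hTclosed hTsub
  have hmem := hTcomp.sSup_mem hTne
  refine ⟨sSup T, hTsub hmem, hmem.2, ?_⟩
  intro x hx hlt
  by_contra hle
  push_neg at hle
  exact absurd (le_csSup hTcomp.bddAbove (⟨hx, hle⟩ : x ∈ T)) (not_le.2 hlt)

private lemma aux_right_limit (a b K : ℝ) (hab : a < b) (f : ℝ → ℝ)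
    (hf : ContinuousWithinAt f (Ici a) a)
    (h : ∀ x ∈ Ioc a b, K ≤ f x) : K ≤ f a := by
  have h1 : Tendsto f (𝓝[>] a) (𝓝 (f a)) := hf.mono Ioi_subset_Ici_self
  refine ge_of_tendsto h1 ?_
  filter_upwards [Ioo_mem_nhdsGT_of_mem (Set.left_mem_Ico.2 hab)] with x hx
  exact h x ⟨hx.1, le_of_lt hx.2⟩

private lemma aux_sq_le (a b : ℝ) (ha : 0 ≤ a) (hb : 0 ≤ b) (h : a ^ 2 ≤ b ^ 2) : a ≤ b := by
  nlinarith

private lemma aux_c2combine (Λ1 Λ2 lam sl I D M : ℝ) (hΛ1 : 0 < Λ1) (hΛ12 : Λ1 ≤ Λ2)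
    (hlam : 0 < lam) (hsl : 0 < sl) (hsl2 : sl ^ 2 = Λ1)
    (hI0 : 0 ≤ I) (hD0 : 0 ≤ D) (hM0 : 0 ≤ M)
    (hI : I ≤ 2 * D) (hkey : 4 * Λ1 ^ 3 * (lam ^ 2 * D ^ 2) ≤ (Λ2 - Λ1) * M) :
    lam / sl * I ≤ (2 * Real.sqrt (Λ2 - Λ1) / Λ1 ^ 2) / 2 * Real.sqrt M := by
  rw [div_mul_eq_mul_div, div_le_iff₀ hsl]
  apply aux_sq_le _ _ (by positivity) (by positivity)
  have hb : ((2 * Real.sqrt (Λ2 - Λ1) / Λ1 ^ 2) / 2 * Real.sqrt M * sl) ^ 2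
      = (Λ2 - Λ1) * M * Λ1 / Λ1 ^ 4 := by
    rw [mul_pow, mul_pow, Real.sq_sqrt hM0, hsl2, div_pow, div_pow, mul_pow,
      Real.sq_sqrt (by linarith : (0:ℝ) ≤ Λ2 - Λ1)]
    ring
  rw [hb, le_div_iff₀ (by positivity)]
  have h0 : I ^ 2 ≤ 4 * D ^ 2 := by nlinarith only [hI, hI0, hD0]
  have h1 : (lam * I) ^ 2 ≤ 4 * (lam ^ 2 * D ^ 2) := by
    nlinarith only [mul_le_mul_of_nonneg_left h0 (sq_nonneg lam)]
  have h2 := mul_le_mul_of_nonneg_right h1 (le_of_lt (pow_pos hΛ1 4))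
  have h3 := mul_le_mul_of_nonneg_left hkey hΛ1.le
  nlinarith only [h2, h3]

set_option maxHeartbeats 1000000 in
theorem energy_estimate_below_gamma_nondecreasing
    (t0 Λ1 Λ2 : ℝ) (hΛ1 : 0 < Λ1) (hΛ12 : Λ1 ≤ Λ2)
    (S γ : ℝ → ℝ)
    (hS_cont : ContinuousOn S (Ici t0)) (hS_anti : AntitoneOn S (Ici t0))
    (hS_lim : Tendsto S atTop (nhds 0))
    (hγ_cont : ContinuousOn γ (Ici t0)) (hγ_mono : MonotoneOn γ (Ici t0))
    (c c' c'' : ℝ → ℝ)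
    (hc1 : ∀ t ∈ Ici t0, HasDerivWithinAt c (c' t) (Ici t0) t)
    (hc2 : ∀ t ∈ Ici t0, HasDerivWithinAt c' (c'' t) (Ici t0) t)
    (hc2cont : ContinuousOn c'' (Ici t0))
    (hhyp : ∀ t ∈ Ici t0, Λ1 ≤ c t ∧ c t ≤ Λ2)
    (cinf : ℝ) (hcinf : cinf ∈ Icc Λ1 Λ2)
    (hstab : ∀ t ∈ Ici t0, ∀ b ≥ t, (∫ τ in t..b, |c τ - cinf|) ≤ S t)
    (hder : ∀ t ∈ Ici t0, |c' t| ≤ γ t ∧ |c'' t| ≤ (γ t) ^ 2)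
    (lam : ℝ) (hlam : 0 < lam)
    (u u' : ℝ → ℝ)
    (hu : ∀ t ∈ Ici t0, HasDerivWithinAt u (u' t) (Ici t0) t)
    (hu' : ∀ t ∈ Ici t0, HasDerivWithinAt u' (-(lam ^ 2 * c t * u t)) (Ici t0) t) :
    ∀ t ∈ Ici t0,
      kowE cinf lam u u' t ≥
        kowE cinf lam u u' t0 * (3 * Λ2 / Λ1)⁻¹ *
          Real.exp (-(max (2 * Real.sqrt (Λ2 - Λ1) / Λ1 ^ 2)
              (Real.sqrt (2 * Λ1 + 3) / Λ1 ^ ((3 : ℝ) / 2)) *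
            Real.sqrt (Mfun t0 γ S t))) := by
  intro t ht
  rw [mem_Ici] at ht
  obtain ⟨hci1, hci2⟩ := hcinf
  have hΛ2 : 0 < Λ2 := lt_of_lt_of_le hΛ1 hΛ12
  have hcipos : 0 < cinf := lt_of_lt_of_le hΛ1 hci1
  set sc := Real.sqrt cinf with hsc_def
  have hsc : 0 < sc := Real.sqrt_pos.2 hcipos
  have hsc2 : sc ^ 2 = cinf := Real.sq_sqrt hcipos.le
  set sl := Real.sqrt Λ1 with hsl_def
  have hsl : 0 < sl := Real.sqrt_pos.2 hΛ1
  have hsl2 : sl ^ 2 = Λ1 := Real.sq_sqrt hΛ1.le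
  have hslsc : sl ≤ sc := Real.sqrt_le_sqrt hci1
  -- continuity of the data
  have hc_cont : ContinuousOn c (Ici t0) := fun x hx => (hc1 x hx).continuousWithinAt
  have hc'_cont : ContinuousOn c' (Ici t0) := fun x hx => (hc2 x hx).continuousWithinAt
  have hu_cont : ContinuousOn u (Ici t0) := fun x hx => (hu x hx).continuousWithinAt
  have hu'_cont : ContinuousOn u' (Ici t0) := fun x hx => (hu' x hx).continuousWithinAt
  have hγ0 : ∀ σ ∈ Ici t0, 0 ≤ γ σ := fun σ hσ => le_trans (abs_nonneg _) (hder σ hσ).1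
  have hS0 : ∀ σ ∈ Ici t0, 0 ≤ S σ := by
    intro σ hσ
    refine le_of_tendsto hS_lim ?_
    filter_upwards [eventually_ge_atTop σ] with x hx
    exact hS_anti hσ (le_trans hσ hx) hx
  have hcpos : ∀ σ ∈ Ici t0, 0 < c σ := fun σ hσ => lt_of_lt_of_le hΛ1 (hhyp σ hσ).1
  -- globalized integrands
  set mx : ℝ → ℝ := fun τ => max τ t0 with hmx_def
  have hmx_cont : Continuous mx := continuous_id.max continuous_const
  have hmx_mem : ∀ τ, mx τ ∈ Ici t0 := fun τ => le_max_right τ t0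
  have hmx_eq : ∀ σ, t0 ≤ σ → mx σ = σ := fun σ hσ => max_eq_left hσ
  set q1 : ℝ → ℝ := fun τ => |c (mx τ) - cinf| with hq1_def
  set q2 : ℝ → ℝ := fun τ => (γ (mx τ)) ^ 2 with hq2_def
  have hq1_cont : Continuous q1 :=
    ((hc_cont.comp_continuous hmx_cont hmx_mem).sub continuous_const).abs
  have hq2_cont : Continuous q2 := (hγ_cont.comp_continuous hmx_cont hmx_mem).pow 2
  have hq1_nonneg : ∀ τ, 0 ≤ q1 τ := fun τ => abs_nonneg _
  have hq2_nonneg : ∀ τ, 0 ≤ q2 τ := fun τ => sq_nonneg _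
  have hq1_eq : ∀ σ, t0 ≤ σ → q1 σ = |c σ - cinf| := by
    intro σ hσ; simp only [hq1_def, hmx_eq σ hσ]
  have hq2_eq : ∀ σ, t0 ≤ σ → q2 σ = (γ σ) ^ 2 := by
    intro σ hσ; simp only [hq2_def, hmx_eq σ hσ]
  -- primitives
  set Gq : ℝ → ℝ := fun τ => ∫ σ in t0..τ, q2 σ with hGq_def
  have hGq_deriv : ∀ x : ℝ, HasDerivAt Gq (q2 x) x := fun x =>
    (hq2_cont.integral_hasStrictDerivAt t0 x).hasDerivAt
  have hGq_cont : Continuous Gq :=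
    continuous_iff_continuousAt.2 fun x => (hGq_deriv x).continuousAt
  set Iq1 : ℝ → ℝ := fun τ => ∫ σ in t0..τ, q1 σ with hIq1_def
  have hIq1_deriv : ∀ x : ℝ, HasDerivAt Iq1 (q1 x) x := fun x =>
    (hq1_cont.integral_hasStrictDerivAt t0 x).hasDerivAt
  have hGq_eq : ∀ τ, t0 ≤ τ → Gfun t0 γ τ = Gq τ := by
    intro τ hτ
    apply intervalIntegral.integral_congr
    intro σ hσ
    rw [uIcc_of_le hτ] at hσ
    exact (hq2_eq σ hσ.1).symm
  have hGq_nonneg : ∀ p q, t0 ≤ p → p ≤ q → 0 ≤ ∫ σ in p..q, q2 σ := by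
    intro p q _ hpq
    exact intervalIntegral.integral_nonneg hpq (fun x _ => hq2_nonneg x)
  have hGq0 : ∀ τ, t0 ≤ τ → 0 ≤ Gq τ := fun τ hτ => hGq_nonneg t0 τ le_rfl hτ
  have hGq_split : ∀ p q : ℝ, Gq p + (∫ σ in p..q, q2 σ) = Gq q := by
    intro p q
    exact intervalIntegral.integral_add_adjacent_intervals
      (hq2_cont.intervalIntegrable _ _) (hq2_cont.intervalIntegrable _ _)
  have hIq1_split : ∀ p q : ℝ, Iq1 p + (∫ σ in p..q, q1 σ) = Iq1 q := by
    intro p q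
    exact intervalIntegral.integral_add_adjacent_intervals
      (hq1_cont.intervalIntegrable _ _) (hq1_cont.intervalIntegrable _ _)
  -- energies
  set E := kowE cinf lam u u' with hE_def
  have hE_eq : ∀ τ, E τ = (u' τ) ^ 2 / sc + lam ^ 2 * sc * (u τ) ^ 2 := fun τ => rfl
  have hE_nonneg : ∀ τ, 0 ≤ E τ := by
    intro τ; rw [hE_eq]; positivity
  have hE_cont : ContinuousOn E (Ici t0) := by
    have : ContinuousOn (fun τ => (u' τ) ^ 2 / sc + lam ^ 2 * sc * (u τ) ^ 2) (Ici t0) :=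
      ((hu'_cont.pow 2).div_const sc).add (continuousOn_const.mul (hu_cont.pow 2))
    exact this
  have hEmul : ∀ τ, sc * E τ = (u' τ) ^ 2 + lam ^ 2 * cinf * (u τ) ^ 2 := by
    intro τ
    rw [hE_eq]
    field_simp
    linear_combination (lam ^ 2 * u τ ^ 2) * hsc2
  -- derivative of E
  have hIci_nhds : ∀ x : ℝ, t0 < x → Ici t0 ∈ 𝓝 x := by
    intro x hx
    exact mem_of_superset (isOpen_Ioi.mem_nhds hx) Ioi_subset_Ici_self
  have hE_deriv : ∀ x, t0 < x →
      HasDerivAt E (2 * lam ^ 2 * (cinf - c x) * (u x * u' x) / sc) x := by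
    intro x hx
    have hN := hIci_nhds x hx
    have hux : HasDerivAt u (u' x) x := (hu x hx.le).hasDerivAt hN
    have hu'x : HasDerivAt u' (-(lam ^ 2 * c x * u x)) x := (hu' x hx.le).hasDerivAt hN
    have h1 : HasDerivAt (fun τ => (u' τ) ^ 2 / sc + lam ^ 2 * sc * (u τ) ^ 2)
        ((2 * u' x ^ 1 * -(lam ^ 2 * c x * u x)) / sc
          + lam ^ 2 * sc * (2 * u x ^ 1 * u' x)) x := by
      exact ((hu'x.pow 2).div_const sc).add ((hux.pow 2).const_mul (lam ^ 2 * sc))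
    have heq : (2 * u' x ^ 1 * -(lam ^ 2 * c x * u x)) / sc
          + lam ^ 2 * sc * (2 * u x ^ 1 * u' x)
        = 2 * lam ^ 2 * (cinf - c x) * (u x * u' x) / sc := by
      field_simp
      linear_combination (u x * u' x) * hsc2
    rw [heq] at h1
    exact h1
  have hIq1_cont : Continuous Iq1 :=
    continuous_iff_continuousAt.2 fun x => (hIq1_deriv x).continuousAt
  -- Kovalevskian estimate
  have lemK : ∀ p q : ℝ, t0 ≤ p → p ≤ q →
      E p * Real.exp (-((lam / sl) * ∫ σ in p..q, q1 σ)) ≤ E q := by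
    intro p q hp hpq
    have hsub : Icc p q ⊆ Ici t0 := fun x hx => le_trans hp hx.1
    have hgron := aux_gron p q hpq E
        (fun x => 2 * lam ^ 2 * (cinf - c x) * (u x * u' x) / sc)
        (fun τ => -((lam / sl) * Iq1 τ)) (fun x => -((lam / sl) * q1 x))
        (hE_cont.mono hsub)
        ((continuous_const.mul hIq1_cont).neg.continuousOn)
        (fun x hx => hE_deriv x (lt_of_le_of_lt hp hx.1))
        (fun x _ => ((hIq1_deriv x).const_mul (lam / sl)).neg)
        ?_
    · simp only [neg_neg] at hgron
      have hsplit := hIq1_split p q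
      have h7 : E p * Real.exp (-((lam / sl) * ∫ σ in p..q, q1 σ))
          = (E p * Real.exp ((lam / sl) * Iq1 p)) * Real.exp (-((lam / sl) * Iq1 q)) := by
        have harg : -((lam / sl) * ∫ σ in p..q, q1 σ)
            = (lam / sl) * Iq1 p + -((lam / sl) * Iq1 q) := by
          linear_combination (-(lam / sl)) * hsplit
        rw [harg, Real.exp_add, ← mul_assoc]
      rw [h7]
      calc (E p * Real.exp ((lam / sl) * Iq1 p)) * Real.exp (-((lam / sl) * Iq1 q))
          ≤ (E q * Real.exp ((lam / sl) * Iq1 q)) * Real.exp (-((lam / sl) * Iq1 q)) :=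
            mul_le_mul_of_nonneg_right hgron (Real.exp_nonneg _)
        _ = E q := by
            rw [mul_assoc, ← Real.exp_add, add_neg_cancel, Real.exp_zero, mul_one]
    · intro x hx
      have hxt0 : t0 ≤ x := le_trans hp hx.1.le
      have hq1x : q1 x = |c x - cinf| := hq1_eq x hxt0
      have hAM : 2 * lam * sc * |u x * u' x| ≤ sc * E x := by
        rw [hEmul, ← hsc2]
        rcases abs_cases (u x * u' x) with ⟨h, _⟩ | ⟨h, _⟩ <;> rw [h] <;>
          nlinarith only [sq_nonneg (u' x - lam * sc * u x), sq_nonneg (u' x + lam * sc * u x)]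
      have habs : |cinf - c x| = q1 x := by rw [hq1x, abs_sub_comm]
      have h2 : -(|cinf - c x| * |u x * u' x|) ≤ (cinf - c x) * (u x * u' x) := by
        rw [← abs_mul]; exact neg_abs_le _
      have h2' := mul_le_mul_of_nonneg_left h2
        (le_of_lt (by positivity : (0:ℝ) < 2 * lam ^ 2 * sc))
      have h3 : |cinf - c x| * (2 * lam * sc * |u x * u' x|) ≤ |cinf - c x| * (sc * E x) :=
        mul_le_mul_of_nonneg_left hAM (abs_nonneg _)
      have h3' := mul_le_mul_of_nonneg_left h3 hlam.le
      have h1 : -(lam * q1 x) * (sc * E x) ≤ sc * (2 * lam ^ 2 * (cinf - c x) * (u x * u' x)) := by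
        rw [← habs]
        nlinarith only [h2', h3']
      have h5 : -(lam * q1 x * E x) ≤ 2 * lam ^ 2 * (cinf - c x) * (u x * u' x) := by
        nlinarith only [h1, hsc]
      have h6 : (-(lam * q1 x * E x)) / sc ≤ (2 * lam ^ 2 * (cinf - c x) * (u x * u' x)) / sc :=
        (div_le_div_iff_of_pos_right hsc).2 h5
      calc (-((lam / sl) * q1 x)) * E x
          ≤ (-((lam / sc) * q1 x)) * E x := by
            have hd : lam / sc ≤ lam / sl := div_le_div_of_nonneg_left hlam.le hsl hslsc
            nlinarith only [hE_nonneg x, hq1_nonneg x,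
              mul_le_mul_of_nonneg_right hd (hq1_nonneg x)]
        _ = (-(lam * q1 x * E x)) / sc := by ring
        _ ≤ _ := h6
  -- hyperbolic energy and its corrected version
  set F : ℝ → ℝ := fun τ => (u' τ) ^ 2 + lam ^ 2 * c τ * (u τ) ^ 2 with hF_def
  set bb : ℝ → ℝ := fun τ => c' τ / (2 * c τ) with hbb_def
  set Ft : ℝ → ℝ := fun τ => F τ + bb τ * (u τ * u' τ) with hFt_def
  set B : ℝ := (2 * Λ1 + 3) / (4 * Λ1 ^ 2 * sl) with hB_def
  set κ : ℝ := 2 * Λ1 * sl with hκ_def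
  have hκpos : 0 < κ := by rw [hκ_def]; positivity
  have hBpos : 0 < B := by rw [hB_def]; positivity
  have hF_nonneg : ∀ σ, t0 ≤ σ → 0 ≤ F σ := by
    intro σ hσ
    have hc := hcpos σ hσ
    have h1 : 0 ≤ lam ^ 2 * c σ * (u σ) ^ 2 :=
      mul_nonneg (mul_nonneg (sq_nonneg lam) hc.le) (sq_nonneg _)
    simp only [hF_def]
    nlinarith only [h1, sq_nonneg (u' σ)]
  have huu'F : ∀ σ, t0 ≤ σ → 2 * lam * sl * |u σ * u' σ| ≤ F σ := by
    intro σ hσ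
    have hc1σ := (hhyp σ hσ).1
    have hcu : 0 ≤ lam ^ 2 * (c σ - sl ^ 2) * (u σ) ^ 2 :=
      mul_nonneg (mul_nonneg (sq_nonneg lam) (by rw [hsl2]; linarith)) (sq_nonneg _)
    simp only [hF_def]
    rcases abs_cases (u σ * u' σ) with ⟨h, _⟩ | ⟨h, _⟩ <;> rw [h] <;>
      nlinarith only [sq_nonneg (u' σ - lam * sl * u σ), sq_nonneg (u' σ + lam * sl * u σ), hcu]
  have hbb_bound : ∀ σ, t0 ≤ σ → 2 * Λ1 * |bb σ| ≤ γ σ := by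
    intro σ hσ
    have hcσ := hcpos σ hσ
    have h1 : |bb σ| = |c' σ| / (2 * c σ) := by
      simp only [hbb_def]
      rw [abs_div, abs_of_pos (by linarith : (0:ℝ) < 2 * c σ)]
    rw [h1, ← mul_div_assoc, div_le_iff₀ (by linarith : (0:ℝ) < 2 * c σ)]
    nlinarith only [(hder σ hσ).1, hγ0 σ hσ, (hhyp σ hσ).1, abs_nonneg (c' σ), hΛ1, hcσ]
  have hcorr : ∀ σ, t0 ≤ σ → γ σ ≤ κ * lam → |bb σ * (u σ * u' σ)| * 2 ≤ F σ := by
    intro σ hσ hγσ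
    rw [abs_mul]
    have h1 := mul_le_mul (hbb_bound σ hσ) (huu'F σ hσ)
      (by positivity) (hγ0 σ hσ)
    have h2 : γ σ * F σ ≤ κ * lam * F σ :=
      mul_le_mul_of_nonneg_right hγσ (hF_nonneg σ hσ)
    have hpos : 0 < Λ1 * lam * sl := by positivity
    simp only [hκ_def] at h2
    nlinarith only [h1, h2, hpos, hF_nonneg σ hσ]
  have hFtF : ∀ σ, t0 ≤ σ → γ σ ≤ κ * lam → F σ ≤ 2 * Ft σ ∧ 2 * Ft σ ≤ 3 * F σ := by
    intro σ hσ hγσ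
    have h := hcorr σ hσ hγσ
    have h2 := neg_abs_le (bb σ * (u σ * u' σ))
    have h3 := le_abs_self (bb σ * (u σ * u' σ))
    constructor <;> simp only [hFt_def] <;> nlinarith only [h, h2, h3]
  have hFt_nonneg : ∀ σ, t0 ≤ σ → γ σ ≤ κ * lam → 0 ≤ Ft σ := by
    intro σ hσ hγσ
    have := (hFtF σ hσ hγσ).1
    have := hF_nonneg σ hσ
    linarith
  set db : ℝ → ℝ := fun x => (c'' x * (2 * c x) - c' x * (2 * c' x)) / ((2 * c x) ^ 2) with hdb_def
  have hFt_deriv : ∀ x, t0 < x → HasDerivAt Ft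
      (lam ^ 2 * c' x * (u x) ^ 2 + db x * (u x * u' x)
        + bb x * ((u' x) ^ 2 - lam ^ 2 * c x * (u x) ^ 2)) x := by
    intro x hx
    have hN := hIci_nhds x hx
    have hux : HasDerivAt u (u' x) x := (hu x hx.le).hasDerivAt hN
    have hu'x : HasDerivAt u' (-(lam ^ 2 * c x * u x)) x := (hu' x hx.le).hasDerivAt hN
    have hcx : HasDerivAt c (c' x) x := (hc1 x hx.le).hasDerivAt hN
    have hc'x : HasDerivAt c' (c'' x) x := (hc2 x hx.le).hasDerivAt hN
    have hcne : (2 * c x) ≠ 0 := ne_of_gt (by have := hcpos x hx.le; linarith)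
    have hbbx : HasDerivAt bb (db x) x := by
      have h := hc'x.div (hcx.const_mul 2) hcne
      exact h
    have hFtx : HasDerivAt (fun τ => ((u' τ) ^ 2 + lam ^ 2 * c τ * (u τ) ^ 2) + bb τ * (u τ * u' τ))
        ((2 * u' x ^ 1 * -(lam ^ 2 * c x * u x)
            + (lam ^ 2 * c' x * (u x) ^ 2 + lam ^ 2 * c x * (2 * u x ^ 1 * u' x)))
          + (db x * (u x * u' x) + bb x * (u' x * u' x + u x * -(lam ^ 2 * c x * u x)))) x := by
      exact (((hu'x.pow 2).add (((hcx.const_mul (lam ^ 2)).mul (hux.pow 2))))).add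
        (hbbx.mul (hux.mul hu'x))
    have hfun : Ft = fun τ => ((u' τ) ^ 2 + lam ^ 2 * c τ * (u τ) ^ 2) + bb τ * (u τ * u' τ) := rfl
    rw [hfun]
    convert hFtx using 1
    ring
  have hrate : ∀ x, t0 < x → γ x ≤ κ * lam →
      (bb x - (B / lam) * q2 x) * Ft x
        ≤ lam ^ 2 * c' x * (u x) ^ 2 + db x * (u x * u' x)
          + bb x * ((u' x) ^ 2 - lam ^ 2 * c x * (u x) ^ 2) := by
    intro x hx hγx
    have hcx := hcpos x hx.le
    have hcΛ := (hhyp x hx.le).1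
    have hid : lam ^ 2 * c' x * (u x) ^ 2 + db x * (u x * u' x)
          + bb x * ((u' x) ^ 2 - lam ^ 2 * c x * (u x) ^ 2) - bb x * Ft x
        = (db x - bb x ^ 2) * (u x * u' x) := by
      simp only [hFt_def, hF_def, hbb_def]
      field_simp
      ring
    have hγx2 : q2 x = (γ x) ^ 2 := hq2_eq x hx.le
    -- bound |db - bb^2|
    have e1 : (db x - bb x ^ 2) * (4 * (c x) ^ 2) = c'' x * (2 * c x) - 3 * (c' x) ^ 2 := by
      simp only [hdb_def, hbb_def]
      field_simp
      ring
    have habs1 : |db x - bb x ^ 2| * (4 * (c x) ^ 2) = |c'' x * (2 * c x) - 3 * (c' x) ^ 2| := by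
      rw [← abs_of_pos (show (0:ℝ) < 4 * (c x) ^ 2 by positivity), ← abs_mul, e1]
    have htri : |c'' x * (2 * c x) - 3 * (c' x) ^ 2| ≤ (γ x) ^ 2 * (2 * c x) + 3 * (γ x) ^ 2 := by
      calc |c'' x * (2 * c x) - 3 * (c' x) ^ 2| ≤ |c'' x * (2 * c x)| + |3 * (c' x) ^ 2| :=
            abs_sub _ _
        _ ≤ (γ x) ^ 2 * (2 * c x) + 3 * (γ x) ^ 2 := by
            have h1 := (hder x hx.le).2
            have h2 : (c' x) ^ 2 ≤ (γ x) ^ 2 := by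
              have h := (hder x hx.le).1
              nlinarith only [abs_nonneg (c' x), sq_abs (c' x), h]
            have e2 : |c'' x * (2 * c x)| = |c'' x| * (2 * c x) := by
              rw [abs_mul, abs_of_pos (show (0:ℝ) < 2 * c x by linarith)]
            have e3 : |3 * (c' x) ^ 2| = 3 * (c' x) ^ 2 := by
              rw [abs_of_nonneg (by positivity)]
            rw [e2, e3]
            nlinarith only [abs_nonneg (c'' x), h1, h2, hcx]
    have hP1 : |db x - bb x ^ 2| * (4 * Λ1 ^ 2) ≤ (2 * Λ1 + 3) * (γ x) ^ 2 := by
      have k1 : |db x - bb x ^ 2| * (4 * (c x) ^ 2) ≤ (γ x) ^ 2 * (2 * c x) + 3 * (γ x) ^ 2 := by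
        rw [habs1]; exact htri
      have k2 : Λ1 ^ 2 * ((γ x) ^ 2 * (2 * c x) + 3 * (γ x) ^ 2)
          ≤ ((2 * Λ1 + 3) * (γ x) ^ 2) * (c x) ^ 2 := by
        nlinarith only [mul_nonneg (mul_nonneg (sq_nonneg (γ x))
            (by linarith only [hcΛ] : (0:ℝ) ≤ c x - Λ1)) hcx.le,
          mul_nonneg (mul_nonneg (sq_nonneg (γ x)) (by linarith only [hcΛ] : (0:ℝ) ≤ c x - Λ1))
            (by linarith only [hcΛ, hΛ1] : (0:ℝ) ≤ c x + Λ1), hΛ1.le, sq_nonneg (γ x)]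
      have k3 : (|db x - bb x ^ 2| * (4 * Λ1 ^ 2)) * (c x) ^ 2
          ≤ ((2 * Λ1 + 3) * (γ x) ^ 2) * (c x) ^ 2 := by
        calc (|db x - bb x ^ 2| * (4 * Λ1 ^ 2)) * (c x) ^ 2
            = Λ1 ^ 2 * (|db x - bb x ^ 2| * (4 * (c x) ^ 2)) := by ring
          _ ≤ Λ1 ^ 2 * ((γ x) ^ 2 * (2 * c x) + 3 * (γ x) ^ 2) :=
              mul_le_mul_of_nonneg_left k1 (sq_nonneg Λ1)
          _ ≤ ((2 * Λ1 + 3) * (γ x) ^ 2) * (c x) ^ 2 := k2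
      exact le_of_mul_le_mul_right k3 (by positivity)
    have hP2 := huu'F x hx.le
    have hFle : F x ≤ 2 * Ft x := (hFtF x hx.le hγx).1
    have hFtnn : 0 ≤ Ft x := hFt_nonneg x hx.le hγx
    have hkey : |db x - bb x ^ 2| * |u x * u' x| * lam ≤ B * (γ x) ^ 2 * Ft x := by
      have hBfull : B * (γ x) ^ 2 * Ft x * (8 * Λ1 ^ 2 * sl)
          = 2 * ((2 * Λ1 + 3) * (γ x) ^ 2) * Ft x := by
        rw [hB_def]
        field_simp
        ring
      have hA12 : (|db x - bb x ^ 2| * (4 * Λ1 ^ 2)) * (2 * lam * sl * |u x * u' x|)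
          ≤ ((2 * Λ1 + 3) * (γ x) ^ 2) * F x :=
        mul_le_mul hP1 hP2 (by positivity) (by positivity)
      have hγF : ((2 * Λ1 + 3) * (γ x) ^ 2) * F x ≤ ((2 * Λ1 + 3) * (γ x) ^ 2) * (2 * Ft x) :=
        mul_le_mul_of_nonneg_left hFle (by positivity)
      have h8 : (0:ℝ) < 8 * Λ1 ^ 2 * sl := by positivity
      have h9 : (|db x - bb x ^ 2| * |u x * u' x| * lam) * (8 * Λ1 ^ 2 * sl)
          ≤ (B * (γ x) ^ 2 * Ft x) * (8 * Λ1 ^ 2 * sl) := by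
        calc (|db x - bb x ^ 2| * |u x * u' x| * lam) * (8 * Λ1 ^ 2 * sl)
            = (|db x - bb x ^ 2| * (4 * Λ1 ^ 2)) * (2 * lam * sl * |u x * u' x|) := by ring
          _ ≤ ((2 * Λ1 + 3) * (γ x) ^ 2) * F x := hA12
          _ ≤ ((2 * Λ1 + 3) * (γ x) ^ 2) * (2 * Ft x) := hγF
          _ = 2 * ((2 * Λ1 + 3) * (γ x) ^ 2) * Ft x := by ring
          _ = B * (γ x) ^ 2 * Ft x * (8 * Λ1 ^ 2 * sl) := hBfull.symm
      exact le_of_mul_le_mul_right h9 h8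
    have hfin : -(B / lam * q2 x * Ft x) ≤ (db x - bb x ^ 2) * (u x * u' x) := by
      rw [hγx2]
      have h5 : -(|db x - bb x ^ 2| * |u x * u' x|) ≤ (db x - bb x ^ 2) * (u x * u' x) := by
        rw [← abs_mul]; exact neg_abs_le _
      have h6 : B / lam * (γ x) ^ 2 * Ft x = B * (γ x) ^ 2 * Ft x / lam := by ring
      have h7 : |db x - bb x ^ 2| * |u x * u' x| ≤ B * (γ x) ^ 2 * Ft x / lam := by
        rw [le_div_iff₀ hlam]
        exact hkey
      calc -(B / lam * (γ x) ^ 2 * Ft x) = -(B * (γ x) ^ 2 * Ft x / lam) := by ring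
        _ ≤ -(|db x - bb x ^ 2| * |u x * u' x|) := by linarith only [h7]
        _ ≤ (db x - bb x ^ 2) * (u x * u' x) := h5
    calc (bb x - B / lam * q2 x) * Ft x
        = bb x * Ft x - B / lam * q2 x * Ft x := by ring
      _ ≤ bb x * Ft x + (db x - bb x ^ 2) * (u x * u' x) := by linarith only [hfin]
      _ = lam ^ 2 * c' x * (u x) ^ 2 + db x * (u x * u' x)
          + bb x * ((u' x) ^ 2 - lam ^ 2 * c x * (u x) ^ 2) := by linarith only [hid]
  -- continuity facts for the hyperbolic energy
  have h2cne : ∀ x ∈ Ici t0, (2 : ℝ) * c x ≠ 0 := fun x hx => ne_of_gt (by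
    have := hcpos x hx; linarith)
  have hbb_cont : ContinuousOn bb (Ici t0) := by
    simp only [hbb_def]
    exact hc'_cont.div (continuousOn_const.mul hc_cont) h2cne
  have hF_cont : ContinuousOn F (Ici t0) := by
    simp only [hF_def]
    exact (hu'_cont.pow 2).add ((continuousOn_const.mul hc_cont).mul (hu_cont.pow 2))
  have hFt_cont : ContinuousOn Ft (Ici t0) := by
    simp only [hFt_def]
    exact hF_cont.add (hbb_cont.mul (hu_cont.mul hu'_cont))
  have hGqt0 : Gq t0 = 0 := intervalIntegral.integral_same
  -- the hyperbolic estimate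
  have lemH : ∀ s, s ∈ Icc t0 t → (∀ σ ∈ Icc t0 s, γ σ ≤ κ * lam) →
      E t0 * (Λ1 / (3 * Λ2)) * Real.exp (-(B / lam * Gq s)) ≤ E s := by
    intro s hs hγs
    have hst0 : t0 ≤ s := hs.1
    have hsmem : s ∈ Ici t0 := hst0
    have hsub : Icc t0 s ⊆ Ici t0 := fun x hx => hx.1
    have hcs := hcpos s hsmem
    have hct0 := hcpos t0 (le_refl t0)
    set PH : ℝ → ℝ := fun τ => Real.log (c τ) / 2 - B / lam * Gq τ with hPH_def
    have hPH_cont : ContinuousOn PH (Icc t0 s) := by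
      simp only [hPH_def]
      exact (((hc_cont.mono hsub).log (fun x hx => ne_of_gt (hcpos x (hsub hx)))).div_const 2).sub
        (continuous_const.mul hGq_cont).continuousOn
    have hPH_deriv : ∀ x, t0 < x → HasDerivAt PH (bb x - B / lam * q2 x) x := by
      intro x hx
      have hN := hIci_nhds x hx
      have hcx : HasDerivAt c (c' x) x := (hc1 x hx.le).hasDerivAt hN
      have hcxpos := hcpos x hx.le
      have hlog : HasDerivAt (fun τ => Real.log (c τ)) ((c x)⁻¹ * c' x) x :=
        (Real.hasDerivAt_log (ne_of_gt hcxpos)).comp x hcx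
      have h := (hlog.div_const 2).sub ((hGq_deriv x).const_mul (B / lam))
      refine HasDerivAt.congr_deriv (f := PH) h ?_
      show (c x)⁻¹ * c' x / 2 - B / lam * q2 x = c' x / (2 * c x) - B / lam * q2 x
      ring
    have hgron := aux_gron t0 s hst0 Ft
        (fun x => lam ^ 2 * c' x * (u x) ^ 2 + db x * (u x * u' x)
          + bb x * ((u' x) ^ 2 - lam ^ 2 * c x * (u x) ^ 2))
        PH (fun x => bb x - B / lam * q2 x)
        (hFt_cont.mono hsub) hPH_cont
        (fun x hx => hFt_deriv x (lt_of_le_of_lt (le_refl t0) hx.1))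
        (fun x hx => hPH_deriv x hx.1)
        (fun x hx => hrate x hx.1 (hγs x ⟨hx.1.le, hx.2.le⟩))
    -- unfold the exponentials
    have hsqcs : (0:ℝ) < Real.sqrt (c s) := Real.sqrt_pos.2 hcs
    have hsqct0 : (0:ℝ) < Real.sqrt (c t0) := Real.sqrt_pos.2 hct0
    have hexp : Real.exp (PH s - PH t0)
        = Real.sqrt (c s) / Real.sqrt (c t0) * Real.exp (-(B / lam * Gq s)) := by
      have h1 : PH s - PH t0
          = Real.log (Real.sqrt (c s)) - Real.log (Real.sqrt (c t0)) + -(B / lam * Gq s) := by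
        simp only [hPH_def]
        rw [Real.log_sqrt hcs.le, Real.log_sqrt hct0.le, hGqt0]
        ring
      rw [h1, Real.exp_add, Real.exp_sub, Real.exp_log hsqcs, Real.exp_log hsqct0]
    have hFts : Ft t0 * (Real.sqrt (c s) / Real.sqrt (c t0) * Real.exp (-(B / lam * Gq s)))
        ≤ Ft s := by
      have h2 : Ft t0 * Real.exp (-PH t0) * Real.exp (PH s)
          ≤ Ft s * Real.exp (-PH s) * Real.exp (PH s) :=
        mul_le_mul_of_nonneg_right hgron (Real.exp_nonneg _)
      have h3 : Ft s * Real.exp (-PH s) * Real.exp (PH s) = Ft s := by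
        rw [mul_assoc, ← Real.exp_add, neg_add_cancel, Real.exp_zero, mul_one]
      have h4 : Ft t0 * Real.exp (-PH t0) * Real.exp (PH s)
          = Ft t0 * Real.exp (PH s - PH t0) := by
        rw [mul_assoc, ← Real.exp_add]
        ring_nf
      rw [h3, h4, hexp] at h2
      exact h2
    -- conversion constants
    set θs := Real.sqrt (Λ1 * cinf / (Λ2 * c s)) with hθs_def
    set θ0 := Real.sqrt (Λ1 * c t0 / (Λ2 * cinf)) with hθ0_def
    have hθs_nonneg : 0 ≤ θs := Real.sqrt_nonneg _
    have hθ0_nonneg : 0 ≤ θ0 := Real.sqrt_nonneg _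
    have hθs_sq : θs ^ 2 = Λ1 * cinf / (Λ2 * c s) := Real.sq_sqrt (by positivity)
    have hθ0_sq : θ0 ^ 2 = Λ1 * c t0 / (Λ2 * cinf) := Real.sq_sqrt (by positivity)
    have hcsΛ := hhyp s hsmem
    have hct0Λ := hhyp t0 (le_refl t0)
    have hθs_le1 : θs ≤ 1 := by
      have h : Λ1 * cinf / (Λ2 * c s) ≤ 1 := by
        rw [div_le_one (by positivity)]
        nlinarith only [hci2, hcsΛ.1, hΛ1, hΛ12, hcipos]
      calc θs ≤ Real.sqrt 1 := Real.sqrt_le_sqrt h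
        _ = 1 := Real.sqrt_one
    have hθ0_le1 : θ0 ≤ 1 := by
      have h : Λ1 * c t0 / (Λ2 * cinf) ≤ 1 := by
        rw [div_le_one (by positivity)]
        nlinarith only [hct0Λ.2, hci1, hΛ1, hΛ12, hct0]
      calc θ0 ≤ Real.sqrt 1 := Real.sqrt_le_sqrt h
        _ = 1 := Real.sqrt_one
    have hθsc : θs * c s ≤ cinf := by
      apply aux_sq_le _ _ (mul_nonneg hθs_nonneg hcs.le) hcipos.le
      rw [mul_pow, hθs_sq]
      rw [div_mul_eq_mul_div, div_le_iff₀ (by positivity)]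
      have k : Λ1 * c s ≤ cinf * Λ2 := mul_le_mul hci1 hcsΛ.2 hcs.le hcipos.le
      nlinarith only [k, mul_pos hcipos hcs, hcs, hcipos]
    have hθ0c : θ0 * cinf ≤ c t0 := by
      apply aux_sq_le _ _ (mul_nonneg hθ0_nonneg hcipos.le) hct0.le
      rw [mul_pow, hθ0_sq]
      rw [div_mul_eq_mul_div, div_le_iff₀ (by positivity)]
      have k : Λ1 * cinf ≤ c t0 * Λ2 := mul_le_mul hct0Λ.1 hci2 hcipos.le hct0.le
      nlinarith only [k, mul_pos hct0 hcipos, hct0, hcipos]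
    have hconv1 : θs * F s ≤ sc * E s := by
      rw [hEmul]
      simp only [hF_def]
      nlinarith only [mul_nonneg (sub_nonneg.2 hθs_le1) (sq_nonneg (u' s)),
        mul_nonneg (mul_nonneg (sq_nonneg lam) (sub_nonneg.2 hθsc)) (sq_nonneg (u s))]
    have hconv4 : θ0 * (sc * E t0) ≤ F t0 := by
      rw [hEmul]
      simp only [hF_def]
      nlinarith only [mul_nonneg (sub_nonneg.2 hθ0_le1) (sq_nonneg (u' t0)),
        mul_nonneg (mul_nonneg (sq_nonneg lam) (sub_nonneg.2 hθ0c)) (sq_nonneg (u t0))]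
    have hconv2 : 2 * Ft s ≤ 3 * F s := (hFtF s hst0 (hγs s ⟨hst0, le_refl s⟩)).2
    have hconv3 : F t0 ≤ 2 * Ft t0 := (hFtF t0 (le_refl t0) (hγs t0 ⟨le_refl t0, hst0⟩)).1
    -- the product of conversion constants
    have hθprod : Λ1 / Λ2 ≤ θs * θ0 * (Real.sqrt (c s) / Real.sqrt (c t0)) := by
      have hnn : 0 ≤ θs * θ0 * (Real.sqrt (c s) / Real.sqrt (c t0)) := by positivity
      have hsq : (θs * θ0 * (Real.sqrt (c s) / Real.sqrt (c t0))) ^ 2 = (Λ1 / Λ2) ^ 2 := by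
        rw [mul_pow, mul_pow, div_pow, hθs_sq, hθ0_sq,
          Real.sq_sqrt hcs.le, Real.sq_sqrt hct0.le]
        field_simp
      have heq : θs * θ0 * (Real.sqrt (c s) / Real.sqrt (c t0)) = Λ1 / Λ2 := by
        calc θs * θ0 * (Real.sqrt (c s) / Real.sqrt (c t0))
            = Real.sqrt ((θs * θ0 * (Real.sqrt (c s) / Real.sqrt (c t0))) ^ 2) :=
              (Real.sqrt_sq hnn).symm
          _ = Real.sqrt ((Λ1 / Λ2) ^ 2) := by rw [hsq]
          _ = Λ1 / Λ2 := Real.sqrt_sq (by positivity)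
      exact le_of_eq heq.symm
    -- assemble the chain
    set e1 := Real.exp (-(B / lam * Gq s)) with he1_def
    set r1 := Real.sqrt (c s) / Real.sqrt (c t0) with hr1_def
    have hr1nn : 0 ≤ r1 := by positivity
    have he1nn : 0 ≤ e1 := (Real.exp_pos _).le
    have s1 : θ0 * (sc * E t0) * (r1 * e1) ≤ F t0 * (r1 * e1) :=
      mul_le_mul_of_nonneg_right hconv4 (mul_nonneg hr1nn he1nn)
    have s2 : F t0 * (r1 * e1) ≤ 2 * Ft t0 * (r1 * e1) :=
      mul_le_mul_of_nonneg_right hconv3 (mul_nonneg hr1nn he1nn)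
    have s3 : Ft t0 * (r1 * e1) ≤ Ft s := hFts
    have s6 : θs * (θ0 * (sc * E t0) * (r1 * e1)) ≤ θs * (2 * Ft s) := by
      apply mul_le_mul_of_nonneg_left _ hθs_nonneg
      calc θ0 * (sc * E t0) * (r1 * e1) ≤ 2 * Ft t0 * (r1 * e1) := le_trans s1 s2
        _ = 2 * (Ft t0 * (r1 * e1)) := by ring
        _ ≤ 2 * Ft s := by linarith only [s3]
    have s7 : θs * (2 * Ft s) ≤ 3 * (sc * E s) := by
      have := mul_le_mul_of_nonneg_left hconv2 hθs_nonneg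
      nlinarith only [this, hconv1]
    have s8 : (Λ1 / Λ2) * ((sc * E t0) * e1) ≤ (θs * θ0 * r1) * ((sc * E t0) * e1) :=
      mul_le_mul_of_nonneg_right hθprod
        (mul_nonneg (mul_nonneg hsc.le (hE_nonneg t0)) he1nn)
    have key : Λ1 / Λ2 * (sc * E t0) * e1 ≤ 3 * (sc * E s) := by
      nlinarith only [s6, s7, s8]
    -- divide by 3 * sc
    have h3sc : (0:ℝ) < 3 * sc := by linarith only [hsc]
    have hfin2 : 3 * sc * (E t0 * (Λ1 / (3 * Λ2)) * e1) ≤ 3 * sc * E s := by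
      have hlhs : 3 * sc * (E t0 * (Λ1 / (3 * Λ2)) * e1) = Λ1 / Λ2 * (sc * E t0) * e1 := by
        field_simp
      have hrhs : (3:ℝ) * sc * E s = 3 * (sc * E s) := by ring
      rw [hlhs, hrhs]
      exact key
    exact le_of_mul_le_mul_left hfin2 h3sc
  -- facts about M = Mfun
  set M := Mfun t0 γ S t with hM_def
  have hGq_mono : ∀ p q, t0 ≤ p → p ≤ q → Gq p ≤ Gq q := by
    intro p q hp hpq
    have h1 := hGq_nonneg p q hp hpq
    have h2 := hGq_split p q
    linarith only [h1, h2]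
  have hM_ub : ∀ τ, τ ∈ Icc t0 t → Gq τ * S τ ≤ M := by
    intro τ hτ
    have hbdd : BddAbove ((fun τ => Gfun t0 γ τ * S τ) '' Icc t0 t) := by
      refine ⟨Gq t * S t0, ?_⟩
      rintro y ⟨σ, hσ, rfl⟩
      show Gfun t0 γ σ * S σ ≤ Gq t * S t0
      rw [hGq_eq σ hσ.1]
      exact mul_le_mul (hGq_mono σ t hσ.1 hσ.2)
        (hS_anti (self_mem_Ici) hσ.1 hσ.1) (hS0 σ hσ.1) (hGq0 t ht)
    calc Gq τ * S τ = Gfun t0 γ τ * S τ := by rw [hGq_eq τ hτ.1]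
      _ ≤ M := le_csSup hbdd ⟨τ, hτ, rfl⟩
  have hM0 : 0 ≤ M := by
    have h := hM_ub t0 ⟨le_refl t0, ht⟩
    rw [hGqt0, zero_mul] at h
    exact h
  have hsqM : 0 ≤ Real.sqrt M := Real.sqrt_nonneg M
  set h1c := 2 * Real.sqrt (Λ2 - Λ1) / Λ1 ^ 2 with hh1c_def
  set h2c := Real.sqrt (2 * Λ1 + 3) / Λ1 ^ ((3 : ℝ) / 2) with hh2c_def
  have hrpow : Λ1 ^ ((3 : ℝ) / 2) = Λ1 * sl := by
    rw [show ((3 : ℝ) / 2) = 1 + 1 / 2 by norm_num, Real.rpow_add hΛ1, Real.rpow_one,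
      ← Real.sqrt_eq_rpow]
  have hh1c_nonneg : 0 ≤ h1c := by rw [hh1c_def]; positivity
  have hh2c_nonneg : 0 ≤ h2c := by
    rw [hh2c_def, hrpow]; positivity
  have hb2sq : (h2c / 2 * Real.sqrt M) ^ 2 = B / sl * M := by
    have h1 : (Real.sqrt (2 * Λ1 + 3)) ^ 2 = 2 * Λ1 + 3 :=
      Real.sq_sqrt (by linarith only [hΛ1])
    have h2 : (Real.sqrt M) ^ 2 = M := Real.sq_sqrt hM0
    have h3 : (h2c / 2 * Real.sqrt M) ^ 2
        = (Real.sqrt (2 * Λ1 + 3)) ^ 2 * (Real.sqrt M) ^ 2 / ((Λ1 * sl) ^ 2 * 4) := by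
      rw [hh2c_def, hrpow]
      ring
    rw [h3, h1, h2, hB_def, div_div, div_mul_eq_mul_div]
    rw [show (Λ1 * sl) ^ 2 * 4 = 4 * Λ1 ^ 2 * sl * sl by ring]
  have hXHbound : ∀ s, s ∈ Icc t0 t → B * Gq s ≤ lam ^ 2 / sl * S s →
      B / lam * Gq s ≤ h2c / 2 * Real.sqrt M := by
    intro s hsm hcr
    have hGs := hGq0 s hsm.1
    have hSs := hS0 s hsm.1
    have hMs := hM_ub s hsm
    apply aux_sq_le _ _ (by positivity) (by positivity)
    rw [hb2sq]
    have h3 : (B / lam * Gq s) ^ 2 = (B * Gq s) * (B * Gq s) / lam ^ 2 := by ring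
    rw [h3, div_le_iff₀ (by positivity : (0:ℝ) < lam ^ 2)]
    calc (B * Gq s) * (B * Gq s) ≤ (B * Gq s) * (lam ^ 2 / sl * S s) :=
          mul_le_mul_of_nonneg_left hcr (mul_nonneg hBpos.le hGs)
      _ = B / sl * (Gq s * S s) * lam ^ 2 := by ring
      _ ≤ B / sl * M * lam ^ 2 := by
          have := mul_le_mul_of_nonneg_left hMs (by positivity : (0:ℝ) ≤ B / sl)
          nlinarith only [this, sq_nonneg lam, mul_pos hlam hlam]
  have hXKbound : ∀ s, s ∈ Icc t0 t → B * Gq s = lam ^ 2 / sl * S s →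
      (∫ σ in s..t, q1 σ) ≤ S s →
      lam / sl * (∫ σ in s..t, q1 σ) ≤ h2c / 2 * Real.sqrt M := by
    intro s hsm heq hIS
    have hSs := hS0 s hsm.1
    have hI0 : 0 ≤ ∫ σ in s..t, q1 σ :=
      intervalIntegral.integral_nonneg hsm.2 (fun x _ => hq1_nonneg x)
    have hMs := hM_ub s hsm
    apply aux_sq_le _ _ (by positivity) (by positivity)
    rw [hb2sq]
    have heq' : B * Gq s * sl = lam ^ 2 * S s := by
      rw [heq]; field_simp
    have e2 : (lam / sl * S s) ^ 2 * sl ^ 2 = B / sl * (Gq s * S s) * sl ^ 2 := by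
      have l : (lam / sl * S s) ^ 2 * sl ^ 2 = lam ^ 2 * (S s) ^ 2 := by
        field_simp
      have r : B / sl * (Gq s * S s) * sl ^ 2 = (B * Gq s * sl) * S s := by
        field_simp
      rw [l, r, heq']
      ring
    have e : (lam / sl * S s) ^ 2 = B / sl * (Gq s * S s) :=
      mul_right_cancel₀ (pow_ne_zero 2 hsl.ne') e2
    have h1 : (lam / sl * (∫ σ in s..t, q1 σ)) ^ 2 ≤ (lam / sl * S s) ^ 2 := by
      have hls : 0 ≤ lam / sl := by positivity
      nlinarith only [mul_le_mul_of_nonneg_left hIS hls, mul_nonneg hls hI0,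
        mul_nonneg hls hSs]
    rw [e] at h1
    calc (lam / sl * (∫ σ in s..t, q1 σ)) ^ 2 ≤ B / sl * (Gq s * S s) := h1
      _ ≤ B / sl * M := mul_le_mul_of_nonneg_left hMs (by positivity)
  have lemC2 : ∀ p, p ∈ Icc t0 t → (∀ σ ∈ Icc p t, κ * lam ≤ γ σ) →
      lam / sl * (∫ σ in p..t, q1 σ) ≤ h1c / 2 * Real.sqrt M := by
    intro p hp hγge
    obtain ⟨r, hrmem, hrle, hrgt⟩ := aux_cross p t hp.2 (fun x => (Λ2 - Λ1) * (x - p)) S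
        ((continuous_const.mul (continuous_id.sub continuous_const)).continuousOn)
        (hS_cont.mono (fun x hx => le_trans hp.1 hx.1))
        (by simpa using hS0 p hp.1)
    have hrt0 : t0 ≤ r := le_trans hp.1 hrmem.1
    have hδ0 : 0 ≤ r - p := sub_nonneg.2 hrmem.1
    have hint1 : (∫ σ in p..r, q1 σ) ≤ (Λ2 - Λ1) * (r - p) := by
      have hmono : ∀ σ ∈ Icc p r, q1 σ ≤ Λ2 - Λ1 := by
        intro σ hσ
        have hσ0 : t0 ≤ σ := le_trans hp.1 hσ.1
        rw [hq1_eq σ hσ0]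
        have h := hhyp σ hσ0
        rw [abs_le]
        constructor <;> nlinarith only [h.1, h.2, hci1, hci2]
      calc (∫ σ in p..r, q1 σ) ≤ ∫ _σ in p..r, (Λ2 - Λ1) :=
            intervalIntegral.integral_mono_on hrmem.1 (hq1_cont.intervalIntegrable _ _)
              intervalIntegrable_const hmono
        _ = (Λ2 - Λ1) * (r - p) := by
            rw [intervalIntegral.integral_const, smul_eq_mul]
            ring
    have hint2 : (∫ σ in r..t, q1 σ) ≤ S r := by
      have hcongr : (∫ σ in r..t, q1 σ) = ∫ σ in r..t, |c σ - cinf| := by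
        apply intervalIntegral.integral_congr
        intro σ hσ
        rw [uIcc_of_le hrmem.2] at hσ
        exact hq1_eq σ (le_trans hrt0 hσ.1)
      rw [hcongr]
      exact hstab r hrt0 t hrmem.2
    have hsplit2 : (∫ σ in p..t, q1 σ) = (∫ σ in p..r, q1 σ) + ∫ σ in r..t, q1 σ :=
      (intervalIntegral.integral_add_adjacent_intervals (hq1_cont.intervalIntegrable _ _)
        (hq1_cont.intervalIntegrable _ _)).symm
    have hI0 : 0 ≤ ∫ σ in p..t, q1 σ :=
      intervalIntegral.integral_nonneg hp.2 (fun x _ => hq1_nonneg x)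
    have hGr : κ ^ 2 * lam ^ 2 * (r - p) ≤ Gq r := by
      have hge : ∀ σ ∈ Icc p r, κ * lam ≤ γ σ := fun σ hσ =>
        hγge σ ⟨hσ.1, le_trans hσ.2 hrmem.2⟩
      have h1 : (∫ _σ in p..r, (κ * lam) ^ 2) ≤ ∫ σ in p..r, q2 σ := by
        apply intervalIntegral.integral_mono_on hrmem.1 intervalIntegrable_const
          (hq2_cont.intervalIntegrable _ _)
        intro σ hσ
        rw [hq2_eq σ (le_trans hp.1 hσ.1)]
        have h := hge σ hσ
        nlinarith only [h, mul_pos hκpos hlam]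
      have h2 := hGq_split p r
      have h3 := hGq0 p hp.1
      have h4 : (∫ _σ in p..r, (κ * lam) ^ 2) = (κ * lam) ^ 2 * (r - p) := by
        rw [intervalIntegral.integral_const, smul_eq_mul]
        ring
      nlinarith only [h1, h2, h3, h4]
    have hMr : Gq r * S r ≤ M := hM_ub r ⟨hrt0, hrmem.2⟩
    have hκq : κ ^ 2 = 4 * Λ1 ^ 3 := by
      rw [hκ_def]
      have : (2 * Λ1 * sl) ^ 2 = 4 * Λ1 ^ 2 * sl ^ 2 := by ring
      rw [this, hsl2]
      ring
    -- in both branches: I ≤ 2 * D and 4Λ1³ lam² D² ≤ (Λ2−Λ1) M where D = (Λ2−Λ1)(r−p)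
    have hDkey : 4 * Λ1 ^ 3 * (lam ^ 2 * ((Λ2 - Λ1) * (r - p)) ^ 2) ≤ (Λ2 - Λ1) * M := by
      have hlow : (κ ^ 2 * lam ^ 2 * (r - p)) * ((Λ2 - Λ1) * (r - p)) ≤ Gq r * S r :=
        mul_le_mul hGr hrle (mul_nonneg (by linarith only [hΛ12]) hδ0) (hGq0 r hrt0)
      rw [hκq] at hlow
      have h := mul_le_mul_of_nonneg_left (le_trans hlow hMr)
        (show (0:ℝ) ≤ Λ2 - Λ1 by linarith only [hΛ12])
      nlinarith only [h]
    have hI2D : (∫ σ in p..t, q1 σ) ≤ 2 * ((Λ2 - Λ1) * (r - p)) := by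
      rcases eq_or_lt_of_le hrmem.2 with hrt | hrt
      · -- r = t : second integral vanishes
        have hz : (∫ σ in r..t, q1 σ) = 0 := by rw [hrt]; exact intervalIntegral.integral_same
        rw [hsplit2, hz, add_zero]
        nlinarith only [hint1, mul_nonneg (by linarith only [hΛ12] : (0:ℝ) ≤ Λ2 - Λ1) hδ0]
      · -- r < t : S r ≤ (Λ2−Λ1)(r−p) by the crossing
        have hSr : S r ≤ (Λ2 - Λ1) * (r - p) := by
          have hlim := aux_right_limit r t 0 hrt (fun x => (Λ2 - Λ1) * (x - p) - S x)
            (((continuous_const.mul (continuous_id.sub continuous_const)).continuousWithinAt).sub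
              ((hS_cont r hrt0).mono (Ici_subset_Ici.2 hrt0)))
            (fun x hx => by
              have h := hrgt x ⟨le_trans hrmem.1 hx.1.le, hx.2⟩ hx.1
              show (0:ℝ) ≤ (Λ2 - Λ1) * (x - p) - S x
              linarith only [h])
          have hlim' : (0:ℝ) ≤ (Λ2 - Λ1) * (r - p) - S r := hlim
          linarith only [hlim']
        rw [hsplit2]
        linarith only [hint1, hint2, hSr]
    exact aux_c2combine Λ1 Λ2 lam sl (∫ σ in p..t, q1 σ) ((Λ2 - Λ1) * (r - p)) M
      hΛ1 hΛ12 hlam hsl hsl2 hI0 (mul_nonneg (by linarith only [hΛ12]) hδ0) hM0 hI2D hDkey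
  -- choice of the splitting point and exponent bound
  have hmax1 : h1c / 2 * Real.sqrt M ≤ max h1c h2c * Real.sqrt M := by
    apply mul_le_mul_of_nonneg_right _ hsqM
    calc h1c / 2 ≤ h1c := by linarith only [hh1c_nonneg]
      _ ≤ max h1c h2c := le_max_left _ _
  have hmax2 : h2c / 2 * Real.sqrt M + h2c / 2 * Real.sqrt M ≤ max h1c h2c * Real.sqrt M := by
    have h : h2c / 2 + h2c / 2 ≤ max h1c h2c := by
      have := le_max_right h1c h2c
      linarith only [this]
    nlinarith only [mul_le_mul_of_nonneg_right h hsqM]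
  have hmax3 : h2c / 2 * Real.sqrt M + h1c / 2 * Real.sqrt M ≤ max h1c h2c * Real.sqrt M := by
    have h : h2c / 2 + h1c / 2 ≤ max h1c h2c := by
      rcases le_total h1c h2c with h | h
      · rw [max_eq_right h]; linarith only [h, hh2c_nonneg]
      · rw [max_eq_left h]; linarith only [h, hh1c_nonneg]
    nlinarith only [mul_le_mul_of_nonneg_right h hsqM]
  have hstabq : ∀ s, s ∈ Icc t0 t → (∫ σ in s..t, q1 σ) ≤ S s := by
    intro s hsm
    have hcongr : (∫ σ in s..t, q1 σ) = ∫ σ in s..t, |c σ - cinf| := by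
      apply intervalIntegral.integral_congr
      intro σ hσ
      rw [uIcc_of_le hsm.2] at hσ
      exact hq1_eq σ (le_trans hsm.1 hσ.1)
    rw [hcongr]
    exact hstab s hsm.1 t hsm.2
  have hmain : ∃ s, s ∈ Icc t0 t ∧
      (E t0 * (Λ1 / (3 * Λ2)) * Real.exp (-(B / lam * Gq s)) ≤ E s) ∧
      B / lam * Gq s + lam / sl * (∫ σ in s..t, q1 σ) ≤ max h1c h2c * Real.sqrt M := by
    by_cases hB0 : γ t0 ≤ κ * lam
    · obtain ⟨s1, hs1mem, hs1le, hs1gt⟩ := aux_cross t0 t ht γ (fun _ => κ * lam)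
        (hγ_cont.mono (fun x hx => hx.1)) continuousOn_const hB0
      have hγle : ∀ σ ∈ Icc t0 s1, γ σ ≤ κ * lam := fun σ hσ =>
        le_trans (hγ_mono hσ.1 hs1mem.1 hσ.2) hs1le
      obtain ⟨s, hsmem1, hsle, hsgt⟩ := aux_cross t0 s1 hs1mem.1 (fun τ => B * Gq τ)
        (fun τ => lam ^ 2 / sl * S τ)
        ((continuous_const.mul hGq_cont).continuousOn)
        ((continuousOn_const.mul hS_cont).mono (fun x (hx : x ∈ Icc t0 s1) => hx.1))
        (by
          show B * Gq t0 ≤ lam ^ 2 / sl * S t0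
          rw [hGqt0, mul_zero]
          have := hS0 t0 (le_refl t0)
          positivity)
      have hsmem : s ∈ Icc t0 t := ⟨hsmem1.1, le_trans hsmem1.2 hs1mem.2⟩
      have hHest := lemH s hsmem (fun σ hσ => hγle σ ⟨hσ.1, le_trans hσ.2 hsmem1.2⟩)
      have hXH : B / lam * Gq s ≤ h2c / 2 * Real.sqrt M := hXHbound s hsmem hsle
      refine ⟨s, hsmem, hHest, ?_⟩
      rcases eq_or_lt_of_le hsmem1.2 with hss1 | hss1
      · -- s = s1
        rcases eq_or_lt_of_le hsmem.2 with hst' | hst'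
        · -- s = t
          have hz : (∫ σ in s..t, q1 σ) = 0 := by
            rw [hst']; exact intervalIntegral.integral_same
          rw [hz, mul_zero, add_zero]
          calc B / lam * Gq s ≤ h2c / 2 * Real.sqrt M := hXH
            _ ≤ max h1c h2c * Real.sqrt M := by
              apply mul_le_mul_of_nonneg_right _ hsqM
              calc h2c / 2 ≤ h2c := by linarith only [hh2c_nonneg]
                _ ≤ max h1c h2c := le_max_right _ _
        · -- s = s1 < t
          have hγge : ∀ σ ∈ Icc s t, κ * lam ≤ γ σ := by
            intro σ hσ
            rcases eq_or_lt_of_le hσ.1 with h | h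
            · rw [← h]
              apply aux_right_limit s t (κ * lam) hst' γ
                ((hγ_cont s hsmem.1).mono (Ici_subset_Ici.2 hsmem.1))
              intro x hx
              exact (hs1gt x ⟨le_trans hsmem.1 hx.1.le, hx.2⟩ (hss1 ▸ hx.1)).le
            · exact (hs1gt σ ⟨le_trans hsmem.1 hσ.1, hσ.2⟩ (hss1 ▸ h)).le
          have hXK := lemC2 s hsmem hγge
          calc B / lam * Gq s + lam / sl * (∫ σ in s..t, q1 σ)
              ≤ h2c / 2 * Real.sqrt M + h1c / 2 * Real.sqrt M := add_le_add hXH hXK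
            _ ≤ max h1c h2c * Real.sqrt M := hmax3
      · -- s < s1 : crossing equality
        have heq : B * Gq s = lam ^ 2 / sl * S s := by
          apply le_antisymm hsle
          have hlim := aux_right_limit s s1 0 hss1 (fun x => B * Gq x - lam ^ 2 / sl * S x)
            (((continuous_const.mul hGq_cont).continuousWithinAt).sub
              (((continuousOn_const.mul hS_cont) s hsmem.1).mono (Ici_subset_Ici.2 hsmem.1)))
            (fun x hx => by
              have h := hsgt x ⟨le_trans hsmem1.1 hx.1.le, hx.2⟩ hx.1
              show (0:ℝ) ≤ B * Gq x - lam ^ 2 / sl * S x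
              linarith only [h])
          have hlim' : (0:ℝ) ≤ B * Gq s - lam ^ 2 / sl * S s := hlim
          linarith only [hlim']
        have hXK := hXKbound s hsmem heq (hstabq s hsmem)
        calc B / lam * Gq s + lam / sl * (∫ σ in s..t, q1 σ)
            ≤ h2c / 2 * Real.sqrt M + h2c / 2 * Real.sqrt M := add_le_add hXH hXK
          _ ≤ max h1c h2c * Real.sqrt M := hmax2
    · -- γ t0 > κ * lam
      push_neg at hB0
      refine ⟨t0, ⟨le_refl t0, ht⟩, ?_, ?_⟩
      · rw [hGqt0, mul_zero, neg_zero, Real.exp_zero, mul_one]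
        have hle1 : Λ1 / (3 * Λ2) ≤ 1 := by
          rw [div_le_one (by positivity)]
          linarith only [hΛ12, hΛ2]
        nlinarith only [hE_nonneg t0, hle1]
      · rw [hGqt0, mul_zero, zero_add]
        have hγge : ∀ σ ∈ Icc t0 t, κ * lam ≤ γ σ := fun σ hσ =>
          le_trans hB0.le (hγ_mono (self_mem_Ici) hσ.1 hσ.1)
        exact le_trans (lemC2 t0 ⟨le_refl t0, ht⟩ hγge) hmax1
  -- final assembly
  obtain ⟨s, hsmem, hHest, hExp⟩ := hmain
  have hKest := lemK s t hsmem.1 hsmem.2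
  have step1 : E t0 * (Λ1 / (3 * Λ2)) * Real.exp (-(B / lam * Gq s))
      * Real.exp (-(lam / sl * ∫ σ in s..t, q1 σ)) ≤ E t :=
    le_trans (mul_le_mul_of_nonneg_right hHest (Real.exp_nonneg _)) hKest
  have step2 : E t0 * (Λ1 / (3 * Λ2)) * Real.exp (-(max h1c h2c * Real.sqrt M)) ≤
      E t0 * (Λ1 / (3 * Λ2))
        * (Real.exp (-(B / lam * Gq s)) * Real.exp (-(lam / sl * ∫ σ in s..t, q1 σ))) := by
    apply mul_le_mul_of_nonneg_left _ (mul_nonneg (hE_nonneg t0) (by positivity))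
    rw [← Real.exp_add]
    apply Real.exp_le_exp.2
    linarith only [hExp]
  have hfactor : kowE cinf lam u u' t0 * (3 * Λ2 / Λ1)⁻¹ = E t0 * (Λ1 / (3 * Λ2)) := by
    rw [inv_div]
  rw [ge_iff_le, hfactor]
  calc E t0 * (Λ1 / (3 * Λ2)) * Real.exp (-(max h1c h2c * Real.sqrt M))
      ≤ E t0 * (Λ1 / (3 * Λ2))
        * (Real.exp (-(B / lam * Gq s)) * Real.exp (-(lam / sl * ∫ σ in s..t, q1 σ))) := step2
    _ = E t0 * (Λ1 / (3 * Λ2)) * Real.exp (-(B / lam * Gq s))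
        * Real.exp (-(lam / sl * ∫ σ in s..t, q1 σ)) := by ring
    _ ≤ E t := step1
end

section
/- Let t0 > 0, let α < 0 and β be real numbers with 2β < 1 + α, and set γ(t) = t^{−β} and S(t) = t^{α}. Then there exist constants H6 and H7, depending only on t0, Λ1, Λ2, α, β, such that for every coefficient c in the class PS(t0,Λ1,Λ2,S,γ) with stabilization constant c∞, every λ > 0, and every solution u of u''(t) + λ² c(t) u(t) = 0 on [t0,∞), the Kowaleskian energy E(t) = u'(t)²/√c∞ + λ²√c∞·u(t)² satisfies E(t) ≤ E(t0)·H6·exp( H7·t^{(α+1)/2 − β} ) for all t ≥ t0. -/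
open Real Set Filter MeasureTheory

lemma my_gronwall_s6 {f f' φ Φ : ℝ → ℝ} {s b : ℝ} (hsb : s ≤ b)
    (hfc : ContinuousOn f (Icc s b)) (hΦc : ContinuousOn Φ (Icc s b))
    (hf : ∀ t ∈ Ioo s b, HasDerivAt f (f' t) t)
    (hΦ : ∀ t ∈ Ioo s b, HasDerivAt Φ (φ t) t)
    (hle : ∀ t ∈ Ioo s b, f' t ≤ φ t * f t) :
    f b ≤ f s * Real.exp (Φ b - Φ s) := by
  have hganti : AntitoneOn (fun t => f t * Real.exp (-Φ t)) (Icc s b) := by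
    apply antitoneOn_of_hasDerivWithinAt_nonpos (convex_Icc s b)
      (f' := fun t => f' t * Real.exp (-Φ t) + f t * (Real.exp (-Φ t) * (-φ t)))
    · exact hfc.mul (Real.continuous_exp.comp_continuousOn hΦc.neg)
    · rw [interior_Icc]
      intro x hx
      exact ((hf x hx).mul ((hΦ x hx).neg.exp)).hasDerivWithinAt
    · rw [interior_Icc]
      intro x hx
      have h1 := hle x hx
      have h2 := Real.exp_pos (-Φ x)
      nlinarith [h2.le]
  have hkey := hganti (Set.left_mem_Icc.mpr hsb) (Set.right_mem_Icc.mpr hsb) hsb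
  simp only at hkey
  have h3 : 0 < Real.exp (Φ b) := Real.exp_pos _
  have := mul_le_mul_of_nonneg_right hkey h3.le
  calc f b = f b * Real.exp (-Φ b) * Real.exp (Φ b) := by
        rw [mul_assoc, ← Real.exp_add]; simp
    _ ≤ f s * Real.exp (-Φ s) * Real.exp (Φ b) := this
    _ = f s * Real.exp (Φ b - Φ s) := by rw [mul_assoc, ← Real.exp_add]; ring_nf

lemma my_amgm {l p a b : ℝ} (hl : 0 ≤ l) (hp : 0 < p) :
    2*l*|a*b| ≤ b^2/p + l^2*p*a^2 := by
  have key : 2*l*(abs (a*b))*p ≤ b^2 + l^2*p^2*a^2 := by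
    have h1 := sq_nonneg (l*p*(abs a) - abs b)
    have h2 : abs (a*b) = (abs a)*(abs b) := abs_mul a b
    rw [h2, ← sq_abs a, ← sq_abs b]
    nlinarith [h1]
  calc 2*l*(abs (a*b)) = (2*l*(abs (a*b))*p)/p := by field_simp
    _ ≤ (b^2 + l^2*p^2*a^2)/p := (div_le_div_iff_of_pos_right hp).mpr key
    _ = b^2/p + l^2*p*a^2 := by field_simp

lemma hasDerivAt_kowE' {c u u' : ℝ → ℝ} {cinf lam x : ℝ} (hcinf : 0 < cinf)
    (hux : HasDerivAt u (u' x) x)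
    (hu'x : HasDerivAt u' (-(lam^2*c x*u x)) x) :
    HasDerivAt (fun t => (u' t)^2/Real.sqrt cinf + lam^2*Real.sqrt cinf*(u t)^2)
      (lam^2*(cinf - c x)/Real.sqrt cinf*(2*(u x*u' x))) x := by
  have hs : 0 < Real.sqrt cinf := Real.sqrt_pos.mpr hcinf
  have h2 : Real.sqrt cinf ^ 2 = cinf := Real.sq_sqrt hcinf.le
  have hA := (hu'x.pow 2).div_const (Real.sqrt cinf)
  have hB := (hux.pow 2).const_mul (lam^2*Real.sqrt cinf)
  convert hA.add hB using 1
  · rfl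
  · rfl
  · rfl
  have hs' : Real.sqrt cinf ≠ 0 := ne_of_gt hs
  field_simp
  linear_combination (-2*lam^2*u x*u' x) * h2

lemma claimA {t0 Λ1 : ℝ} {c c' u u' : ℝ → ℝ} {cinf lam : ℝ}
    (hΛ1 : 0 < Λ1)
    (hc : ∀ t ∈ Ici t0, HasDerivWithinAt c (c' t) (Ici t0) t)
    (hcinf1 : Λ1 ≤ cinf)
    (hlam : 0 < lam)
    (hu : ∀ t ∈ Ici t0, HasDerivWithinAt u (u' t) (Ici t0) t)
    (hu' : ∀ t ∈ Ici t0, HasDerivWithinAt u' (-(lam^2*c t*u t)) (Ici t0) t)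
    {s b : ℝ} (hs : t0 ≤ s) (hsb : s ≤ b) :
    kowE cinf lam u u' b ≤ kowE cinf lam u u' s *
      Real.exp (lam/Real.sqrt Λ1 * ∫ τ in s..b, |c τ - cinf|) := by
  have hcinfpos : 0 < cinf := lt_of_lt_of_le hΛ1 hcinf1
  have hsΛ : 0 < Real.sqrt Λ1 := Real.sqrt_pos.mpr hΛ1
  have hsc : 0 < Real.sqrt cinf := Real.sqrt_pos.mpr hcinfpos
  have hsΛc : Real.sqrt Λ1 ≤ Real.sqrt cinf := Real.sqrt_le_sqrt hcinf1
  have hsub : Icc s b ⊆ Ici t0 := fun x hx => le_trans hs hx.1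
  have hcC : ContinuousOn c (Ici t0) := fun t ht => (hc t ht).continuousWithinAt
  have huC : ContinuousOn u (Ici t0) := fun t ht => (hu t ht).continuousWithinAt
  have hu'C : ContinuousOn u' (Ici t0) := fun t ht => (hu' t ht).continuousWithinAt
  set g : ℝ → ℝ := fun τ => |c τ - cinf| with hgdef
  have hgC : ContinuousOn g (Icc s b) := ((hcC.mono hsub).sub continuousOn_const).abs
  set Φ : ℝ → ℝ := fun x => lam/Real.sqrt Λ1 * ∫ τ in s..x, g τ with hΦdef
  have hEC : ContinuousOn (kowE cinf lam u u') (Icc s b) := by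
    unfold kowE
    exact (((hu'C.mono hsub).pow 2).div_const _).add
      (continuousOn_const.mul ((huC.mono hsub).pow 2))
  have hΦC : ContinuousOn Φ (Icc s b) := by
    apply continuousOn_const.mul
    have hint : IntegrableOn g (uIcc s b) := by
      rw [uIcc_of_le hsb]; exact hgC.integrableOn_Icc
    exact (intervalIntegral.continuousOn_primitive_interval hint).mono (by rw [uIcc_of_le hsb])
  have hEd : ∀ x ∈ Ioo s b, HasDerivAt (kowE cinf lam u u')
      (lam^2*(cinf - c x)/Real.sqrt cinf*(2*(u x*u' x))) x := by
    intro x hx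
    have hx0 : t0 < x := lt_of_le_of_lt hs hx.1
    have hxm : x ∈ Ici t0 := le_of_lt hx0
    have hnb : Ici t0 ∈ nhds x := Ici_mem_nhds hx0
    exact hasDerivAt_kowE' hcinfpos ((hu x hxm).hasDerivAt hnb) ((hu' x hxm).hasDerivAt hnb)
  have hΦd : ∀ x ∈ Ioo s b, HasDerivAt Φ (lam/Real.sqrt Λ1 * g x) x := by
    intro x hx
    have hx0 : t0 < x := lt_of_le_of_lt hs hx.1
    have hgCA : ContinuousAt g x := by
      have : ContinuousAt c x := (hcC x (le_of_lt hx0)).continuousAt (Ici_mem_nhds hx0)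
      exact (this.sub continuousAt_const).abs
    have hint : IntervalIntegrable g volume s x :=
      (hgC.mono (Icc_subset_Icc le_rfl hx.2.le)).intervalIntegrable_of_Icc hx.1.le
    have hmeas : StronglyMeasurableAtFilter g (nhds x) := by
      refine ContinuousOn.stronglyMeasurableAtFilter isOpen_Ioi ?_ x hx0
      exact ((hcC.mono Ioi_subset_Ici_self).sub continuousOn_const).abs
    exact (intervalIntegral.integral_hasDerivAt_right hint hmeas hgCA).const_mul _
  have hle : ∀ x ∈ Ioo s b,
      lam^2*(cinf - c x)/Real.sqrt cinf*(2*(u x*u' x)) ≤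
        (lam/Real.sqrt Λ1 * g x) * kowE cinf lam u u' x := by
    intro x hx
    have hAM : 2*lam*|u x*u' x| ≤ (u' x)^2/Real.sqrt cinf + lam^2*Real.sqrt cinf*(u x)^2 :=
      my_amgm hlam.le hsc
    have h1 : (cinf - c x)*(2*(u x*u' x)) ≤ g x*(2*|u x*u' x|) := by
      calc (cinf - c x)*(2*(u x*u' x)) ≤ |(cinf - c x)*(2*(u x*u' x))| := le_abs_self _
        _ = g x*(2*|u x*u' x|) := by
            rw [abs_mul, abs_sub_comm, abs_mul, abs_two]
    have hE0 : 0 ≤ kowE cinf lam u u' x := by unfold kowE; positivity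
    have hg0 : 0 ≤ g x := abs_nonneg _
    calc lam^2*(cinf - c x)/Real.sqrt cinf*(2*(u x*u' x))
        = (lam^2/Real.sqrt cinf)*((cinf - c x)*(2*(u x*u' x))) := by ring
      _ ≤ (lam^2/Real.sqrt cinf)*(g x*(2*|u x*u' x|)) :=
          mul_le_mul_of_nonneg_left h1 (by positivity)
      _ = (lam*g x/Real.sqrt cinf)*(2*lam*|u x*u' x|) := by ring
      _ ≤ (lam*g x/Real.sqrt cinf)*(kowE cinf lam u u' x) := by
          apply mul_le_mul_of_nonneg_left _ (by positivity)
          exact hAM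
      _ ≤ (lam/Real.sqrt Λ1 * g x)*(kowE cinf lam u u' x) := by
          apply mul_le_mul_of_nonneg_right _ hE0
          calc lam*g x/Real.sqrt cinf ≤ lam*g x/Real.sqrt Λ1 :=
                div_le_div_of_nonneg_left (by positivity) hsΛ hsΛc
            _ = lam/Real.sqrt Λ1*g x := by ring
  have hmain := my_gronwall_s6 hsb hEC hΦC hEd hΦd hle
  have hΦs : Φ s = 0 := by simp [hΦdef]
  rw [hΦs, sub_zero] at hmain
  exact hmain

lemma my_comp {A1 A2 p q a b l : ℝ} (hA1 : 0 < A1)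
    (h1p : Real.sqrt A1 ≤ p) (hp2 : p ≤ Real.sqrt A2)
    (h1q : Real.sqrt A1 ≤ q) (hq2 : q ≤ Real.sqrt A2) :
    b^2/p + l^2*p*a^2 ≤ (Real.sqrt A2/Real.sqrt A1) * (b^2/q + l^2*q*a^2) := by
  have hs1 : 0 < Real.sqrt A1 := Real.sqrt_pos.mpr hA1
  have hp : 0 < p := lt_of_lt_of_le hs1 h1p
  have hq : 0 < q := lt_of_lt_of_le hs1 h1q
  have hs2 : (0:ℝ) ≤ Real.sqrt A2 := Real.sqrt_nonneg A2
  have ht1 : b^2/p ≤ Real.sqrt A2/Real.sqrt A1 * (b^2/q) := by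
    rw [div_mul_div_comm, div_le_div_iff₀ hp (by positivity)]
    nlinarith [sq_nonneg b, mul_le_mul hq2 h1p hs1.le hs2]
  have ht2 : l^2*p*a^2 ≤ Real.sqrt A2/Real.sqrt A1 * (l^2*q*a^2) := by
    rw [div_mul_eq_mul_div, le_div_iff₀ hs1]
    nlinarith [sq_nonneg (l*a), mul_le_mul hp2 h1q hs1.le hs2]
  linarith [mul_add (Real.sqrt A2/Real.sqrt A1) (b^2/q) (l^2*q*a^2)]

lemma hasDerivAt_hypF {c c' c'' u u' : ℝ → ℝ} {lam x : ℝ}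
    (hcpos : 0 < c x)
    (hcx : HasDerivAt c (c' x) x) (hc'x : HasDerivAt c' (c'' x) x)
    (hux : HasDerivAt u (u' x) x) (hu'x : HasDerivAt u' (-(lam^2*c x*u x)) x) :
    HasDerivAt (fun t => (u' t)^2/Real.sqrt (c t) + lam^2*Real.sqrt (c t)*(u t)^2
        + c' t/(2*c t*Real.sqrt (c t))*(u t*u' t))
      ((c'' x*(2*c x*Real.sqrt (c x)) - c' x*(3*Real.sqrt (c x)*c' x))
          /(2*c x*Real.sqrt (c x))^2*(u x*u' x)) x := by
  have hq : 0 < Real.sqrt (c x) := Real.sqrt_pos.mpr hcpos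
  have hsx : HasDerivAt (fun t => Real.sqrt (c t)) (1/(2*Real.sqrt (c x))*c' x) x := by
    exact (Real.hasDerivAt_sqrt (ne_of_gt hcpos)).comp x hcx
  have hA := (hu'x.pow 2).div hsx (ne_of_gt hq)
  have hB := (hsx.const_mul (lam^2)).mul (hux.pow 2)
  have hden := (hcx.const_mul 2).mul hsx
  have hdne : 2*c x*Real.sqrt (c x) ≠ 0 := by positivity
  have hr := hc'x.div hden hdne
  have hC := hr.mul (hux.mul hu'x)
  convert (hA.add hB).add hC using 1
  · rfl
  · rfl
  · rfl
  simp only [Pi.mul_apply, Pi.div_apply, Pi.pow_apply]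
  have h2 : Real.sqrt (c x)^2 = c x := Real.sq_sqrt hcpos.le
  set q := Real.sqrt (c x) with hqdef
  rw [← h2]
  have hqne : q ≠ 0 := ne_of_gt hq
  field_simp
  ring

set_option maxHeartbeats 1000000 in
lemma claimB {t0 Λ1 Λ2 β : ℝ} {c c' c'' u u' : ℝ → ℝ} {cinf lam : ℝ}
    (ht0 : 0 < t0) (hΛ1 : 0 < Λ1)
    (hc : ∀ t ∈ Ici t0, HasDerivWithinAt c (c' t) (Ici t0) t)
    (hc' : ∀ t ∈ Ici t0, HasDerivWithinAt c' (c'' t) (Ici t0) t)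
    (hcb : ∀ t ∈ Ici t0, Λ1 ≤ c t ∧ c t ≤ Λ2)
    (hcinf : cinf ∈ Icc Λ1 Λ2)
    (hγ : ∀ t ∈ Ici t0, |c' t| ≤ t^(-β) ∧ |c'' t| ≤ (t^(-β))^2)
    (hlam : 0 < lam)
    (hu : ∀ t ∈ Ici t0, HasDerivWithinAt u (u' t) (Ici t0) t)
    (hu' : ∀ t ∈ Ici t0, HasDerivWithinAt u' (-(lam^2*c t*u t)) (Ici t0) t)
    (hβ2 : 0 < 1 - 2*β)
    {b : ℝ} (hb : t0 ≤ b)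
    (hcond : ∀ x ∈ Icc t0 b, 1/(2*Λ1*Real.sqrt Λ1) * x^(-β) ≤ lam) :
    kowE cinf lam u u' b ≤ 3*(Real.sqrt Λ2/Real.sqrt Λ1)^2 * kowE cinf lam u u' t0 *
      Real.exp ((2*Λ2*Real.sqrt Λ2+3*Real.sqrt Λ2)/(4*Λ1^3) / ((1-2*β)*lam) * b^(1-2*β)) := by
  have hΛ12 : Λ1 ≤ Λ2 := le_trans hcinf.1 hcinf.2
  have hΛ2 : 0 < Λ2 := lt_of_lt_of_le hΛ1 hΛ12
  have hsΛ1 : 0 < Real.sqrt Λ1 := Real.sqrt_pos.mpr hΛ1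
  have hsΛ2 : 0 < Real.sqrt Λ2 := Real.sqrt_pos.mpr hΛ2
  have hcinfpos : 0 < cinf := lt_of_lt_of_le hΛ1 hcinf.1
  have hscinf1 : Real.sqrt Λ1 ≤ Real.sqrt cinf := Real.sqrt_le_sqrt hcinf.1
  have hscinf2 : Real.sqrt cinf ≤ Real.sqrt Λ2 := Real.sqrt_le_sqrt hcinf.2
  set Kρ : ℝ := (2*Λ2*Real.sqrt Λ2+3*Real.sqrt Λ2)/(4*Λ1^3) with hKρdef
  set K3 : ℝ := Real.sqrt Λ2/Real.sqrt Λ1 with hK3def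
  clear_value Kρ
  have hKρ0 : 0 ≤ Kρ := by rw [hKρdef]; positivity
  clear_value K3
  have hK30 : 0 < K3 := by rw [hK3def]; positivity
  -- pointwise facts
  have hcpos : ∀ x ∈ Ici t0, 0 < c x := fun x hx => lt_of_lt_of_le hΛ1 (hcb x hx).1
  have hsc1 : ∀ x ∈ Ici t0, Real.sqrt Λ1 ≤ Real.sqrt (c x) :=
    fun x hx => Real.sqrt_le_sqrt (hcb x hx).1
  have hsc2 : ∀ x ∈ Ici t0, Real.sqrt (c x) ≤ Real.sqrt Λ2 :=
    fun x hx => Real.sqrt_le_sqrt (hcb x hx).2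
  have hscpos : ∀ x ∈ Ici t0, 0 < Real.sqrt (c x) :=
    fun x hx => Real.sqrt_pos.mpr (hcpos x hx)
  -- the two energies
  set Eh : ℝ → ℝ := fun t => (u' t)^2/Real.sqrt (c t) + lam^2*Real.sqrt (c t)*(u t)^2
    with hEhdef
  set F : ℝ → ℝ := fun t => (u' t)^2/Real.sqrt (c t) + lam^2*Real.sqrt (c t)*(u t)^2
    + c' t/(2*c t*Real.sqrt (c t))*(u t*u' t) with hFdef
  clear_value Eh F
  have hFE : ∀ t, F t = Eh t + c' t/(2*c t*Real.sqrt (c t))*(u t*u' t) := by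
    intro t; simp only [hFdef, hEhdef]
  have hEh0 : ∀ x ∈ Ici t0, 0 ≤ Eh x := by
    intro x hx
    have := hscpos x hx
    rw [hEhdef]; positivity
  have hAM : ∀ x ∈ Ici t0, 2*lam*|u x*u' x| ≤ Eh x := by
    intro x hx; rw [hEhdef]; exact my_amgm hlam.le (hscpos x hx)
  have hhalf : ∀ x ∈ Icc t0 b,
      |c' x/(2*c x*Real.sqrt (c x))*(u x*u' x)| ≤ 1/2 * Eh x := by
    intro x hx
    have hx' : x ∈ Ici t0 := hx.1
    have h1 := hscpos x hx'
    have h2 := hcpos x hx'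
    have hxpos : 0 < x := lt_of_lt_of_le ht0 hx'
    have hrp : (0:ℝ) ≤ x^(-β) := Real.rpow_nonneg hxpos.le _
    have hr : |c' x/(2*c x*Real.sqrt (c x))| ≤ 1/(2*Λ1*Real.sqrt Λ1)*x^(-β) := by
      rw [abs_div, abs_of_pos (show (0:ℝ) < 2*c x*Real.sqrt (c x) by positivity)]
      have hd : 2*Λ1*Real.sqrt Λ1 ≤ 2*c x*Real.sqrt (c x) := by
        nlinarith [hsc1 x hx', (hcb x hx').1, hsΛ1, h1]
      calc |c' x|/(2*c x*Real.sqrt (c x)) ≤ x^(-β)/(2*Λ1*Real.sqrt Λ1) :=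
            div_le_div₀ (by positivity) (hγ x hx').1 (by positivity) hd
        _ = 1/(2*Λ1*Real.sqrt Λ1)*x^(-β) := by ring
    calc |c' x/(2*c x*Real.sqrt (c x))*(u x*u' x)|
        = |c' x/(2*c x*Real.sqrt (c x))| * |u x*u' x| := abs_mul _ _
      _ ≤ (1/(2*Λ1*Real.sqrt Λ1)*x^(-β)) * |u x*u' x| :=
          mul_le_mul_of_nonneg_right hr (abs_nonneg _)
      _ ≤ lam * |u x*u' x| := mul_le_mul_of_nonneg_right (hcond x hx) (abs_nonneg _)
      _ ≤ 1/2 * Eh x := by linarith [hAM x hx']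
  have hFlow : ∀ x ∈ Icc t0 b, Eh x ≤ 2*F x := by
    intro x hx
    have h := abs_le.mp (hhalf x hx)
    rw [hFE x]; linarith [h.1]
  have hFup : ∀ x ∈ Icc t0 b, F x ≤ 3/2*Eh x := by
    intro x hx
    have h := abs_le.mp (hhalf x hx)
    rw [hFE x]; linarith [h.2]
  -- bound on ρ
  have hρ : ∀ x ∈ Ici t0,
      |(c'' x*(2*c x*Real.sqrt (c x)) - c' x*(3*Real.sqrt (c x)*c' x))
        /(2*c x*Real.sqrt (c x))^2| ≤ Kρ*(x^(-β))^2 := by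
    intro x hx
    have h1 := hscpos x hx
    have h2 := hcpos x hx
    have hc1 := (hcb x hx).1
    have hc2 := (hcb x hx).2
    have hsq : Real.sqrt (c x)^2 = c x := Real.sq_sqrt h2.le
    have hg2 : (0:ℝ) ≤ (x^(-β))^2 := sq_nonneg _
    have hcc : (2*c x*Real.sqrt (c x))^2 = 4*(c x)^3 := by
      rw [mul_pow, mul_pow, hsq]; ring
    have hD : 4*Λ1^3 ≤ (2*c x*Real.sqrt (c x))^2 := by
      rw [hcc]
      have h3 : Λ1^3 ≤ (c x)^3 := pow_le_pow_left₀ hΛ1.le hc1 3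
      linarith
    have hup : 2*c x*Real.sqrt (c x) ≤ 2*Λ2*Real.sqrt Λ2 := by
      nlinarith [hsc2 x hx, hc2, h1, hsΛ2]
    have hN1 : |c'' x*(2*c x*Real.sqrt (c x))| ≤ (x^(-β))^2*(2*Λ2*Real.sqrt Λ2) := by
      rw [abs_mul, abs_of_pos (show (0:ℝ) < 2*c x*Real.sqrt (c x) by positivity)]
      exact mul_le_mul (hγ x hx).2 hup (by positivity) hg2
    have hN2 : |c' x*(3*Real.sqrt (c x)*c' x)| ≤ (x^(-β))^2*(3*Real.sqrt Λ2) := by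
      have habs : |c' x*(3*Real.sqrt (c x)*c' x)| = 3*Real.sqrt (c x)*|c' x|^2 := by
        rw [abs_mul, abs_mul, abs_mul, abs_of_pos h1,
          abs_of_nonneg (by norm_num : (0:ℝ) ≤ 3)]
        ring
      rw [habs]
      have hp := pow_le_pow_left₀ (abs_nonneg (c' x)) (hγ x hx).1 2
      nlinarith [hsc2 x hx, h1, hp, hsΛ2]
    calc |(c'' x*(2*c x*Real.sqrt (c x)) - c' x*(3*Real.sqrt (c x)*c' x))
          /(2*c x*Real.sqrt (c x))^2|
        = |c'' x*(2*c x*Real.sqrt (c x)) - c' x*(3*Real.sqrt (c x)*c' x)|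
          /(2*c x*Real.sqrt (c x))^2 := by
          rw [abs_div, abs_of_pos (pow_pos (show (0:ℝ) < 2*c x*Real.sqrt (c x) by positivity) 2)]
      _ ≤ ((x^(-β))^2*(2*Λ2*Real.sqrt Λ2) + (x^(-β))^2*(3*Real.sqrt Λ2))/(4*Λ1^3) := by
          have hxpos : 0 < x := lt_of_lt_of_le ht0 hx
          have hrp : (0:ℝ) ≤ x^(-β) := Real.rpow_nonneg hxpos.le _
          apply div_le_div₀ (by positivity) _ (by positivity) hD
          calc |c'' x*(2*c x*Real.sqrt (c x)) - c' x*(3*Real.sqrt (c x)*c' x)|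
              ≤ |c'' x*(2*c x*Real.sqrt (c x))| + |c' x*(3*Real.sqrt (c x)*c' x)| :=
                abs_sub _ _
            _ ≤ _ := add_le_add hN1 hN2
      _ = Kρ*(x^(-β))^2 := by rw [hKρdef]; ring
  -- continuity
  have hcC : ContinuousOn c (Ici t0) := fun t ht => (hc t ht).continuousWithinAt
  have hc'C : ContinuousOn c' (Ici t0) := fun t ht => (hc' t ht).continuousWithinAt
  have huC : ContinuousOn u (Ici t0) := fun t ht => (hu t ht).continuousWithinAt
  have hu'C : ContinuousOn u' (Ici t0) := fun t ht => (hu' t ht).continuousWithinAt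
  have hsC : ContinuousOn (fun t => Real.sqrt (c t)) (Ici t0) :=
    Real.continuous_sqrt.comp_continuousOn hcC
  have hFC : ContinuousOn F (Ici t0) := by
    rw [hFdef]
    apply ContinuousOn.add
    apply ContinuousOn.add
    · exact (hu'C.pow 2).div hsC (fun x hx => ne_of_gt (hscpos x hx))
    · exact (continuousOn_const.mul hsC).mul (huC.pow 2)
    · refine (hc'C.div ((continuousOn_const.mul hcC).mul hsC) ?_).mul (huC.mul hu'C)
      intro x hx
      have := hcpos x hx
      have := hscpos x hx
      show 2 * c x * Real.sqrt (c x) ≠ 0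
      positivity
  -- Gronwall data
  set Φ : ℝ → ℝ := fun y => Kρ/((1-2*β)*lam)*y^(1-2*β) with hΦdef
  clear_value Φ
  have hΦC : ContinuousOn Φ (Icc t0 b) := by
    rw [hΦdef]
    apply continuousOn_const.mul
    intro x hx
    have hxpos : 0 < x := lt_of_lt_of_le ht0 hx.1
    exact (Real.continuousAt_rpow_const x _ (Or.inl (ne_of_gt hxpos))).continuousWithinAt
  have hΦd : ∀ x ∈ Ioo t0 b, HasDerivAt Φ (Kρ/lam*(x^(-β))^2) x := by
    intro x hx
    have hxpos : 0 < x := lt_trans ht0 hx.1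
    have h := (Real.hasDerivAt_rpow_const (x := x) (p := 1-2*β)
      (Or.inl (ne_of_gt hxpos))).const_mul (Kρ/((1-2*β)*lam))
    rw [hΦdef]
    convert h using 1
    · rfl
    · rfl
    have hx2 : (x^(-β))^2 = x^(1-2*β-1) := by
      rw [← Real.rpow_natCast (x^(-β)) 2, ← Real.rpow_mul hxpos.le]
      norm_num
      congr 1
      ring
    rw [hx2]
    field_simp
  have hFd : ∀ x ∈ Ioo t0 b, HasDerivAt F
      ((c'' x*(2*c x*Real.sqrt (c x)) - c' x*(3*Real.sqrt (c x)*c' x))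
        /(2*c x*Real.sqrt (c x))^2*(u x*u' x)) x := by
    intro x hx
    have hx' : x ∈ Ici t0 := hx.1.le
    have hnb : Ici t0 ∈ nhds x := Ici_mem_nhds hx.1
    rw [hFdef]
    exact hasDerivAt_hypF (hcpos x hx') ((hc x hx').hasDerivAt hnb)
      ((hc' x hx').hasDerivAt hnb) ((hu x hx').hasDerivAt hnb) ((hu' x hx').hasDerivAt hnb)
  have hle : ∀ x ∈ Ioo t0 b,
      (c'' x*(2*c x*Real.sqrt (c x)) - c' x*(3*Real.sqrt (c x)*c' x))
        /(2*c x*Real.sqrt (c x))^2*(u x*u' x) ≤ (Kρ/lam*(x^(-β))^2) * F x := by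
    intro x hx
    have hx' : x ∈ Ici t0 := hx.1.le
    have hxm : x ∈ Icc t0 b := ⟨hx.1.le, hx.2.le⟩
    have huu : |u x*u' x| ≤ F x/lam := by
      rw [le_div_iff₀ hlam]
      have h1 := hAM x hx'
      have h2 := hFlow x hxm
      nlinarith [abs_nonneg (u x*u' x)]
    have hFx0 : 0 ≤ F x := by
      have := hEh0 x hx'
      have := hFlow x hxm
      linarith
    calc (c'' x*(2*c x*Real.sqrt (c x)) - c' x*(3*Real.sqrt (c x)*c' x))
          /(2*c x*Real.sqrt (c x))^2*(u x*u' x)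
        ≤ |(c'' x*(2*c x*Real.sqrt (c x)) - c' x*(3*Real.sqrt (c x)*c' x))
          /(2*c x*Real.sqrt (c x))^2*(u x*u' x)| := le_abs_self _
      _ = |(c'' x*(2*c x*Real.sqrt (c x)) - c' x*(3*Real.sqrt (c x)*c' x))
          /(2*c x*Real.sqrt (c x))^2| * |u x*u' x| := abs_mul _ _
      _ ≤ (Kρ*(x^(-β))^2) * |u x*u' x| :=
          mul_le_mul_of_nonneg_right (hρ x hx') (abs_nonneg _)
      _ ≤ (Kρ*(x^(-β))^2)*(F x/lam) := mul_le_mul_of_nonneg_left huu (by positivity)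
      _ = (Kρ/lam*(x^(-β))^2) * F x := by ring
  have hsub : Icc t0 b ⊆ Ici t0 := fun x hx => hx.1
  have hgron := my_gronwall_s6 (f := F) (Φ := Φ)
    (f' := fun x => (c'' x*(2*c x*Real.sqrt (c x)) - c' x*(3*Real.sqrt (c x)*c' x))
        /(2*c x*Real.sqrt (c x))^2*(u x*u' x))
    (φ := fun x => Kρ/lam*(x^(-β))^2)
    hb (hFC.mono hsub) hΦC hFd hΦd hle
  -- final chaining
  have ht0m : t0 ∈ Icc t0 b := ⟨le_rfl, hb⟩
  have hbm : b ∈ Icc t0 b := ⟨hb, le_rfl⟩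
  have ht0' : t0 ∈ Ici t0 := Set.self_mem_Ici
  have hb' : b ∈ Ici t0 := hb
  have hcompE : kowE cinf lam u u' b ≤ K3*Eh b := by
    simp only [hK3def, hEhdef]
    unfold kowE
    exact my_comp hΛ1 hscinf1 hscinf2 (hsc1 b hb') (hsc2 b hb')
  have hcompEh : Eh t0 ≤ K3*kowE cinf lam u u' t0 := by
    simp only [hK3def, hEhdef]
    unfold kowE
    exact my_comp hΛ1 (hsc1 t0 ht0') (hsc2 t0 ht0') hscinf1 hscinf2
  have hΦt0 : 0 ≤ Φ t0 := by
    rw [hΦdef]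
    have : (0:ℝ) ≤ t0^(1-2*β) := (Real.rpow_pos_of_pos ht0 _).le
    positivity
  have hexp1 : Real.exp (Φ b - Φ t0) ≤ Real.exp (Kρ/((1-2*β)*lam)*b^(1-2*β)) := by
    apply Real.exp_le_exp.mpr
    rw [hΦdef]
    simp only
    linarith [hΦt0, (by rw [hΦdef] : Φ t0 = Kρ/((1-2*β)*lam)*t0^(1-2*β))]
  have hE0t0 : 0 ≤ kowE cinf lam u u' t0 := by
    unfold kowE
    have : 0 < Real.sqrt cinf := Real.sqrt_pos.mpr hcinfpos
    positivity
  have hexppos : 0 < Real.exp (Φ b - Φ t0) := Real.exp_pos _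
  have hEhb : Eh b ≤ 2*(F t0 * Real.exp (Φ b - Φ t0)) := by
    calc Eh b ≤ 2*F b := hFlow b hbm
      _ ≤ 2*(F t0 * Real.exp (Φ b - Φ t0)) := by linarith [hgron]
  have hFt0 : F t0 ≤ 3/2*Eh t0 := hFup t0 ht0m
  have hEht0 : 0 ≤ Eh t0 := hEh0 t0 ht0'
  calc kowE cinf lam u u' b ≤ K3*Eh b := hcompE
    _ ≤ K3*(2*(F t0 * Real.exp (Φ b - Φ t0))) := by
        apply mul_le_mul_of_nonneg_left hEhb hK30.le
    _ ≤ K3*(2*((3/2*Eh t0) * Real.exp (Φ b - Φ t0))) := by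
        apply mul_le_mul_of_nonneg_left _ hK30.le
        apply mul_le_mul_of_nonneg_left _ (by norm_num)
        exact mul_le_mul_of_nonneg_right hFt0 hexppos.le
    _ = 3*K3*(Eh t0)*Real.exp (Φ b - Φ t0) := by ring
    _ ≤ 3*K3*(K3*kowE cinf lam u u' t0)*Real.exp (Φ b - Φ t0) := by
        apply mul_le_mul_of_nonneg_right _ hexppos.le
        apply mul_le_mul_of_nonneg_left hcompEh (by positivity)
    _ = 3*K3^2*kowE cinf lam u u' t0*Real.exp (Φ b - Φ t0) := by ring
    _ ≤ 3*K3^2*kowE cinf lam u u' t0*Real.exp (Kρ/((1-2*β)*lam)*b^(1-2*β)) := by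
        apply mul_le_mul_of_nonneg_left hexp1 (by positivity)

set_option maxHeartbeats 1000000 in
theorem energy_growth_powers_case
    (t0 Λ1 Λ2 α β : ℝ) (ht0 : 0 < t0) (hΛ1 : 0 < Λ1) (hΛ12 : Λ1 ≤ Λ2)
    (hα : α < 0) (hβ : 2 * β < 1 + α) :
    ∃ H6 H7 : ℝ,
      ∀ (c c' c'' : ℝ → ℝ) (cinf : ℝ),
        (∀ t ∈ Ici t0, HasDerivWithinAt c (c' t) (Ici t0) t) →
        (∀ t ∈ Ici t0, HasDerivWithinAt c' (c'' t) (Ici t0) t) →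
        ContinuousOn c'' (Ici t0) →
        (∀ t ∈ Ici t0, Λ1 ≤ c t ∧ c t ≤ Λ2) →
        cinf ∈ Icc Λ1 Λ2 →
        (∀ t ∈ Ici t0, ∀ b ≥ t, (∫ τ in t..b, |c τ - cinf|) ≤ t ^ α) →
        (∀ t ∈ Ici t0, |c' t| ≤ t ^ (-β) ∧ |c'' t| ≤ (t ^ (-β)) ^ 2) →
        ∀ lam : ℝ, 0 < lam →
        ∀ u u' : ℝ → ℝ,
          (∀ t ∈ Ici t0, HasDerivWithinAt u (u' t) (Ici t0) t) →
          (∀ t ∈ Ici t0, HasDerivWithinAt u' (-(lam ^ 2 * c t * u t)) (Ici t0) t) →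
          ∀ t ∈ Ici t0,
            kowE cinf lam u u' t ≤
              kowE cinf lam u u' t0 * H6 *
                Real.exp (H7 * t ^ ((α + 1) / 2 - β)) := by
  have hden : 0 < 1 - 2*β - α := by linarith
  have hβ2 : 0 < 1 - 2*β := by linarith
  have hθ : 0 < (α+1)/2 - β := by linarith
  have hsΛ1 : 0 < Real.sqrt Λ1 := Real.sqrt_pos.mpr hΛ1
  set Kr : ℝ := 1/(2*Λ1*Real.sqrt Λ1) with hKrdef
  set Kρ : ℝ := (2*Λ2*Real.sqrt Λ2+3*Real.sqrt Λ2)/(4*Λ1^3) with hKρdef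
  set K3 : ℝ := Real.sqrt Λ2/Real.sqrt Λ1 with hK3def
  set L : ℝ := 2/(1-2*β-α) with hLdef
  set lmin : ℝ := max (max (Kr * t0^(-β)) ((Kr+1)^((1-2*β-α)/(1-α))))
    (max (t0^((1-2*β-α)/2)) 1) with hlmindef
  clear_value Kr Kρ K3 L lmin
  have hΛ2 : 0 < Λ2 := lt_of_lt_of_le hΛ1 hΛ12
  have hsΛ2 : 0 < Real.sqrt Λ2 := Real.sqrt_pos.mpr hΛ2
  have hKr0 : 0 < Kr := by rw [hKrdef]; positivity
  have hKρ0 : 0 ≤ Kρ := by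
    rw [hKρdef]
    apply div_nonneg _ (by positivity)
    nlinarith [hsΛ2.le, hΛ2.le]
  have hK31 : 1 ≤ K3 := by
    rw [hK3def, le_div_iff₀ hsΛ1, one_mul]
    exact Real.sqrt_le_sqrt hΛ12
  have hK30 : 0 < K3 := lt_of_lt_of_le one_pos hK31
  have hlmin1 : 1 ≤ lmin := by
    rw [hlmindef]; exact le_trans (le_max_right _ _) (le_max_right _ _)
  have hlmin0 : 0 < lmin := lt_of_lt_of_le one_pos hlmin1
  have ht0α : 0 < t0^α := Real.rpow_pos_of_pos ht0 _
  refine ⟨3*K3^2*Real.exp (lmin*t0^α/Real.sqrt Λ1), Kρ/(1-2*β) + 1/Real.sqrt Λ1, ?_⟩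
  intro c c' c'' cinf hc hc' hc''C hcb hcinf hstab hγ lam hlam u u' hu hu' t ht
  set H6 : ℝ := 3*K3^2*Real.exp (lmin*t0^α/Real.sqrt Λ1) with hH6def
  set H7 : ℝ := Kρ/(1-2*β) + 1/Real.sqrt Λ1 with hH7def
  clear_value H6 H7
  have hcinfpos : 0 < cinf := lt_of_lt_of_le hΛ1 hcinf.1
  have hscinf : 0 < Real.sqrt cinf := Real.sqrt_pos.mpr hcinfpos
  have hEt0 : 0 ≤ kowE cinf lam u u' t0 := by unfold kowE; positivity
  have htpos : 0 < t := lt_of_lt_of_le ht0 ht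
  have htθ : 0 ≤ t^((α+1)/2-β) := (Real.rpow_pos_of_pos htpos _).le
  have hH7 : 0 ≤ H7 := by rw [hH7def]; positivity
  have hexp1 : 1 ≤ Real.exp (H7 * t^((α+1)/2-β)) :=
    Real.one_le_exp (by positivity)
  have hexpC1 : 1 ≤ Real.exp (lmin*t0^α/Real.sqrt Λ1) :=
    Real.one_le_exp (by positivity)
  have hK3sq : 1 ≤ K3^2 := by nlinarith [hK31]
  have hH6C : Real.exp (lmin*t0^α/Real.sqrt Λ1) ≤ H6 := by
    rw [hH6def]
    nlinarith [Real.exp_pos (lmin*t0^α/Real.sqrt Λ1), hK3sq]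
  have h3K3H6 : 3*K3^2 ≤ H6 := by
    rw [hH6def]
    nlinarith [hexpC1, hK3sq]
  rcases le_or_gt lam lmin with hcase | hcase
  · -- small frequencies : Kovaleskian estimate all the way
    have hA := claimA hΛ1 hc hcinf.1 hlam hu hu' (le_refl t0) ht
    have hint : (∫ τ in t0..t, |c τ - cinf|) ≤ t0^α := hstab t0 Set.self_mem_Ici t ht
    have hint0 : 0 ≤ ∫ τ in t0..t, |c τ - cinf| :=
      intervalIntegral.integral_nonneg ht (fun x _ => abs_nonneg _)
    have harg : lam/Real.sqrt Λ1 * ∫ τ in t0..t, |c τ - cinf| ≤ lmin*t0^α/Real.sqrt Λ1 := by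
      have h1 : lam/Real.sqrt Λ1 * ∫ τ in t0..t, |c τ - cinf| ≤ lam/Real.sqrt Λ1 * t0^α :=
        mul_le_mul_of_nonneg_left hint (by positivity)
      have h2 : lam/Real.sqrt Λ1 * t0^α ≤ lmin/Real.sqrt Λ1 * t0^α := by
        apply mul_le_mul_of_nonneg_right _ ht0α.le
        exact (div_le_div_iff_of_pos_right hsΛ1).mpr hcase
      calc lam/Real.sqrt Λ1 * ∫ τ in t0..t, |c τ - cinf| ≤ lam/Real.sqrt Λ1 * t0^α := h1
        _ ≤ lmin/Real.sqrt Λ1 * t0^α := h2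
        _ = lmin*t0^α/Real.sqrt Λ1 := by ring
    calc kowE cinf lam u u' t
        ≤ kowE cinf lam u u' t0 * Real.exp (lam/Real.sqrt Λ1 * ∫ τ in t0..t, |c τ - cinf|) := hA
      _ ≤ kowE cinf lam u u' t0 * Real.exp (lmin*t0^α/Real.sqrt Λ1) :=
          mul_le_mul_of_nonneg_left (Real.exp_le_exp.mpr harg) hEt0
      _ ≤ kowE cinf lam u u' t0 * H6 := mul_le_mul_of_nonneg_left hH6C hEt0
      _ ≤ kowE cinf lam u u' t0 * H6 * Real.exp (H7 * t^((α+1)/2-β)) := by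
          have hH60 : 0 ≤ H6 := le_trans zero_le_one (le_trans hexpC1 hH6C)
          exact le_mul_of_one_le_right (mul_nonneg hEt0 hH60) hexp1
  · -- large frequencies
    set s : ℝ := lam^L with hsdef
    clear_value s
    have hlam1 : 1 < lam := lt_of_le_of_lt hlmin1 hcase
    have hspos : 0 < s := by rw [hsdef]; exact Real.rpow_pos_of_pos hlam _
    have hL0 : 0 < L := by rw [hLdef]; positivity
    have hsL : ∀ p : ℝ, s^p = lam^(L*p) := by
      intro p; rw [hsdef, ← Real.rpow_mul hlam.le]
    have hs_gt : t0 < s := by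
      have h1 : t0^((1-2*β-α)/2) < lam := by
        refine lt_of_le_of_lt ?_ hcase
        rw [hlmindef]; exact le_trans (le_max_left _ _) (le_max_right _ _)
      have h2 : (t0^((1-2*β-α)/2))^L < lam^L :=
        Real.rpow_lt_rpow (Real.rpow_nonneg ht0.le _) h1 hL0
      have h3 : (t0^((1-2*β-α)/2))^L = t0 := by
        rw [← Real.rpow_mul ht0.le, hLdef]
        rw [show (1-2*β-α)/2*(2/(1-2*β-α)) = 1 by field_simp [hden.ne']]
        exact Real.rpow_one t0
      rw [hsdef]; rw [h3] at h2; exact h2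
    have hcondγ : ∀ x ∈ Icc t0 s, Kr * x^(-β) ≤ lam := by
      intro x hx
      have hx0 : 0 < x := lt_of_lt_of_le ht0 hx.1
      rcases le_or_gt β 0 with hβ0 | hβ0
      · have h1 : x^(-β) ≤ s^(-β) := Real.rpow_le_rpow hx0.le hx.2 (by linarith)
        have hq : (0:ℝ) < (1-α)/(1-2*β-α) := by
          apply div_pos (by linarith) hden
        have hKrlam : Kr + 1 ≤ lam^((1-α)/(1-2*β-α)) := by
          have ha : (Kr+1)^((1-2*β-α)/(1-α)) ≤ lam := by
            refine le_of_lt (lt_of_le_of_lt ?_ hcase)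
            rw [hlmindef]; exact le_trans (le_max_right _ _) (le_max_left _ _)
          have hb' : ((Kr+1)^((1-2*β-α)/(1-α)))^((1-α)/(1-2*β-α)) ≤ lam^((1-α)/(1-2*β-α)) :=
            Real.rpow_le_rpow (Real.rpow_nonneg (by positivity) _) ha hq.le
          rwa [← Real.rpow_mul (by positivity : (0:ℝ) ≤ Kr+1),
            show (1-2*β-α)/(1-α)*((1-α)/(1-2*β-α)) = 1 by
              rw [div_mul_div_comm, mul_comm ((1:ℝ)-α) (1-2*β-α)]
              exact div_self (ne_of_gt (mul_pos hden (by linarith))),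
            Real.rpow_one] at hb'
        have hsplit : lam = lam^((1-α)/(1-2*β-α)) * lam^(L*(-β)) := by
          rw [← Real.rpow_add hlam, hLdef]
          rw [show (1-α)/(1-2*β-α) + 2/(1-2*β-α)*(-β) = 1 by field_simp [hden.ne']; ring]
          exact (Real.rpow_one lam).symm
        have h2 : Kr * s^(-β) ≤ lam := by
          rw [hsL (-β)]
          conv_rhs => rw [hsplit]
          apply mul_le_mul_of_nonneg_right _ (Real.rpow_nonneg hlam.le _)
          linarith
        calc Kr * x^(-β) ≤ Kr * s^(-β) := mul_le_mul_of_nonneg_left h1 hKr0.le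
          _ ≤ lam := h2
      · have h1 : x^(-β) ≤ t0^(-β) :=
          Real.rpow_le_rpow_of_nonpos ht0 hx.1 (by linarith)
        have h2 : Kr * t0^(-β) ≤ lmin := by
          rw [hlmindef]; exact le_trans (le_max_left _ _) (le_max_left _ _)
        calc Kr * x^(-β) ≤ Kr * t0^(-β) := mul_le_mul_of_nonneg_left h1 hKr0.le
          _ ≤ lmin := h2
          _ ≤ lam := hcase.le
    have hθid : L*(1-2*β) - 1 = L*((α+1)/2-β) := by
      rw [hLdef]; field_simp [hden.ne']; ring
    have hsθt : ∀ hst : s ≤ t, s^((α+1)/2-β) ≤ t^((α+1)/2-β) :=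
      fun hst => Real.rpow_le_rpow hspos.le hst hθ.le
    rcases le_or_gt t s with hts | hst
    · -- pure hyperbolic regime
      have hB := claimB ht0 hΛ1 hc hc' hcb hcinf hγ hlam hu hu' hβ2 ht
        (fun x hx => by
          have := hcondγ x ⟨hx.1, le_trans hx.2 hts⟩
          rwa [hKrdef] at this)
      rw [← hKρdef, ← hK3def] at hB
      have hkey : Kρ/((1-2*β)*lam) * t^(1-2*β) ≤ Kρ/(1-2*β) * t^((α+1)/2-β) := by
        have h1 : t^((1-2*β-α)/2) ≤ lam := by
          have := Real.rpow_le_rpow htpos.le hts (show (0:ℝ) ≤ (1-2*β-α)/2 by positivity)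
          rwa [hsL ((1-2*β-α)/2), show L*((1-2*β-α)/2) = 1 by rw [hLdef]; field_simp [hden.ne'],
            Real.rpow_one] at this
        have h2 : t^(1-2*β) ≤ lam * t^((α+1)/2-β) := by
          have h3 : t^(1-2*β) = t^((1-2*β-α)/2) * t^((α+1)/2-β) := by
            rw [← Real.rpow_add htpos]; congr 1; ring
          rw [h3]
          exact mul_le_mul_of_nonneg_right h1 (Real.rpow_pos_of_pos htpos _).le
        have heq : Kρ/((1-2*β)*lam) * t^(1-2*β) = Kρ/(1-2*β) * (t^(1-2*β)/lam) := by
          field_simp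
        rw [heq]
        apply mul_le_mul_of_nonneg_left _ (by positivity)
        rw [div_le_iff₀ hlam]
        calc t^(1-2*β) ≤ lam * t^((α+1)/2-β) := h2
          _ = t^((α+1)/2-β) * lam := by ring
      calc kowE cinf lam u u' t
          ≤ 3*K3^2 * kowE cinf lam u u' t0 *
            Real.exp (Kρ/((1-2*β)*lam) * t^(1-2*β)) := hB
        _ ≤ 3*K3^2 * kowE cinf lam u u' t0 * Real.exp (H7 * t^((α+1)/2-β)) := by
            apply mul_le_mul_of_nonneg_left _ (by positivity)
            apply Real.exp_le_exp.mpr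
            calc Kρ/((1-2*β)*lam) * t^(1-2*β) ≤ Kρ/(1-2*β) * t^((α+1)/2-β) := hkey
              _ ≤ H7 * t^((α+1)/2-β) := by
                  apply mul_le_mul_of_nonneg_right _ htθ
                  rw [hH7def]
                  have : 0 < 1/Real.sqrt Λ1 := by positivity
                  linarith
        _ ≤ kowE cinf lam u u' t0 * H6 * Real.exp (H7 * t^((α+1)/2-β)) := by
            apply mul_le_mul_of_nonneg_right _ (Real.exp_pos _).le
            calc 3*K3^2 * kowE cinf lam u u' t0
                ≤ H6 * kowE cinf lam u u' t0 := mul_le_mul_of_nonneg_right h3K3H6 hEt0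
              _ = kowE cinf lam u u' t0 * H6 := by ring
    · -- hyperbolic then Kovaleskian
      have hsmem : t0 ≤ s := hs_gt.le
      have hB := claimB ht0 hΛ1 hc hc' hcb hcinf hγ hlam hu hu' hβ2 hsmem
        (fun x hx => by
          have := hcondγ x hx
          rwa [hKrdef] at this)
      rw [← hKρdef, ← hK3def] at hB
      have hA := claimA hΛ1 hc hcinf.1 hlam hu hu' hsmem hst.le
      have hEs0 : 0 ≤ kowE cinf lam u u' s := by unfold kowE; positivity
      have hint : (∫ τ in s..t, |c τ - cinf|) ≤ s^α := hstab s hsmem t hst.le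
      have hint0 : 0 ≤ ∫ τ in s..t, |c τ - cinf| :=
        intervalIntegral.integral_nonneg hst.le (fun x _ => abs_nonneg _)
      -- the two exponents are both ≤ coefficient * t^θ
      have hsθ : s^((α+1)/2-β) ≤ t^((α+1)/2-β) := hsθt hst.le
      have hX : Kρ/((1-2*β)*lam) * s^(1-2*β) ≤ Kρ/(1-2*β) * t^((α+1)/2-β) := by
        have h1 : s^(1-2*β)/lam = s^((α+1)/2-β) := by
          rw [hsL (1-2*β), hsL ((α+1)/2-β), ← hθid, Real.rpow_sub hlam, Real.rpow_one]
        have h2 : Kρ/((1-2*β)*lam) * s^(1-2*β) = Kρ/(1-2*β) * (s^(1-2*β)/lam) := by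
          field_simp
        rw [h2, h1]
        exact mul_le_mul_of_nonneg_left hsθ (by positivity)
      have hY : lam/Real.sqrt Λ1 * ∫ τ in s..t, |c τ - cinf| ≤
          1/Real.sqrt Λ1 * t^((α+1)/2-β) := by
        have h1 : lam * s^α = s^((α+1)/2-β) := by
          have hid2 : L*((α+1)/2-β) = 1 + L*α := by rw [hLdef]; field_simp; ring
          rw [hsL α, hsL ((α+1)/2-β), hid2, Real.rpow_add hlam, Real.rpow_one]
        calc lam/Real.sqrt Λ1 * ∫ τ in s..t, |c τ - cinf|
            ≤ lam/Real.sqrt Λ1 * s^α := mul_le_mul_of_nonneg_left hint (by positivity)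
          _ = 1/Real.sqrt Λ1 * (lam * s^α) := by ring
          _ = 1/Real.sqrt Λ1 * s^((α+1)/2-β) := by rw [h1]
          _ ≤ 1/Real.sqrt Λ1 * t^((α+1)/2-β) := mul_le_mul_of_nonneg_left hsθ (by positivity)
      calc kowE cinf lam u u' t
          ≤ kowE cinf lam u u' s *
            Real.exp (lam/Real.sqrt Λ1 * ∫ τ in s..t, |c τ - cinf|) := hA
        _ ≤ (3*K3^2 * kowE cinf lam u u' t0 *
            Real.exp (Kρ/((1-2*β)*lam) * s^(1-2*β))) *
            Real.exp (lam/Real.sqrt Λ1 * ∫ τ in s..t, |c τ - cinf|) :=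
            mul_le_mul_of_nonneg_right hB (Real.exp_pos _).le
        _ = 3*K3^2 * kowE cinf lam u u' t0 *
            Real.exp (Kρ/((1-2*β)*lam) * s^(1-2*β) +
              lam/Real.sqrt Λ1 * ∫ τ in s..t, |c τ - cinf|) := by
            rw [Real.exp_add]; ring
        _ ≤ 3*K3^2 * kowE cinf lam u u' t0 * Real.exp (H7 * t^((α+1)/2-β)) := by
            apply mul_le_mul_of_nonneg_left _ (by positivity)
            apply Real.exp_le_exp.mpr
            rw [hH7def]
            have := add_le_add hX hY
            calc Kρ/((1-2*β)*lam) * s^(1-2*β) +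
                lam/Real.sqrt Λ1 * ∫ τ in s..t, |c τ - cinf|
                ≤ Kρ/(1-2*β) * t^((α+1)/2-β) + 1/Real.sqrt Λ1 * t^((α+1)/2-β) := this
              _ = (Kρ/(1-2*β) + 1/Real.sqrt Λ1) * t^((α+1)/2-β) := by ring
        _ ≤ kowE cinf lam u u' t0 * H6 * Real.exp (H7 * t^((α+1)/2-β)) := by
            apply mul_le_mul_of_nonneg_right _ (Real.exp_pos _).le
            calc 3*K3^2 * kowE cinf lam u u' t0
                ≤ H6 * kowE cinf lam u u' t0 := mul_le_mul_of_nonneg_right h3K3H6 hEt0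
              _ = kowE cinf lam u u' t0 * H6 := by ring
end

section
/- Let t0 > 0 and let β > 1/2, and set γ(t) = t^{−β}. Then for every continuous non-increasing function S : [t0,∞) → ℝ with S(t) → 0 as t → +∞ there exists a constant H0 > 0, depending only on t0, Λ1, Λ2, β and S(t0), such that for every coefficient c in the class PS(t0,Λ1,Λ2,S,γ) with stabilization constant c∞, every λ > 0, and every solution u of u''(t) + λ² c(t) u(t) = 0 on [t0,∞), the Kowaleskian energy E(t) = u'(t)²/√c∞ + λ²√c∞·u(t)² satisfies (1/H0)·E(t0) ≤ E(t) ≤ H0·E(t0) for all t ≥ t0. -/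
open Real Set Filter MeasureTheory

/-- Two-sided Gronwall inequality via integrating factors. -/
lemma gron_two (t0 : ℝ) (E E' φ Φ : ℝ → ℝ)
    (hE : ∀ t ∈ Ici t0, HasDerivWithinAt E (E' t) (Ici t0) t)
    (hΦ : ∀ t ∈ Ici t0, HasDerivAt Φ (φ t) t)
    (hb : ∀ t ∈ Ici t0, |E' t| ≤ φ t * E t) :
    ∀ t ∈ Ici t0, E t ≤ E t0 * Real.exp (Φ t - Φ t0) ∧
      E t0 ≤ E t * Real.exp (Φ t - Φ t0) := by
  have hEc : ContinuousOn E (Ici t0) := fun t ht => (hE t ht).continuousWithinAt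
  have hΦc : ContinuousOn Φ (Ici t0) := fun t ht => (hΦ t ht).continuousAt.continuousWithinAt
  have hint : interior (Ici t0) = Ioi t0 := interior_Ici
  have hG : AntitoneOn (fun t => E t * Real.exp (-(Φ t))) (Ici t0) := by
    apply antitoneOn_of_hasDerivWithinAt_nonpos (convex_Ici t0)
      (f' := fun t => (E' t - φ t * E t) * Real.exp (-(Φ t)))
      (hEc.mul (Real.continuous_exp.comp_continuousOn hΦc.neg))
    · intro x hx
      rw [hint] at hx ⊢
      have hx' : x ∈ Ici t0 := mem_Ici.2 (le_of_lt (mem_Ioi.1 hx))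
      have hEx : HasDerivAt E (E' x) x := (hE x hx').hasDerivAt (Ici_mem_nhds hx)
      have : HasDerivAt (fun t => E t * Real.exp (-(Φ t)))
          ((E' x - φ x * E x) * Real.exp (-(Φ x))) x := by
        have h2 : HasDerivAt (fun t => Real.exp (-(Φ t))) (Real.exp (-(Φ x)) * (-(φ x))) x :=
          (Real.hasDerivAt_exp _).comp x ((hΦ x hx').neg)
        have := hEx.mul h2
        exact this.congr_deriv (by ring)
      exact this.hasDerivWithinAt
    · intro x hx
      rw [hint] at hx
      have hx' : x ∈ Ici t0 := mem_Ici.2 (le_of_lt (mem_Ioi.1 hx))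
      have h1 : E' x ≤ φ x * E x := le_trans (le_abs_self _) (hb x hx')
      have h2 : (0:ℝ) < Real.exp (-(Φ x)) := Real.exp_pos _
      nlinarith
  have hH : MonotoneOn (fun t => E t * Real.exp (Φ t)) (Ici t0) := by
    apply monotoneOn_of_hasDerivWithinAt_nonneg (convex_Ici t0)
      (f' := fun t => (E' t + φ t * E t) * Real.exp (Φ t))
      (hEc.mul (Real.continuous_exp.comp_continuousOn hΦc))
    · intro x hx
      rw [hint] at hx ⊢
      have hx' : x ∈ Ici t0 := mem_Ici.2 (le_of_lt (mem_Ioi.1 hx))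
      have hEx : HasDerivAt E (E' x) x := (hE x hx').hasDerivAt (Ici_mem_nhds hx)
      have : HasDerivAt (fun t => E t * Real.exp (Φ t))
          ((E' x + φ x * E x) * Real.exp (Φ x)) x := by
        have h2 : HasDerivAt (fun t => Real.exp (Φ t)) (Real.exp (Φ x) * (φ x)) x :=
          (Real.hasDerivAt_exp _).comp x (hΦ x hx')
        have := hEx.mul h2
        exact this.congr_deriv (by ring)
      exact this.hasDerivWithinAt
    · intro x hx
      rw [hint] at hx
      have hx' : x ∈ Ici t0 := mem_Ici.2 (le_of_lt (mem_Ioi.1 hx))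
      have h1 : -(φ x * E x) ≤ E' x := neg_le_of_abs_le (hb x hx')
      have h2 : (0:ℝ) < Real.exp (Φ x) := Real.exp_pos _
      nlinarith
  intro t ht
  have ht0 : t0 ∈ Ici t0 := self_mem_Ici
  constructor
  · have := hG ht0 ht ht
    calc E t = (E t * Real.exp (-(Φ t))) * Real.exp (Φ t) := by
          rw [mul_assoc, ← Real.exp_add]; simp
      _ ≤ (E t0 * Real.exp (-(Φ t0))) * Real.exp (Φ t) :=
          mul_le_mul_of_nonneg_right this (Real.exp_pos _).le
      _ = E t0 * Real.exp (Φ t - Φ t0) := by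
          rw [mul_assoc, ← Real.exp_add]; ring_nf
  · have := hH ht0 ht ht
    calc E t0 = (E t0 * Real.exp (Φ t0)) * Real.exp (-(Φ t0)) := by
          rw [mul_assoc, ← Real.exp_add]; simp
      _ ≤ (E t * Real.exp (Φ t)) * Real.exp (-(Φ t0)) :=
          mul_le_mul_of_nonneg_right this (Real.exp_pos _).le
      _ = E t * Real.exp (Φ t - Φ t0) := by
          rw [mul_assoc, ← Real.exp_add]; ring_nf

/-- AM-GM for the energy terms. -/
lemma energy_amgm (lam s a b : ℝ) (hs : 0 < s) (hl : 0 ≤ lam) :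
    2 * lam * |a * b| ≤ a ^ 2 / s + lam ^ 2 * s * b ^ 2 := by
  rw [abs_mul, div_add' _ _ _ hs.ne', le_div_iff₀ hs, ← sq_abs a, ← sq_abs b]
  nlinarith [sq_nonneg (|a| - lam * s * |b|)]

/-- Comparison of divisions. -/
lemma div_comp (a s1 s2 L U : ℝ) (ha : 0 ≤ a) (hL : 0 < L) (h1 : L ≤ s1)
    (h2 : 0 < s2) (hU : s2 ≤ U) : a / s1 ≤ U / L * (a / s2) := by
  have hs1 : 0 < s1 := lt_of_lt_of_le hL h1
  have : U / L * (a / s2) = U * a / (L * s2) := by ring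
  rw [this, div_le_div_iff₀ hs1 (by positivity)]
  nlinarith [mul_le_mul h1 hU h2.le (hL.le.trans h1), mul_nonneg h2.le hL.le]

set_option maxHeartbeats 2000000 in
theorem GEC_case_beta_gt_half
    (t0 Λ1 Λ2 β : ℝ) (ht0 : 0 < t0) (hΛ1 : 0 < Λ1) (hΛ12 : Λ1 ≤ Λ2)
    (hβ : 1 / 2 < β)
    (S : ℝ → ℝ)
    (hS_cont : ContinuousOn S (Ici t0)) (hS_anti : AntitoneOn S (Ici t0))
    (hS_lim : Tendsto S atTop (nhds 0)) :
    ∃ H0 : ℝ, 0 < H0 ∧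
      ∀ (c c' c'' : ℝ → ℝ) (cinf : ℝ),
        (∀ t ∈ Ici t0, HasDerivWithinAt c (c' t) (Ici t0) t) →
        (∀ t ∈ Ici t0, HasDerivWithinAt c' (c'' t) (Ici t0) t) →
        ContinuousOn c'' (Ici t0) →
        (∀ t ∈ Ici t0, Λ1 ≤ c t ∧ c t ≤ Λ2) →
        cinf ∈ Icc Λ1 Λ2 →
        (∀ t ∈ Ici t0, ∀ b ≥ t, (∫ τ in t..b, |c τ - cinf|) ≤ S t) →
        (∀ t ∈ Ici t0, |c' t| ≤ t ^ (-β) ∧ |c'' t| ≤ (t ^ (-β)) ^ 2) →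
        ∀ lam : ℝ, 0 < lam →
        ∀ u u' : ℝ → ℝ,
          (∀ t ∈ Ici t0, HasDerivWithinAt u (u' t) (Ici t0) t) →
          (∀ t ∈ Ici t0, HasDerivWithinAt u' (-(lam ^ 2 * c t * u t)) (Ici t0) t) →
          ∀ t ∈ Ici t0,
            (1 / H0) * kowE cinf lam u u' t0 ≤ kowE cinf lam u u' t ∧
            kowE cinf lam u u' t ≤ H0 * kowE cinf lam u u' t0 := by
  have hΛ2 : 0 < Λ2 := lt_of_lt_of_le hΛ1 hΛ12
  obtain ⟨L, hLdef⟩ : ∃ x, x = Real.sqrt Λ1 := ⟨_, rfl⟩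
  have hLpos : 0 < L := hLdef ▸ Real.sqrt_pos.2 hΛ1
  obtain ⟨U, hUdef⟩ : ∃ x, x = Real.sqrt Λ2 := ⟨_, rfl⟩
  have hUpos : 0 < U := hUdef ▸ Real.sqrt_pos.2 hΛ2
  have hLU : L ≤ U := by rw [hLdef, hUdef]; exact Real.sqrt_le_sqrt hΛ12
  obtain ⟨γ0, hγ0def⟩ : ∃ x, x = t0 ^ (-β) := ⟨_, rfl⟩
  have hγ0 : 0 < γ0 := hγ0def ▸ Real.rpow_pos_of_pos ht0 _
  obtain ⟨lam0, hlam0def⟩ : ∃ x, x = γ0 / L ^ 3 := ⟨_, rfl⟩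
  have hlam0 : 0 < lam0 := by rw [hlam0def]; positivity
  obtain ⟨K, hKdef⟩ : ∃ x, x = 1 / (2 * L ^ 3) + 3 / (4 * L ^ 5) := ⟨_, rfl⟩
  have hK : 0 < K := by rw [hKdef]; positivity
  have hβ' : 0 < 2 * β - 1 := by linarith
  have ht0p : 0 < t0 ^ (1 - 2 * β) := Real.rpow_pos_of_pos ht0 _
  obtain ⟨J, hJdef⟩ : ∃ x, x = K / lam0 * (t0 ^ (1 - 2 * β) / (2 * β - 1)) := ⟨_, rfl⟩
  have hJ : 0 ≤ J := by
    rw [hJdef]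
    exact mul_nonneg (div_nonneg hK.le hlam0.le) (div_nonneg ht0p.le hβ'.le)
  obtain ⟨C1, hC1def⟩ : ∃ x, x = (U / L) ^ 2 * 2 * Real.exp J := ⟨_, rfl⟩
  have hC1pos : 0 < C1 := by
    rw [hC1def]
    exact mul_pos (mul_pos (pow_pos (div_pos hUpos hLpos) 2) two_pos) (Real.exp_pos _)
  obtain ⟨C2, hC2def⟩ : ∃ x, x = Real.exp (lam0 * S t0 / L) := ⟨_, rfl⟩
  have hC2pos : 0 < C2 := hC2def ▸ Real.exp_pos _
  refine ⟨C1 + C2, by positivity, ?_⟩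
  intro c c' c'' cinf hc hc' _hc''cont hcb hcinf hstab hgam lam hlam u u' hu hu'
  have hS0 : 0 ≤ S t0 := by
    have := hstab t0 self_mem_Ici t0 le_rfl
    simpa [intervalIntegral.integral_same] using this
  have hcont_c : ContinuousOn c (Ici t0) := fun t ht => (hc t ht).continuousWithinAt
  have hcpos : ∀ t ∈ Ici t0, 0 < c t := fun t ht => lt_of_lt_of_le hΛ1 (hcb t ht).1
  have hscL : L ≤ Real.sqrt cinf := hLdef ▸ Real.sqrt_le_sqrt hcinf.1
  have hscU : Real.sqrt cinf ≤ U := hUdef ▸ Real.sqrt_le_sqrt hcinf.2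
  have hscpos : 0 < Real.sqrt cinf := lt_of_lt_of_le hLpos hscL
  obtain ⟨E, hEdef⟩ : ∃ f, f = kowE cinf lam u u' := ⟨_, rfl⟩
  have hEeq : ∀ t, E t = (u' t) ^ 2 / Real.sqrt cinf + lam ^ 2 * Real.sqrt cinf * (u t) ^ 2 :=
    fun t => by rw [hEdef]; rfl
  have hEnn : ∀ t, 0 ≤ E t := by
    intro t; rw [hEeq]; positivity
  have hEkey : ∀ t, 2 * lam * |u t * u' t| ≤ E t := by
    intro t
    have := energy_amgm lam (Real.sqrt cinf) (u' t) (u t) hscpos hlam.le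
    rw [hEeq, mul_comm (u t) (u' t)]; linarith
  suffices h : ∀ t ∈ Ici t0, (E t ≤ C1 * E t0 ∧ E t0 ≤ C1 * E t) ∨
      (E t ≤ C2 * E t0 ∧ E t0 ≤ C2 * E t) by
    intro t ht
    rw [← hEdef]
    have hE0 := hEnn t0
    have hEt := hEnn t
    have hsum : 0 < C1 + C2 := by positivity
    have m1 : 0 ≤ C1 * E t := mul_nonneg hC1pos.le hEt
    have m2 : 0 ≤ C2 * E t := mul_nonneg hC2pos.le hEt
    have m3 : 0 ≤ C1 * E t0 := mul_nonneg hC1pos.le hE0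
    have m4 : 0 ≤ C2 * E t0 := mul_nonneg hC2pos.le hE0
    constructor
    · rw [one_div, inv_mul_le_iff₀ hsum]
      rcases h t ht with ⟨_, h2⟩ | ⟨_, h2⟩ <;> [skip; skip] <;> linarith [h2]
    · rcases h t ht with ⟨h1, _⟩ | ⟨h1, _⟩ <;> [skip; skip] <;> linarith [h1]
  by_cases hcase : lam ≤ lam0
  · -- small frequencies
    intro t ht
    right
    set gg : ℝ → ℝ := fun τ => |c (max τ t0) - cinf| with hggdef
    have hggcont : Continuous gg := by
      have h1 : Continuous fun τ : ℝ => c (max τ t0) :=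
        hcont_c.comp_continuous (continuous_id.max continuous_const)
          (fun x => mem_Ici.2 (le_max_right _ _))
      exact (h1.sub continuous_const).abs
    have hsqc : Real.sqrt cinf * Real.sqrt cinf = cinf :=
      Real.mul_self_sqrt (by linarith [hcinf.1])
    have hE : ∀ τ ∈ Ici t0, HasDerivWithinAt E
        (2 * lam ^ 2 * (cinf - c τ) * (u τ * u' τ) / Real.sqrt cinf) (Ici t0) τ := by
      intro τ hτ
      have h1 := ((hu' τ hτ).pow 2).div_const (Real.sqrt cinf)
      have h2 := ((hu τ hτ).pow 2).const_mul (lam ^ 2 * Real.sqrt cinf)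
      have h12 := h1.add h2
      have heq : (2 * lam ^ 2 * (cinf - c τ) * (u τ * u' τ) / Real.sqrt cinf)
          = ((2 : ℕ) * u' τ ^ (2 - 1) * (-(lam ^ 2 * c τ * u τ))) / Real.sqrt cinf
            + lam ^ 2 * Real.sqrt cinf * ((2 : ℕ) * u τ ^ (2 - 1) * u' τ) := by
      -- algebra with sqrt cinf
        set sc := Real.sqrt cinf with hscdef
        have hc2 : cinf = sc ^ 2 := by rw [hscdef]; nlinarith [hsqc]
        rw [hc2]
        push_cast
        field_simp
        ring
      rw [hEdef]
      exact heq ▸ h12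
    have hΦ : ∀ τ ∈ Ici t0, HasDerivAt (fun x => lam / L * ∫ τ in t0..x, gg τ)
        (lam / L * gg τ) τ := by
      intro τ hτ
      exact (intervalIntegral.integral_hasDerivAt_right
        (hggcont.intervalIntegrable _ _)
        (hggcont.stronglyMeasurableAtFilter _ _)
        hggcont.continuousAt).const_mul _
    have hbnd : ∀ τ ∈ Ici t0, |2 * lam ^ 2 * (cinf - c τ) * (u τ * u' τ) / Real.sqrt cinf| ≤
        (lam / L * gg τ) * E τ := by
      intro τ hτ
      have hggt : gg τ = |cinf - c τ| := by
        show |c (max τ t0) - cinf| = |cinf - c τ|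
        rw [max_eq_left hτ, abs_sub_comm]
      have habs : |2 * lam ^ 2 * (cinf - c τ) * (u τ * u' τ) / Real.sqrt cinf|
          = lam * |cinf - c τ| / Real.sqrt cinf * (2 * lam * |u τ * u' τ|) := by
        rw [abs_div, abs_of_pos hscpos, abs_mul, abs_mul,
          show |2 * lam ^ 2| = 2 * lam ^ 2 from abs_of_pos (by positivity)]
        field_simp
      rw [habs, hggt]
      have hstep : lam * |cinf - c τ| / Real.sqrt cinf * (2 * lam * |u τ * u' τ|)
          ≤ lam * |cinf - c τ| / Real.sqrt cinf * E τ :=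
        mul_le_mul_of_nonneg_left (hEkey τ) (by positivity)
      have hstep2 : lam * |cinf - c τ| / Real.sqrt cinf ≤ lam / L * |cinf - c τ| := by
        calc lam * |cinf - c τ| / Real.sqrt cinf ≤ lam * |cinf - c τ| / L := by
              gcongr
          _ = lam / L * |cinf - c τ| := by ring
      exact le_trans hstep (mul_le_mul_of_nonneg_right hstep2 (hEnn τ))
    obtain ⟨hg1, hg2⟩ := gron_two t0 E
      (fun τ => 2 * lam ^ 2 * (cinf - c τ) * (u τ * u' τ) / Real.sqrt cinf)
      (fun τ => lam / L * gg τ)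
      (fun x => lam / L * ∫ τ in t0..x, gg τ) hE hΦ hbnd t ht
    have hΔ : lam / L * (∫ τ in t0..t, gg τ) - lam / L * (∫ τ in t0..t0, gg τ)
        ≤ lam0 * S t0 / L := by
      rw [intervalIntegral.integral_same, mul_zero, sub_zero]
      have hcongr : (∫ τ in t0..t, gg τ) = ∫ τ in t0..t, |c τ - cinf| := by
        apply intervalIntegral.integral_congr
        intro τ hτ
        rw [uIcc_of_le ht] at hτ
        show |c (max τ t0) - cinf| = |c τ - cinf|
        rw [max_eq_left hτ.1]
      have hint_le : (∫ τ in t0..t, gg τ) ≤ S t0 := by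
        rw [hcongr]; exact hstab t0 self_mem_Ici t ht
      have hll : lam / L ≤ lam0 / L := by gcongr
      calc lam / L * ∫ τ in t0..t, gg τ ≤ lam / L * S t0 := by
            apply mul_le_mul_of_nonneg_left (le_trans hint_le le_rfl) (by positivity)
        _ ≤ lam0 / L * S t0 := mul_le_mul_of_nonneg_right hll hS0
        _ = lam0 * S t0 / L := by ring
    have hexp : Real.exp (lam / L * (∫ τ in t0..t, gg τ)
        - lam / L * (∫ τ in t0..t0, gg τ)) ≤ C2 := by
      rw [hC2def]; exact Real.exp_le_exp.2 hΔ
    constructor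
    · calc E t ≤ E t0 * Real.exp (lam / L * (∫ τ in t0..t, gg τ)
            - lam / L * (∫ τ in t0..t0, gg τ)) := hg1
        _ ≤ E t0 * C2 := mul_le_mul_of_nonneg_left hexp (hEnn t0)
        _ = C2 * E t0 := mul_comm _ _
    · calc E t0 ≤ E t * Real.exp (lam / L * (∫ τ in t0..t, gg τ)
            - lam / L * (∫ τ in t0..t0, gg τ)) := hg2
        _ ≤ E t * C2 := mul_le_mul_of_nonneg_left hexp (hEnn t)
        _ = C2 * E t := mul_comm _ _
  · -- large frequencies
    push_neg at hcase
    have hlamge : lam0 ≤ lam := hcase.le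
    intro t ht
    left
    have htpos : 0 < t := lt_of_lt_of_le ht0 ht
    have hstpos : ∀ τ ∈ Ici t0, 0 < Real.sqrt (c τ) := fun τ hτ => Real.sqrt_pos.2 (hcpos τ hτ)
    have hstL : ∀ τ ∈ Ici t0, L ≤ Real.sqrt (c τ) := fun τ hτ => hLdef ▸ Real.sqrt_le_sqrt (hcb τ hτ).1
    have hstU : ∀ τ ∈ Ici t0, Real.sqrt (c τ) ≤ U := fun τ hτ => hUdef ▸ Real.sqrt_le_sqrt (hcb τ hτ).2
    have hsq : ∀ τ ∈ Ici t0, Real.sqrt (c τ) ^ 2 = c τ := fun τ hτ => Real.sq_sqrt (hcpos τ hτ).le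
    obtain ⟨Ec, hEcdef⟩ : ∃ f : ℝ → ℝ, ∀ τ, f τ =
      (u' τ) ^ 2 / Real.sqrt (c τ) + lam ^ 2 * Real.sqrt (c τ) * (u τ) ^ 2 := ⟨_, fun _ => rfl⟩
    obtain ⟨F, hFdef⟩ : ∃ f : ℝ → ℝ, ∀ τ, f τ =
      Ec τ + c' τ / (2 * Real.sqrt (c τ) ^ 3) * (u τ * u' τ) := ⟨_, fun _ => rfl⟩
    have hEcnn : ∀ τ ∈ Ici t0, 0 ≤ Ec τ := by
      intro τ hτ
      have := (hstpos τ hτ)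
      rw [hEcdef]
      positivity
    have hEckey : ∀ τ ∈ Ici t0, 2 * lam * |u τ * u' τ| ≤ Ec τ := by
      intro τ hτ
      have := energy_amgm lam (Real.sqrt (c τ)) (u' τ) (u τ) (hstpos τ hτ) hlam.le
      rw [hEcdef]
      rw [mul_comm (u τ) (u' τ)]
      linarith
    have hγmono : ∀ τ ∈ Ici t0, τ ^ (-β) ≤ γ0 := by
      intro τ hτ
      have hτpos : 0 < τ := lt_of_lt_of_le ht0 hτ
      rw [hγ0def, Real.rpow_neg hτpos.le, Real.rpow_neg ht0.le]
      have h1 : t0 ^ β ≤ τ ^ β := Real.rpow_le_rpow ht0.le hτ (by linarith)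
      have h2 : (0:ℝ) < t0 ^ β := Real.rpow_pos_of_pos ht0 _
      exact inv_anti₀ h2 h1
    -- derivative of F
    have hF : ∀ τ ∈ Ici t0, HasDerivWithinAt F
        ((c'' τ / (2 * Real.sqrt (c τ) ^ 3) - 3 * (c' τ) ^ 2 / (4 * Real.sqrt (c τ) ^ 5))
          * (u τ * u' τ)) (Ici t0) τ := by
      intro τ hτ
      have hspos := hstpos τ hτ
      have hsne : Real.sqrt (c τ) ≠ 0 := hspos.ne'
      have hs : HasDerivWithinAt (fun x => Real.sqrt (c x))
          (c' τ / (2 * Real.sqrt (c τ))) (Ici t0) τ := (hc τ hτ).sqrt (hcpos τ hτ).ne'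
      have h1 := ((hu' τ hτ).pow 2).div hs hsne
      have h2 := (hs.const_mul (lam ^ 2)).mul ((hu τ hτ).pow 2)
      have h3den := (hs.pow 3).const_mul (2:ℝ)
      have h3 := (hc' τ hτ).div h3den (by show (2:ℝ) * Real.sqrt (c τ) ^ 3 ≠ 0; exact mul_ne_zero two_ne_zero (pow_ne_zero _ hsne))
      have h4 := (hu τ hτ).mul (hu' τ hτ)
      have h34 := h3.mul h4
      have hall := (h1.add h2).add h34
      have hGder : HasDerivWithinAt (fun x =>
          (u' x) ^ 2 / Real.sqrt (c x) + lam ^ 2 * Real.sqrt (c x) * (u x) ^ 2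
            + c' x / (2 * Real.sqrt (c x) ^ 3) * (u x * u' x))
          ((c'' τ / (2 * Real.sqrt (c τ) ^ 3) - 3 * (c' τ) ^ 2 / (4 * Real.sqrt (c τ) ^ 5))
            * (u τ * u' τ)) (Ici t0) τ := by
        refine HasDerivWithinAt.congr_deriv hall ?_
        simp only [Pi.pow_apply, Pi.mul_apply, Pi.div_apply]
        set st := Real.sqrt (c τ) with hstdef
        have hc2 : c τ = st ^ 2 := (hsq τ hτ).symm
        rw [hc2]
        push_cast
        field_simp
        ring
      exact hGder.congr (fun y _ => by rw [hFdef, hEcdef]) (by rw [hFdef, hEcdef])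
    -- h bound and F vs Ec
    have hFm : ∀ τ ∈ Ici t0, |F τ - Ec τ| ≤ Ec τ / 4 := by
      intro τ hτ
      have hspos := hstpos τ hτ
      have hdiff : F τ - Ec τ = c' τ / (2 * Real.sqrt (c τ) ^ 3) * (u τ * u' τ) := by
        rw [hFdef, hEcdef]; ring
      have hhb : |c' τ / (2 * Real.sqrt (c τ) ^ 3)| ≤ γ0 / (2 * L ^ 3) := by
        rw [abs_div, show |2 * Real.sqrt (c τ) ^ 3| = 2 * Real.sqrt (c τ) ^ 3 from
          abs_of_pos (by positivity)]
        apply div_le_div₀ hγ0.le (le_trans (hgam τ hτ).1 (hγmono τ hτ)) (by positivity)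
        nlinarith [pow_le_pow_left₀ hLpos.le (hstL τ hτ) 3]
      have h5 : |u τ * u' τ| ≤ Ec τ / (2 * lam) := by
        rw [le_div_iff₀ (by positivity)]
        calc |u τ * u' τ| * (2 * lam) = 2 * lam * |u τ * u' τ| := by ring
          _ ≤ Ec τ := hEckey τ hτ
      have hγL : γ0 ≤ lam * L ^ 3 := by
        have h0 : γ0 / L ^ 3 ≤ lam := hlam0def ▸ hlamge
        have := (div_le_iff₀ (by positivity : (0:ℝ) < L ^ 3)).1 h0
        linarith
      calc |F τ - Ec τ| = |c' τ / (2 * Real.sqrt (c τ) ^ 3)| * |u τ * u' τ| := by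
            rw [hdiff, abs_mul]
        _ ≤ γ0 / (2 * L ^ 3) * (Ec τ / (2 * lam)) :=
            mul_le_mul hhb h5 (abs_nonneg _) (by positivity)
        _ ≤ Ec τ / 4 := by
            rw [show γ0 / (2 * L ^ 3) * (Ec τ / (2 * lam)) = γ0 * Ec τ / (4 * (L ^ 3 * lam))
              from by ring, div_le_div_iff₀ (by positivity) (by norm_num)]
            have hm := mul_le_mul_of_nonneg_right hγL (hEcnn τ hτ)
            linarith [hm]
    have hF34 : ∀ τ ∈ Ici t0, 3 / 4 * Ec τ ≤ F τ ∧ F τ ≤ 5 / 4 * Ec τ := by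
      intro τ hτ
      have h1 := abs_le.1 (hFm τ hτ)
      constructor <;> linarith [h1.1, h1.2]
    have hFnn : ∀ τ ∈ Ici t0, 0 ≤ F τ := by
      intro τ hτ
      have := (hF34 τ hτ).1
      have := hEcnn τ hτ
      linarith
    -- bound on F'
    have hbndF : ∀ τ ∈ Ici t0, |(c'' τ / (2 * Real.sqrt (c τ) ^ 3)
          - 3 * (c' τ) ^ 2 / (4 * Real.sqrt (c τ) ^ 5)) * (u τ * u' τ)|
        ≤ (K / lam * (τ ^ (-β)) ^ 2) * F τ := by
      intro τ hτ
      have hspos := hstpos τ hτ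
      have hγτ : (0:ℝ) ≤ (τ ^ (-β)) ^ 2 := sq_nonneg _
      have hL3 : (0:ℝ) < 2 * L ^ 3 := by positivity
      have hb1 : |c'' τ / (2 * Real.sqrt (c τ) ^ 3)| ≤ (τ ^ (-β)) ^ 2 / (2 * L ^ 3) := by
        rw [abs_div, show |2 * Real.sqrt (c τ) ^ 3| = 2 * Real.sqrt (c τ) ^ 3 from
          abs_of_pos (by positivity)]
        apply div_le_div₀ hγτ (hgam τ hτ).2 (by positivity)
        nlinarith [pow_le_pow_left₀ hLpos.le (hstL τ hτ) 3]
      have hb2 : |3 * (c' τ) ^ 2 / (4 * Real.sqrt (c τ) ^ 5)|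
          ≤ 3 * (τ ^ (-β)) ^ 2 / (4 * L ^ 5) := by
        rw [abs_div, show |4 * Real.sqrt (c τ) ^ 5| = 4 * Real.sqrt (c τ) ^ 5 from
          abs_of_pos (by positivity), show |3 * (c' τ) ^ 2| = 3 * (c' τ) ^ 2 from
          abs_of_nonneg (by positivity)]
        apply div_le_div₀ (by positivity) ?_ (by positivity) ?_
        · have h1 : (c' τ) ^ 2 ≤ (τ ^ (-β)) ^ 2 := by
            rw [← sq_abs (c' τ)]
            exact pow_le_pow_left₀ (abs_nonneg _) (hgam τ hτ).1 2
          linarith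
        · nlinarith [pow_le_pow_left₀ hLpos.le (hstL τ hτ) 5]
      have hder : |c'' τ / (2 * Real.sqrt (c τ) ^ 3)
          - 3 * (c' τ) ^ 2 / (4 * Real.sqrt (c τ) ^ 5)| ≤ K * (τ ^ (-β)) ^ 2 := by
        calc |c'' τ / (2 * Real.sqrt (c τ) ^ 3) - 3 * (c' τ) ^ 2 / (4 * Real.sqrt (c τ) ^ 5)|
            ≤ |c'' τ / (2 * Real.sqrt (c τ) ^ 3)| + |3 * (c' τ) ^ 2 / (4 * Real.sqrt (c τ) ^ 5)| :=
              abs_sub _ _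
          _ ≤ (τ ^ (-β)) ^ 2 / (2 * L ^ 3) + 3 * (τ ^ (-β)) ^ 2 / (4 * L ^ 5) := by
              linarith [hb1, hb2]
          _ = K * (τ ^ (-β)) ^ 2 := by rw [hKdef]; field_simp
      have h5 : |u τ * u' τ| ≤ Ec τ / (2 * lam) := by
        rw [le_div_iff₀ (by positivity)]
        calc |u τ * u' τ| * (2 * lam) = 2 * lam * |u τ * u' τ| := by ring
          _ ≤ Ec τ := hEckey τ hτ
      have hEcF : Ec τ ≤ 4 / 3 * F τ := by linarith [(hF34 τ hτ).1]
      calc |(c'' τ / (2 * Real.sqrt (c τ) ^ 3) - 3 * (c' τ) ^ 2 / (4 * Real.sqrt (c τ) ^ 5))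
            * (u τ * u' τ)|
          = |c'' τ / (2 * Real.sqrt (c τ) ^ 3) - 3 * (c' τ) ^ 2 / (4 * Real.sqrt (c τ) ^ 5)|
            * |u τ * u' τ| := abs_mul _ _
        _ ≤ K * (τ ^ (-β)) ^ 2 * (Ec τ / (2 * lam)) :=
            mul_le_mul hder h5 (abs_nonneg _) (by positivity)
        _ ≤ (K / lam * (τ ^ (-β)) ^ 2) * F τ := by
            rw [show K * (τ ^ (-β)) ^ 2 * (Ec τ / (2 * lam))
                = (K * (τ ^ (-β)) ^ 2 * (Ec τ / 2)) / lam from by ring,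
              show (K / lam * (τ ^ (-β)) ^ 2) * F τ = (K * (τ ^ (-β)) ^ 2 * F τ) / lam
                from by ring]
            have hP : (0:ℝ) ≤ K * (τ ^ (-β)) ^ 2 := by positivity
            have hhalf : Ec τ / 2 ≤ F τ := by linarith [(hF34 τ hτ).1, hEcnn τ hτ]
            exact div_le_div_of_nonneg_right (mul_le_mul_of_nonneg_left hhalf hP) hlam.le
    -- the antiderivative
    have hΦ : ∀ τ ∈ Ici t0, HasDerivAt (fun x : ℝ => K / lam * (x ^ (1 - 2 * β) / (1 - 2 * β)))
        (K / lam * (τ ^ (-β)) ^ 2) τ := by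
      intro τ hτ
      have hτpos : 0 < τ := lt_of_lt_of_le ht0 hτ
      have h1 : HasDerivAt (fun x : ℝ => x ^ (1 - 2 * β))
          ((1 - 2 * β) * τ ^ (1 - 2 * β - 1)) τ :=
        Real.hasDerivAt_rpow_const (Or.inl hτpos.ne')
      have h2 := (h1.div_const (1 - 2 * β)).const_mul (K / lam)
      refine HasDerivAt.congr_deriv h2 ?_
      have hne : (1 - 2 * β) ≠ 0 := by intro h; rw [sub_eq_zero] at h; linarith
      have hexp : τ ^ (1 - 2 * β - 1) = (τ ^ (-β)) ^ 2 := by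
        rw [← Real.rpow_natCast (τ ^ (-β)) 2, ← Real.rpow_mul hτpos.le]
        congr 1
        push_cast
        ring
      rw [hexp]
      field_simp
    obtain ⟨hg1, hg2⟩ := gron_two t0 F
      (fun τ => (c'' τ / (2 * Real.sqrt (c τ) ^ 3) - 3 * (c' τ) ^ 2 / (4 * Real.sqrt (c τ) ^ 5))
        * (u τ * u' τ))
      (fun τ => K / lam * (τ ^ (-β)) ^ 2)
      (fun x : ℝ => K / lam * (x ^ (1 - 2 * β) / (1 - 2 * β))) hF hΦ hbndF t ht
    have hΔ : K / lam * (t ^ (1 - 2 * β) / (1 - 2 * β))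
        - K / lam * (t0 ^ (1 - 2 * β) / (1 - 2 * β)) ≤ J := by
      have h1 : K / lam ≤ K / lam0 := div_le_div_of_nonneg_left hK.le hlam0 hlamge
      have h2 : 0 < t ^ (1 - 2 * β) := Real.rpow_pos_of_pos htpos _
      have hne : (1 - 2 * β) ≠ 0 := by intro h; rw [sub_eq_zero] at h; linarith
      have heq : K / lam * (t ^ (1 - 2 * β) / (1 - 2 * β))
          - K / lam * (t0 ^ (1 - 2 * β) / (1 - 2 * β))
          = K / lam * ((t0 ^ (1 - 2 * β) - t ^ (1 - 2 * β)) / (2 * β - 1)) := by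
        field_simp
        ring
      rw [heq, hJdef]
      calc K / lam * ((t0 ^ (1 - 2 * β) - t ^ (1 - 2 * β)) / (2 * β - 1))
          ≤ K / lam * (t0 ^ (1 - 2 * β) / (2 * β - 1)) := by
            apply mul_le_mul_of_nonneg_left _ (by positivity)
            apply div_le_div_of_nonneg_right ?_ hβ'.le
            linarith
        _ ≤ K / lam0 * (t0 ^ (1 - 2 * β) / (2 * β - 1)) :=
            mul_le_mul_of_nonneg_right h1 (by positivity)
    have hexpJ : Real.exp (K / lam * (t ^ (1 - 2 * β) / (1 - 2 * β))
        - K / lam * (t0 ^ (1 - 2 * β) / (1 - 2 * β))) ≤ Real.exp J := Real.exp_le_exp.2 hΔ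
    -- comparison of energies
    have comp : ∀ τ ∈ Ici t0, E τ ≤ U / L * Ec τ ∧ Ec τ ≤ U / L * E τ := by
      intro τ hτ
      have hspos := hstpos τ hτ
      constructor
      · have h1 : (u' τ) ^ 2 / Real.sqrt cinf ≤ U / L * ((u' τ) ^ 2 / Real.sqrt (c τ)) :=
          div_comp _ _ _ _ _ (sq_nonneg _) hLpos hscL hspos (hstU τ hτ)
        have h2 : lam ^ 2 * Real.sqrt cinf * (u τ) ^ 2
            ≤ U / L * (lam ^ 2 * Real.sqrt (c τ) * (u τ) ^ 2) := by
          have hs2 : Real.sqrt cinf ≤ U / L * Real.sqrt (c τ) := by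
            calc Real.sqrt cinf ≤ U := hscU
              _ = U / L * L := by field_simp
              _ ≤ U / L * Real.sqrt (c τ) := mul_le_mul_of_nonneg_left (hstL τ hτ) (by positivity)
          have hnn : (0:ℝ) ≤ lam ^ 2 * (u τ) ^ 2 := by positivity
          have hm := mul_le_mul_of_nonneg_left hs2 hnn
          linarith [hm]
        rw [hEeq]
        rw [hEcdef]
        linarith [h1, h2]
      · have h1 : (u' τ) ^ 2 / Real.sqrt (c τ) ≤ U / L * ((u' τ) ^ 2 / Real.sqrt cinf) :=
          div_comp _ _ _ _ _ (sq_nonneg _) hLpos (hstL τ hτ) hscpos hscU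
        have h2 : lam ^ 2 * Real.sqrt (c τ) * (u τ) ^ 2
            ≤ U / L * (lam ^ 2 * Real.sqrt cinf * (u τ) ^ 2) := by
          have hs2 : Real.sqrt (c τ) ≤ U / L * Real.sqrt cinf := by
            calc Real.sqrt (c τ) ≤ U := hstU τ hτ
              _ = U / L * L := by field_simp
              _ ≤ U / L * Real.sqrt cinf := mul_le_mul_of_nonneg_left hscL (by positivity)
          have hnn : (0:ℝ) ≤ lam ^ 2 * (u τ) ^ 2 := by positivity
          have hm := mul_le_mul_of_nonneg_left hs2 hnn
          linarith [hm]
        rw [hEeq]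
        rw [hEcdef]
        linarith [h1, h2]
    have hr : (0:ℝ) ≤ U / L := by positivity
    have ht0mem : t0 ∈ Ici t0 := self_mem_Ici
    have hexpJpos : (0:ℝ) < Real.exp J := Real.exp_pos _
    have e2 : Ec t ≤ 4 / 3 * F t := by linarith [(hF34 t ht).1]
    have e2' : Ec t0 ≤ 4 / 3 * F t0 := by linarith [(hF34 t0 ht0mem).1]
    have e3 : F t ≤ F t0 * Real.exp J :=
      hg1.trans (mul_le_mul_of_nonneg_left hexpJ (hFnn t0 ht0mem))
    have e3' : F t0 ≤ F t * Real.exp J :=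
      hg2.trans (mul_le_mul_of_nonneg_left hexpJ (hFnn t ht))
    have e4 : F t0 ≤ 5 / 4 * Ec t0 := (hF34 t0 ht0mem).2
    have e4' : F t ≤ 5 / 4 * Ec t := (hF34 t ht).2
    have e5 : Ec t0 ≤ U / L * E t0 := (comp t0 ht0mem).2
    have e5' : Ec t ≤ U / L * E t := (comp t ht).2
    constructor
    · calc E t ≤ U / L * Ec t := (comp t ht).1
        _ ≤ U / L * (4 / 3 * F t) := mul_le_mul_of_nonneg_left e2 hr
        _ ≤ U / L * (4 / 3 * (F t0 * Real.exp J)) := by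
              apply mul_le_mul_of_nonneg_left _ hr
              linarith [e3]
        _ ≤ U / L * (4 / 3 * ((5 / 4 * Ec t0) * Real.exp J)) := by
              apply mul_le_mul_of_nonneg_left _ hr
              have hm := mul_le_mul_of_nonneg_right e4 hexpJpos.le
              linarith [hm]
        _ ≤ U / L * (4 / 3 * ((5 / 4 * (U / L * E t0)) * Real.exp J)) := by
              apply mul_le_mul_of_nonneg_left _ hr
              have hm := mul_le_mul_of_nonneg_right
                (mul_le_mul_of_nonneg_left e5 (by norm_num : (0:ℝ) ≤ 5 / 4)) hexpJpos.le
              linarith [hm]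
        _ = 5 / 3 * ((U / L) ^ 2 * Real.exp J * E t0) := by ring
        _ ≤ 2 * ((U / L) ^ 2 * Real.exp J * E t0) := by
              have hX : 0 ≤ (U / L) ^ 2 * Real.exp J * E t0 :=
                mul_nonneg (mul_nonneg (pow_nonneg hr 2) hexpJpos.le) (hEnn t0)
              linarith
        _ = C1 * E t0 := by rw [hC1def]; ring
    · calc E t0 ≤ U / L * Ec t0 := (comp t0 ht0mem).1
        _ ≤ U / L * (4 / 3 * F t0) := mul_le_mul_of_nonneg_left e2' hr
        _ ≤ U / L * (4 / 3 * (F t * Real.exp J)) := by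
              apply mul_le_mul_of_nonneg_left _ hr
              linarith [e3']
        _ ≤ U / L * (4 / 3 * ((5 / 4 * Ec t) * Real.exp J)) := by
              apply mul_le_mul_of_nonneg_left _ hr
              have hm := mul_le_mul_of_nonneg_right e4' hexpJpos.le
              linarith [hm]
        _ ≤ U / L * (4 / 3 * ((5 / 4 * (U / L * E t)) * Real.exp J)) := by
              apply mul_le_mul_of_nonneg_left _ hr
              have hm := mul_le_mul_of_nonneg_right
                (mul_le_mul_of_nonneg_left e5' (by norm_num : (0:ℝ) ≤ 5 / 4)) hexpJpos.le
              linarith [hm]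
        _ = 5 / 3 * ((U / L) ^ 2 * Real.exp J * E t) := by ring
        _ ≤ 2 * ((U / L) ^ 2 * Real.exp J * E t) := by
              have hX : 0 ≤ (U / L) ^ 2 * Real.exp J * E t :=
                mul_nonneg (mul_nonneg (pow_nonneg hr 2) hexpJpos.le) (hEnn t)
              linarith
        _ = C1 * E t := by rw [hC1def]; ring
end
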